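/- arXiv:1607.00804 — 5 statements merged into one kernel-verified Lean document; each statement's English description precedes it below -/
import Mathlib

section
/- Let T be a rooted, locally finite, infinite tree with root x₀ and with no leaves. Let B^n_T(x₀) be the set of finite connected subsets B of vertices of T with x₀ ∈ B whose external vertex boundary ∂^ext_v(B) = {x ∈ V∖B : x is adjacent to some vertex of B} has exactly n elements. Then there is a bijection between B^n_T(x₀) and F^n_T(x₀), the set of contours of T of size n whose finite component contains x₀; explicitly, the map sending a contour C to its finite component I_C is a bijection from F^n_T(x₀) onto B^n_T(x₀). -/
open SimpleGraph

/-- The `d`-ary tree: vertices are finite words over `Fin d`, the root is `[]`,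
and each vertex `l` is adjacent to its `d` children `a :: l`. -/
def daryTree (d : ℕ) : SimpleGraph (List (Fin d)) where
  Adj x y := (∃ a, y = a :: x) ∨ (∃ a, x = a :: y)
  symm := by
    constructor
    intro x y h
    rcases h with ⟨a, ha⟩ | ⟨a, ha⟩
    · exact Or.inr ⟨a, ha⟩
    · exact Or.inl ⟨a, ha⟩
  loopless := by
    constructor
    intro x h
    rcases h with ⟨a, ha⟩ | ⟨a, ha⟩ <;>
    · apply_fun List.length at ha
      simp at ha

/-- `C` is a contour of `G`: a finite set of edges whose deletion leaves exactly one
finite connected component, minimal with this property. -/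
def IsContour {V : Type*} (G : SimpleGraph V) (C : Set (Sym2 V)) : Prop :=
  C.Finite ∧ C ⊆ G.edgeSet ∧
    (∃! K : (G.deleteEdges C).ConnectedComponent, K.supp.Finite) ∧
    ∀ e ∈ C, ∀ K : (G.deleteEdges (C \ {e})).ConnectedComponent, ¬ K.supp.Finite

/-- `I` is the (unique) finite connected component `I_C` of `G \ C`. -/
def IsInterior {V : Type*} (G : SimpleGraph V) (C : Set (Sym2 V)) (I : Set V) : Prop :=
  I.Finite ∧ ∃ K : (G.deleteEdges C).ConnectedComponent, K.supp = I

/-- `F^n_G(x)`: the set of contours of `G` of size `n` whose finite component contains `x`. -/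
def contours {V : Type*} (G : SimpleGraph V) (x : V) (n : ℕ) : Set (Set (Sym2 V)) :=
  {C | IsContour G C ∧ C.ncard = n ∧
    ((G.deleteEdges C).connectedComponentMk x).supp.Finite}

/-- Rooted contours: contours in `F^n_G(x)` containing an edge incident with `x`. -/
def rootedContours {V : Type*} (G : SimpleGraph V) (x : V) (n : ℕ) : Set (Set (Sym2 V)) :=
  {C | C ∈ contours G x n ∧ ∃ e ∈ C, x ∈ e}

/-- `G` has an infinite independent path: a one-sided infinite path all of whose
vertices other than possibly the initial one have degree two in `G`. -/
def HasInfiniteIndependentPath {V : Type*} (G : SimpleGraph V) : Prop :=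
  ∃ f : ℕ → V, Function.Injective f ∧ (∀ i, G.Adj (f i) (f (i + 1))) ∧
    ∀ i, 1 ≤ i → (G.neighborSet (f i)).ncard = 2




namespace ContourHelpers

variable {V : Type*} {G : SimpleGraph V}

def edgeBd (G : SimpleGraph V) (B : Set V) : Set (Sym2 V) :=
  {e | ∃ u v, G.Adj u v ∧ u ∈ B ∧ v ∉ B ∧ e = s(u, v)}

lemma mem_supp_of_adj {H : SimpleGraph V} {K : H.ConnectedComponent} {a b : V}
    (ha : a ∈ K.supp) (hab : H.Adj a b) : b ∈ K.supp := by
  rw [ConnectedComponent.mem_supp_iff] at ha ⊢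
  rw [← ha]
  exact ConnectedComponent.sound hab.symm.reachable

lemma support_subset_of_closed {H : SimpleGraph V} {S : Set V}
    (hS : ∀ a ∈ S, ∀ b, H.Adj a b → b ∈ S) {a b : V} (p : H.Walk a b) :
    a ∈ S → ∀ c ∈ p.support, c ∈ S := by
  induction p with
  | nil => intro ha c hc; simp at hc; subst hc; exact ha
  | cons h q ih =>
    intro ha c hc
    rw [Walk.support_cons, List.mem_cons] at hc
    rcases hc with rfl | hc
    · exact ha
    · exact ih (hS _ ha _ h) c hc

lemma supp_eq_of_closed {H : SimpleGraph V} {S : Set V} {x : V} (hx : x ∈ S)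
    (hcl : ∀ a ∈ S, ∀ b, H.Adj a b → b ∈ S) (hre : ∀ a ∈ S, H.Reachable x a) :
    (H.connectedComponentMk x).supp = S := by
  ext v
  rw [ConnectedComponent.mem_supp_iff, ConnectedComponent.eq]
  constructor
  · intro h
    obtain ⟨p⟩ := h.symm
    exact support_subset_of_closed hcl p hx _ p.end_mem_support
  · intro h
    exact (hre v h).symm

lemma exists_path_of_reachable_le {H : SimpleGraph V} (hle : H ≤ G) {a b : V}
    (h : H.Reachable a b) :
    ∃ p : G.Walk a b, p.IsPath ∧ ∀ c ∈ p.support, H.Reachable a c := by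
  classical
  obtain ⟨w⟩ := h
  refine ⟨w.bypass.transfer G ?_, ?_, ?_⟩
  · intro e he
    exact edgeSet_mono hle (w.bypass.edges_subset_edgeSet he)
  · rw [Walk.isPath_def, Walk.support_transfer]
    exact (Walk.isPath_def _).mp w.bypass_isPath
  · intro c hc
    rw [Walk.support_transfer] at hc
    have hc' : c ∈ w.support := w.support_bypass_subset hc
    exact ⟨w.takeUntil c hc'⟩

lemma exists_path_in_supp {H : SimpleGraph V} (hle : H ≤ G) {K : H.ConnectedComponent}
    {a b : V} (ha : a ∈ K.supp) (hb : b ∈ K.supp) :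
    ∃ p : G.Walk a b, p.IsPath ∧ ∀ c ∈ p.support, c ∈ K.supp := by
  rw [ConnectedComponent.mem_supp_iff] at ha hb
  have hre : H.Reachable a b := ConnectedComponent.eq.mp (ha.trans hb.symm)
  obtain ⟨p, hp, hsup⟩ := exists_path_of_reachable_le hle hre
  refine ⟨p, hp, fun c hc => ?_⟩
  rw [ConnectedComponent.mem_supp_iff, ← ha]
  exact ConnectedComponent.sound (hsup c hc).symm

lemma exists_parent (hconn : G.Connected) {x v : V} (hne : v ≠ x) :
    ∃ u, G.Adj v u ∧ G.dist x u + 1 = G.dist x v := by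
  obtain ⟨p, hp, hlen⟩ := hconn.exists_path_of_dist x v
  have hd : 0 < G.dist x v := hconn.pos_dist_of_ne (Ne.symm hne)
  have hr : ∃ (u : V) (h : G.Adj v u) (q : G.Walk u x), (p.reverse).length = q.length + 1 := by
    cases hq : p.reverse with
    | nil => exact absurd rfl hne
    | cons h q => exact ⟨_, h, q, by simp⟩
  obtain ⟨u, hadj, q, hlq⟩ := hr
  have h1 : G.dist x u ≤ q.length := dist_le q.reverse |>.trans (by rw [Walk.length_reverse])
  have h2 : G.dist x v ≤ G.dist x u + 1 := by
    have := dist_le ((Walk.cons hadj Walk.nil).reverse.append (Walk.nil : G.Walk v v))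
    have h3 := hconn.dist_triangle (u := x) (v := u) (w := v)
    have h4 : G.dist u v ≤ 1 := by
      have := dist_le (Walk.cons hadj.symm (Walk.nil : G.Walk v v))
      simpa using this
    omega
  rw [Walk.length_reverse, hlen] at hlq
  exact ⟨u, hadj, by omega⟩

lemma exists_two_neighbors (hconn : G.Connected) (hinf : Infinite V)
    (hlocfin : ∀ v, (G.neighborSet v).Finite) (hnoleaf : ∀ v, (G.neighborSet v).ncard ≠ 1)
    (v : V) : ∃ a b, G.Adj v a ∧ G.Adj v b ∧ a ≠ b := by
  obtain ⟨u, hu⟩ := exists_ne v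
  have hne : (G.neighborSet v).Nonempty := by
    obtain ⟨p⟩ := hconn.preconnected v u
    cases p with
    | nil => exact absurd rfl hu
    | cons h q => exact ⟨_, h⟩
  have h1 : 0 < (G.neighborSet v).ncard := (Set.ncard_pos (hlocfin v)).mpr hne
  have h2 : 1 < (G.neighborSet v).ncard := by
    have := hnoleaf v; omega
  obtain ⟨a, ha, b, hb, hab⟩ := (Set.one_lt_ncard (hlocfin v)).mp h2
  exact ⟨a, b, ha, hb, hab⟩

lemma closer_neighbor_unique (htree : G.IsTree) {x w u1 u2 : V}
    (h1 : G.Adj w u1) (h2 : G.Adj w u2)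
    (hd1 : G.dist x u1 ≤ G.dist x w) (hd2 : G.dist x u2 ≤ G.dist x w) : u1 = u2 := by
  classical
  have hconn := htree.isConnected
  have key : ∀ u : V, G.Adj w u → G.dist x u ≤ G.dist x w →
      ∃ p : G.Walk x u, p.IsPath ∧ w ∉ p.support := by
    intro u hadj hd
    obtain ⟨p, hp, hlen⟩ := hconn.exists_path_of_dist x u
    refine ⟨p, hp, fun hw => ?_⟩
    have hspec := p.take_spec hw
    have hlsum : (p.takeUntil w hw).length + (p.dropUntil w hw).length = p.length := by
      rw [← Walk.length_append, hspec]
    have ht : G.dist x w ≤ (p.takeUntil w hw).length := dist_le _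
    have hd2' : G.dist w u ≤ (p.dropUntil w hw).length := dist_le _
    have hwu : 0 < G.dist w u := hconn.pos_dist_of_ne hadj.ne
    omega
  obtain ⟨p1, hp1, hw1⟩ := key u1 h1 hd1
  obtain ⟨p2, hp2, hw2⟩ := key u2 h2 hd2
  have R1 : G.Walk w x := Walk.cons h1 p1.reverse
  have path1 : (Walk.cons h1 p1.reverse).IsPath := by
    rw [Walk.cons_isPath_iff]
    exact ⟨hp1.reverse, by rwa [Walk.support_reverse, List.mem_reverse]⟩
  have path2 : (Walk.cons h2 p2.reverse).IsPath := by
    rw [Walk.cons_isPath_iff]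
    exact ⟨hp2.reverse, by rwa [Walk.support_reverse, List.mem_reverse]⟩
  have huniq := isAcyclic_iff_path_unique.mp htree.IsAcyclic
    (⟨Walk.cons h1 p1.reverse, path1⟩ : G.Path w x) ⟨Walk.cons h2 p2.reverse, path2⟩
  have heq : (Walk.cons h1 p1.reverse) = (Walk.cons h2 p2.reverse) :=
    congrArg Subtype.val huniq
  have : (Walk.cons h1 p1.reverse).getVert 1 = (Walk.cons h2 p2.reverse).getVert 1 := by
    rw [heq]
  simpa [Walk.getVert] using this

lemma no_finite_outside (htree : G.IsTree) (hinf : Infinite V)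
    (hlocfin : ∀ v, (G.neighborSet v).Finite) (hnoleaf : ∀ v, (G.neighborSet v).ncard ≠ 1)
    {x₀ : V} {B K : Set V} (hx₀ : x₀ ∈ B)
    (hBpath : ∀ b1 ∈ B, ∀ b2 ∈ B, ∃ p : G.Walk b1 b2, p.IsPath ∧ ∀ c ∈ p.support, c ∈ B)
    (hKB : ∀ k ∈ K, k ∉ B)
    (hKpath : ∀ k1 ∈ K, ∀ k2 ∈ K, ∃ p : G.Walk k1 k2, p.IsPath ∧ ∀ c ∈ p.support, c ∈ K)
    (hexit : ∀ k ∈ K, ∀ u, G.Adj k u → u ∉ K → u ∈ B)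
    (hKne : K.Nonempty) (hKfin : K.Finite) : False := by
  classical
  have hconn := htree.isConnected
  obtain ⟨w, hwK, hwmax⟩ := Set.exists_max_image K (fun v => G.dist x₀ v) hKfin hKne
  obtain ⟨a, b0, haa, hbb, hab⟩ := exists_two_neighbors hconn hinf hlocfin hnoleaf w
  have hfar : ∃ n1, G.Adj w n1 ∧ G.dist x₀ w < G.dist x₀ n1 := by
    by_contra hcon
    push_neg at hcon
    exact hab (closer_neighbor_unique htree haa hbb (hcon a haa) (hcon b0 hbb))
  obtain ⟨n1, hn1adj, hn1d⟩ := hfar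
  have hn1K : n1 ∉ K := fun h => by have := hwmax n1 h; omega
  have hn1B : n1 ∈ B := hexit w hwK n1 hn1adj hn1K
  have up : ∀ m : ℕ, ∀ v ∈ K, G.dist x₀ v ≤ m →
      ∃ u ∈ K, ∃ b ∈ B, G.Adj u b ∧ G.dist x₀ b < G.dist x₀ u := by
    intro m
    induction m with
    | zero =>
      intro v hv hdv
      have hv0 : x₀ = v := (hconn.dist_eq_zero_iff).mp (Nat.le_zero.mp hdv)
      exact absurd (hv0 ▸ hx₀) (hKB v hv)
    | succ m ih =>
      intro v hv hdv
      have hvx : v ≠ x₀ := fun h => hKB v hv (h ▸ hx₀)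
      obtain ⟨u, hadj, hdu⟩ := exists_parent hconn hvx
      by_cases huK : u ∈ K
      · exact ih u huK (by omega)
      · exact ⟨v, hv, u, hexit v hv u hadj huK, hadj, by omega⟩
  obtain ⟨u, huK, b, hbB, hub, hdub⟩ := up (G.dist x₀ w) w hwK le_rfl
  have hdu_le : G.dist x₀ u ≤ G.dist x₀ w := hwmax u huK
  have hne_wn1 : w ≠ n1 := by intro h; rw [h] at hn1d; omega
  obtain ⟨pK, hpK, hpKs⟩ := hKpath w hwK u huK
  obtain ⟨pB, hpB, hpBs⟩ := hBpath b hbB n1 hn1B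
  have hqpath : (Walk.cons hub pB).IsPath := by
    rw [Walk.cons_isPath_iff]
    exact ⟨hpB, fun h => hKB u huK (hpBs u h)⟩
  have hP2 : (pK.append (Walk.cons hub pB)).IsPath := by
    rw [Walk.isPath_def, Walk.support_append, Walk.support_cons, List.tail_cons]
    refine List.Nodup.append ((Walk.isPath_def _).mp hpK) ((Walk.isPath_def _).mp hpB) ?_
    intro c hc1 hc2
    exact hKB c (hpKs c hc1) (hpBs c hc2)
  have hP1 : (Walk.cons hn1adj (Walk.nil : G.Walk n1 n1)).IsPath := by
    rw [Walk.cons_isPath_iff]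
    exact ⟨Walk.IsPath.nil, by simp [hne_wn1]⟩
  have huniq := isAcyclic_iff_path_unique.mp htree.IsAcyclic
    (⟨Walk.cons hn1adj Walk.nil, hP1⟩ : G.Path w n1) ⟨pK.append (Walk.cons hub pB), hP2⟩
  have heq : (Walk.cons hn1adj (Walk.nil : G.Walk n1 n1)) = pK.append (Walk.cons hub pB) :=
    congrArg Subtype.val huniq
  have hmem : s(u, b) ∈ (pK.append (Walk.cons hub pB)).edges := by
    rw [Walk.edges_append]
    exact List.mem_append.mpr (Or.inr (by rw [Walk.edges_cons]; exact List.mem_cons_self))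
  rw [← heq] at hmem
  simp only [Walk.edges_cons, Walk.edges_nil, List.mem_singleton] at hmem
  rw [Sym2.eq_iff] at hmem
  rcases hmem with ⟨rfl, rfl⟩ | ⟨rfl, rfl⟩
  · omega
  · omega

lemma induce_reachable {B : Set V} {a b : V} (p : G.Walk a b) :
    (∀ c ∈ p.support, c ∈ B) → ∀ (ha : a ∈ B) (hb : b ∈ B),
      (G.induce B).Reachable ⟨a, ha⟩ ⟨b, hb⟩ := by
  induction p with
  | nil => intro _ ha hb; rfl
  | @cons a v b h q ih =>
    intro hs ha hb
    have hv : v ∈ B := hs v (by simp [Walk.support_cons])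
    have hadj : (G.induce B).Adj ⟨a, ha⟩ ⟨v, hv⟩ := by simpa using h
    exact hadj.reachable.trans (ih (fun c hc => hs c (by simp [Walk.support_cons, hc])) hv hb)

lemma reachable_of_induce {H : SimpleGraph V} {B : Set V}
    (hBH : ∀ a ∈ B, ∀ b ∈ B, G.Adj a b → H.Adj a b) {a b : ↥B}
    (p : (G.induce B).Walk a b) : H.Reachable ↑a ↑b := by
  induction p with
  | nil => exact Reachable.refl _
  | @cons a v b h q ih =>
    have hadj : H.Adj ↑a ↑v := hBH _ a.2 _ v.2 (by simpa using h)
    exact hadj.reachable.trans ih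

open Classical in
noncomputable def pickOut (B : Set V) (x₀ : V) (e : Sym2 V) : V :=
  if h : ∃ y, y ∈ e ∧ y ∉ B then h.choose else x₀

lemma pickOut_eq {B : Set V} {x₀ u v : V} (hu : u ∈ B) (hv : v ∉ B) :
    pickOut B x₀ s(u, v) = v := by
  have h : ∃ y, y ∈ (s(u, v) : Sym2 V) ∧ y ∉ B := ⟨v, by simp, hv⟩
  rw [pickOut]
  rw [dif_pos h]
  have := h.choose_spec
  rcases Sym2.mem_iff.mp this.1 with h1 | h1
  · exact absurd (h1 ▸ this.2) (fun hh => hh hu)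
  · exact h1

lemma edgeBd_finite (hlocfin : ∀ v, (G.neighborSet v).Finite) {B : Set V} (hB : B.Finite) :
    (edgeBd G B).Finite := by
  have hsub : edgeBd G B ⊆ (fun p : V × V => s(p.1, p.2)) '' (B ×ˢ ⋃ b ∈ B, G.neighborSet b) := by
    rintro e ⟨u, v, hadj, hu, hv, rfl⟩
    exact ⟨(u, v), ⟨hu, Set.mem_biUnion hu hadj⟩, rfl⟩
  exact Set.Finite.subset (Set.Finite.image _ ((hB.prod (hB.biUnion fun b _ => hlocfin b)))) hsub

lemma ncard_edgeBd (htree : G.IsTree) {B : Set V} {x₀ : V} (hx₀ : x₀ ∈ B)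
    (hBpath : ∀ b1 ∈ B, ∀ b2 ∈ B, ∃ p : G.Walk b1 b2, p.IsPath ∧ ∀ c ∈ p.support, c ∈ B) :
    (edgeBd G B).ncard = {y : V | y ∉ B ∧ ∃ b ∈ B, G.Adj y b}.ncard := by
  classical
  have himg : pickOut B x₀ '' edgeBd G B = {y : V | y ∉ B ∧ ∃ b ∈ B, G.Adj y b} := by
    ext y
    constructor
    · rintro ⟨e, ⟨u, v, hadj, hu, hv, rfl⟩, rfl⟩
      rw [pickOut_eq hu hv]
      exact ⟨hv, u, hu, hadj.symm⟩
    · rintro ⟨hy, b, hb, hadj⟩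
      exact ⟨s(b, y), ⟨b, y, hadj.symm, hb, hy, rfl⟩, pickOut_eq hb hy⟩
  have hinj : Set.InjOn (pickOut B x₀) (edgeBd G B) := by
    rintro e1 ⟨u1, v1, ha1, hu1, hv1, rfl⟩ e2 ⟨u2, v2, ha2, hu2, hv2, rfl⟩ hpe
    rw [pickOut_eq hu1 hv1, pickOut_eq hu2 hv2] at hpe
    subst hpe
    -- show u1 = u2 using path uniqueness
    obtain ⟨p, hp, hps⟩ := hBpath u1 hu1 u2 hu2
    have hq : (p.append (Walk.cons ha2 (Walk.nil : G.Walk v1 v1))).IsPath := by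
      rw [Walk.isPath_def, Walk.support_append, Walk.support_cons, Walk.support_nil,
        List.tail_cons]
      refine List.Nodup.append ((Walk.isPath_def _).mp hp) (List.nodup_singleton _) ?_
      intro c hc1 hc2
      rw [List.mem_singleton] at hc2
      exact absurd (hps c hc1) (hc2 ▸ hv1)
    have hP1 : (Walk.cons ha1 (Walk.nil : G.Walk v1 v1)).IsPath := by
      rw [Walk.cons_isPath_iff]
      refine ⟨Walk.IsPath.nil, ?_⟩
      simp only [Walk.support_nil, List.mem_singleton]
      exact fun h => hv1 (h ▸ hu1)
    have huniq := isAcyclic_iff_path_unique.mp htree.IsAcyclic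
      (⟨Walk.cons ha1 Walk.nil, hP1⟩ : G.Path u1 v1)
      ⟨p.append (Walk.cons ha2 Walk.nil), hq⟩
    have heq : (Walk.cons ha1 (Walk.nil : G.Walk v1 v1)) = p.append (Walk.cons ha2 Walk.nil) :=
      congrArg Subtype.val huniq
    have hmem : s(u2, v1) ∈ (p.append (Walk.cons ha2 (Walk.nil : G.Walk v1 v1))).edges := by
      rw [Walk.edges_append]
      exact List.mem_append.mpr (Or.inr (by rw [Walk.edges_cons]; exact List.mem_cons_self))
    rw [← heq] at hmem
    simp only [Walk.edges_cons, Walk.edges_nil, List.mem_singleton] at hmem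
    rw [Sym2.eq_iff] at hmem
    rcases hmem with ⟨rfl, -⟩ | ⟨rfl, rfl⟩
    · rfl
    · exact absurd hu1 hv1
  rw [← himg, Set.ncard_image_of_injOn hinj]

variable {x₀ : V}

lemma x0_mem_supp (H : SimpleGraph V) :
    x₀ ∈ (H.connectedComponentMk x₀).supp := by
  rw [ConnectedComponent.mem_supp_iff]

lemma supp_reachable {H : SimpleGraph V} {a : V}
    (ha : a ∈ (H.connectedComponentMk x₀).supp) : H.Reachable x₀ a := by
  rw [ConnectedComponent.mem_supp_iff] at ha
  exact (ConnectedComponent.eq.mp ha).symm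

/-- Lemma A: a contour equals the edge boundary of its finite side. -/
lemma contour_eq_edgeBd (htree : G.IsTree) {C : Set (Sym2 V)}
    (hC : IsContour G C)
    (hfin : ((G.deleteEdges C).connectedComponentMk x₀).supp.Finite) :
    C = edgeBd G ((G.deleteEdges C).connectedComponentMk x₀).supp := by
  set H := G.deleteEdges C with hH
  set B := (H.connectedComponentMk x₀).supp with hB
  have hx₀B : x₀ ∈ B := x0_mem_supp H
  have hclosed : ∀ a ∈ B, ∀ b, H.Adj a b → b ∈ B := fun a ha b hab => mem_supp_of_adj ha hab
  apply Set.Subset.antisymm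
  · intro e he
    have hedge : e ∈ G.edgeSet := hC.2.1 he
    induction e with
    | h u v =>
      have hadj : G.Adj u v := hedge
      have hkey : ¬ ((u ∈ B ∧ v ∈ B) ∨ (u ∉ B ∧ v ∉ B)) := by
        intro hcase
        have hmin := hC.2.2.2 _ he
        set H' := G.deleteEdges (C \ {s(u, v)}) with hH'
        have hle : H ≤ H' := deleteEdges_anti Set.diff_subset
        have hsupp : (H'.connectedComponentMk x₀).supp = B := by
          apply supp_eq_of_closed hx₀B
          · intro a ha c hac
            rw [deleteEdges_adj] at hac
            by_cases hmem : s(a, c) ∈ C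
            · have : s(a, c) = s(u, v) := by
                by_contra hne
                exact hac.2 ⟨hmem, hne⟩
              rw [Sym2.eq_iff] at this
              rcases hcase with ⟨huB, hvB⟩ | ⟨huB, hvB⟩
              · rcases this with ⟨rfl, rfl⟩ | ⟨rfl, rfl⟩
                · exact hvB
                · exact huB
              · rcases this with ⟨rfl, rfl⟩ | ⟨rfl, rfl⟩
                · exact absurd ha huB
                · exact absurd ha hvB
            · exact hclosed a ha c (by rw [hH, deleteEdges_adj]; exact ⟨hac.1, hmem⟩)
          · intro a ha
            exact (supp_reachable ha).mono hle
        exact hmin (H'.connectedComponentMk x₀) (hsupp ▸ hfin)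
      by_cases huB : u ∈ B
      · by_cases hvB : v ∈ B
        · exact (hkey (Or.inl ⟨huB, hvB⟩)).elim
        · exact ⟨u, v, hadj, huB, hvB, rfl⟩
      · by_cases hvB : v ∈ B
        · exact ⟨v, u, hadj.symm, hvB, huB, Sym2.eq_swap⟩
        · exact (hkey (Or.inr ⟨huB, hvB⟩)).elim
  · rintro e ⟨u, v, hadj, hu, hv, rfl⟩
    by_contra hne
    exact hv (hclosed u hu v (by rw [hH, deleteEdges_adj]; exact ⟨hadj, hne⟩))

/-- Lemma B: the finite side of the edge boundary of `B` is `B`. -/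
lemma supp_edgeBd {B : Set V} (hx₀ : x₀ ∈ B) (hconn : (G.induce B).Connected) :
    ((G.deleteEdges (edgeBd G B)).connectedComponentMk x₀).supp = B := by
  apply supp_eq_of_closed hx₀
  · intro a ha c hac
    rw [deleteEdges_adj] at hac
    by_contra hc
    exact hac.2 ⟨a, c, hac.1, ha, hc, rfl⟩
  · intro a ha
    have hBH : ∀ a ∈ B, ∀ b ∈ B, G.Adj a b → (G.deleteEdges (edgeBd G B)).Adj a b := by
      intro a ha b hb hadj
      rw [deleteEdges_adj]
      refine ⟨hadj, ?_⟩
      rintro ⟨p, q, hpq, hp, hq, hepq⟩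
      rw [Sym2.eq_iff] at hepq
      rcases hepq with ⟨rfl, rfl⟩ | ⟨rfl, rfl⟩
      · exact hq hb
      · exact hq ha
    obtain ⟨p⟩ := hconn.preconnected ⟨x₀, hx₀⟩ ⟨a, ha⟩
    exact reachable_of_induce hBH p

/-- Lemma D: components outside `B` are infinite. -/
lemma outside_infinite (htree : G.IsTree) (hinf : Infinite V)
    (hlocfin : ∀ v, (G.neighborSet v).Finite) (hnoleaf : ∀ v, (G.neighborSet v).ncard ≠ 1)
    {B : Set V} (hx₀ : x₀ ∈ B)
    (hsupp : ((G.deleteEdges (edgeBd G B)).connectedComponentMk x₀).supp = B)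
    {v : V} (hv : v ∉ B) :
    ¬ ((G.deleteEdges (edgeBd G B)).connectedComponentMk v).supp.Finite := by
  intro hKfin
  set H := G.deleteEdges (edgeBd G B) with hH
  set K := (H.connectedComponentMk v).supp with hK
  have hle : H ≤ G := deleteEdges_le _
  have hKB : ∀ k ∈ K, k ∉ B := by
    intro k hk hkB
    rw [hK, ConnectedComponent.mem_supp_iff] at hk
    have : v ∈ (H.connectedComponentMk x₀).supp := by
      rw [ConnectedComponent.mem_supp_iff, ← hk]
      have : k ∈ (H.connectedComponentMk x₀).supp := hsupp ▸ hkB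
      rw [ConnectedComponent.mem_supp_iff] at this
      exact this
    exact hv (hsupp ▸ this)
  refine no_finite_outside htree hinf hlocfin hnoleaf hx₀
    (fun b1 hb1 b2 hb2 => by
      have h1 : b1 ∈ ((G.deleteEdges (edgeBd G B)).connectedComponentMk x₀).supp := by
        rw [hsupp]; exact hb1
      have h2 : b2 ∈ ((G.deleteEdges (edgeBd G B)).connectedComponentMk x₀).supp := by
        rw [hsupp]; exact hb2
      obtain ⟨p, hp, hps⟩ := exists_path_in_supp hle h1 h2
      exact ⟨p, hp, fun c hc => by have := hps c hc; rwa [hsupp] at this⟩)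
    hKB (fun k1 hk1 k2 hk2 => exists_path_in_supp hle hk1 hk2) ?_
    ⟨v, by rw [hK, ConnectedComponent.mem_supp_iff]⟩ hKfin
  intro k hk u hadj huK
  by_cases hmem : s(k, u) ∈ edgeBd G B
  · obtain ⟨p, q, hpq, hp, hq, hepq⟩ := hmem
    rw [Sym2.eq_iff] at hepq
    rcases hepq with ⟨rfl, rfl⟩ | ⟨rfl, rfl⟩
    · exact absurd hp (hKB k hk)
    · exact hp
  · exact absurd (mem_supp_of_adj hk (by rw [hH, deleteEdges_adj]; exact ⟨hadj, hmem⟩)) huK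

lemma isContour_edgeBd (htree : G.IsTree) (hinf : Infinite V)
    (hlocfin : ∀ v, (G.neighborSet v).Finite) (hnoleaf : ∀ v, (G.neighborSet v).ncard ≠ 1)
    {B : Set V} (hBfin : B.Finite) (hx₀ : x₀ ∈ B) (hconn : (G.induce B).Connected) :
    IsContour G (edgeBd G B) := by
  have hsupp := supp_edgeBd (G := G) hx₀ hconn
  set H := G.deleteEdges (edgeBd G B) with hH
  refine ⟨edgeBd_finite hlocfin hBfin, ?_, ⟨H.connectedComponentMk x₀, ?_, ?_⟩, ?_⟩
  · rintro e ⟨u, v, hadj, -, -, rfl⟩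
    exact hadj
  · show (H.connectedComponentMk x₀).supp.Finite
    rw [hsupp]
    exact hBfin
  · intro K hK
    obtain ⟨v, rfl⟩ := K.exists_rep
    by_cases hv : v ∈ B
    · have : v ∈ (H.connectedComponentMk x₀).supp := by rw [hsupp]; exact hv
      rw [ConnectedComponent.mem_supp_iff] at this
      exact this
    · exact absurd hK (outside_infinite htree hinf hlocfin hnoleaf hx₀ hsupp hv)
  · intro e he K hKfin
    obtain ⟨v, rfl⟩ := K.exists_rep
    set H' := G.deleteEdges (edgeBd G B \ {e}) with hH'
    have hle : H ≤ H' := deleteEdges_anti Set.diff_subset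
    have hsub : ∀ w : V, w ∈ (H'.connectedComponentMk v).supp →
        (H.connectedComponentMk w).supp ⊆ (H'.connectedComponentMk v).supp := by
      intro w hw k hk
      rw [ConnectedComponent.mem_supp_iff] at hk hw ⊢
      rw [← hw]
      exact ConnectedComponent.eq.mpr (((ConnectedComponent.eq.mp hk)).mono hle)
    by_cases hv : v ∈ B
    · obtain ⟨a, c, hadj, haB, hcB, rfl⟩ := he
      have hBsub : B ⊆ (H'.connectedComponentMk v).supp := by
        intro b hb
        rw [ConnectedComponent.mem_supp_iff]
        apply ConnectedComponent.eq.mpr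
        apply Reachable.mono hle
        have h1 : b ∈ (H.connectedComponentMk x₀).supp := by rw [hsupp]; exact hb
        have h2 : v ∈ (H.connectedComponentMk x₀).supp := by rw [hsupp]; exact hv
        rw [ConnectedComponent.mem_supp_iff] at h1 h2
        exact ConnectedComponent.eq.mp (h1.trans h2.symm)
      have hadj' : H'.Adj a c := by
        rw [hH', deleteEdges_adj]
        exact ⟨hadj, fun h => h.2 rfl⟩
      have hcK : c ∈ (H'.connectedComponentMk v).supp :=
        mem_supp_of_adj (hBsub haB) hadj'
      have : (H.connectedComponentMk c).supp.Finite :=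
        hKfin.subset (hsub c hcK)
      exact outside_infinite htree hinf hlocfin hnoleaf hx₀ hsupp hcB this
    · have : (H.connectedComponentMk v).supp.Finite :=
        hKfin.subset (hsub v (by rw [ConnectedComponent.mem_supp_iff]))
      exact outside_infinite htree hinf hlocfin hnoleaf hx₀ hsupp hv this


end ContourHelpers

/-- For a rooted, locally finite, infinite tree `T` without leaves,
the map sending a contour `C ∈ F^n_T(x₀)` to its finite component `I_C` is a bijection
onto the set `B^n_T(x₀)` of finite connected vertex sets containing `x₀` whose external
vertex boundary has exactly `n` elements. -/
theorem contours_bij_external_boundaries {V : Type*} (G : SimpleGraph V) (x₀ : V)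
    (htree : G.IsTree) (hlocfin : ∀ v : V, (G.neighborSet v).Finite)
    (hinf : Infinite V) (hnoleaf : ∀ v : V, (G.neighborSet v).ncard ≠ 1) (n : ℕ) :
    ∃ f : Set (Sym2 V) → Set V,
      (∀ C ∈ contours G x₀ n, IsInterior G C (f C)) ∧
      Set.BijOn f (contours G x₀ n)
        {B : Set V | B.Finite ∧ x₀ ∈ B ∧ (G.induce B).Connected ∧
          {y : V | y ∉ B ∧ ∃ b ∈ B, G.Adj y b}.ncard = n} := by
  classical
  have hconn := htree.isConnected
  refine ⟨fun C => ((G.deleteEdges C).connectedComponentMk x₀).supp, ?_, ?_, ?_, ?_⟩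
  · intro C hC
    exact ⟨hC.2.2, (G.deleteEdges C).connectedComponentMk x₀, rfl⟩
  · -- MapsTo
    intro C hC
    obtain ⟨hcont, hcard, hfin⟩ := hC
    set B := ((G.deleteEdges C).connectedComponentMk x₀).supp with hB
    have hx₀B : x₀ ∈ B := ContourHelpers.x0_mem_supp _
    have hBpath : ∀ b1 ∈ B, ∀ b2 ∈ B,
        ∃ p : G.Walk b1 b2, p.IsPath ∧ ∀ c ∈ p.support, c ∈ B :=
      fun b1 h1 b2 h2 => ContourHelpers.exists_path_in_supp (deleteEdges_le _) h1 h2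
    have hconnB : (G.induce B).Connected := by
      rw [connected_iff]
      refine ⟨fun a b => ?_, ⟨⟨x₀, hx₀B⟩⟩⟩
      obtain ⟨p, hp, hps⟩ := hBpath a a.2 b b.2
      exact ContourHelpers.induce_reachable p hps a.2 b.2
    have hedge : C = ContourHelpers.edgeBd G B :=
      ContourHelpers.contour_eq_edgeBd htree hcont hfin
    refine ⟨hfin, hx₀B, hconnB, ?_⟩
    rw [← ContourHelpers.ncard_edgeBd htree hx₀B hBpath, ← hedge]
    exact hcard
  · -- InjOn
    intro C1 h1 C2 h2 heq
    have e1 := ContourHelpers.contour_eq_edgeBd htree h1.1 h1.2.2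
    have e2 := ContourHelpers.contour_eq_edgeBd htree h2.1 h2.2.2
    simp only at heq
    rw [e1, e2, heq]
  · -- SurjOn
    intro B hB
    obtain ⟨hBfin, hx₀B, hconnB, hcard⟩ := hB
    have hsupp := ContourHelpers.supp_edgeBd (G := G) hx₀B hconnB
    have hBpath : ∀ b1 ∈ B, ∀ b2 ∈ B,
        ∃ p : G.Walk b1 b2, p.IsPath ∧ ∀ c ∈ p.support, c ∈ B := by
      intro b1 h1 b2 h2
      have h1' : b1 ∈ ((G.deleteEdges (ContourHelpers.edgeBd G B)).connectedComponentMk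
          x₀).supp := by rw [hsupp]; exact h1
      have h2' : b2 ∈ ((G.deleteEdges (ContourHelpers.edgeBd G B)).connectedComponentMk
          x₀).supp := by rw [hsupp]; exact h2
      obtain ⟨p, hp, hps⟩ := ContourHelpers.exists_path_in_supp (deleteEdges_le _) h1' h2'
      exact ⟨p, hp, fun c hc => by have := hps c hc; rwa [hsupp] at this⟩
    refine ⟨ContourHelpers.edgeBd G B, ⟨?_, ?_, ?_⟩, hsupp⟩
    · exact ContourHelpers.isContour_edgeBd htree hinf hlocfin hnoleaf hBfin hx₀B hconnB
    · rw [ContourHelpers.ncard_edgeBd htree hx₀B hBpath]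
      exact hcard
    · rw [hsupp]
      exact hBfin
end

section
/- Let T be a locally finite, infinite rooted tree with root x, and suppose every vertex of T has at least r children, where r ≥ 2. Then for all n ≥ 1, |F^n_T(x)| ≤ binom(n + ⌊(n−r)/(r−1)⌋, ⌊(n−r)/(r−1)⌋). -/
set_option linter.unusedSectionVars false

open SimpleGraph



open SimpleGraph

namespace ContourAux

open SimpleGraph Walk

variable {V : Type*} [DecidableEq V] {G : SimpleGraph V}

/-- The unique path from `x` to `u` in a tree. -/
noncomputable def pathTo (htree : G.IsTree) (x u : V) : G.Walk x u :=
  (htree.existsUnique_path x u).exists.choose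

lemma pathTo_isPath (htree : G.IsTree) (x u : V) : (pathTo htree x u).IsPath :=
  (htree.existsUnique_path x u).exists.choose_spec

lemma pathTo_unique (htree : G.IsTree) {x u : V} (p : G.Walk x u) (hp : p.IsPath) :
    p = pathTo htree x u :=
  ((htree.existsUnique_path x u).unique hp (pathTo_isPath htree x u))

lemma pathTo_self (htree : G.IsTree) (x : V) : pathTo htree x x = Walk.nil :=
  (pathTo_unique htree Walk.nil Walk.IsPath.nil).symm

lemma dist_eq_length_pathTo (htree : G.IsTree) (x u : V) :
    G.dist x u = (pathTo htree x u).length := by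
  refine le_antisymm (SimpleGraph.dist_le _) ?_
  obtain ⟨p, hp⟩ := htree.isConnected.exists_walk_length_eq_dist x u
  calc (pathTo htree x u).length = p.bypass.length := by
        rw [← pathTo_unique htree p.bypass p.bypass_isPath]
    _ ≤ p.length := p.length_bypass_le
    _ = G.dist x u := hp

lemma exists_parent (htree : G.IsTree) {x u : V} (hu : u ≠ x) :
    ∃ (v : V) (h : G.Adj v u), pathTo htree x u = (pathTo htree x v).concat h := by
  obtain ⟨w, h, q, hq⟩ := Walk.exists_eq_cons_of_ne hu (pathTo htree x u).reverse
  have hq' : q.reverse.IsPath := by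
    have : (pathTo htree x u).reverse.IsPath := (pathTo_isPath htree x u).reverse
    rw [hq] at this
    exact (Walk.IsPath.of_cons this).reverse
  refine ⟨w, h.symm, ?_⟩
  have : pathTo htree x u = (cons h q).reverse := by
    rw [← hq, Walk.reverse_reverse]
  rw [this, Walk.reverse_cons, ← Walk.concat_eq_append,
    ← pathTo_unique htree q.reverse hq']

/-- The parent of a vertex in a tree rooted at `x`. -/
noncomputable def par (htree : G.IsTree) (x u : V) : V :=
  if hu : u = x then x else (exists_parent htree hu).choose

lemma par_spec (htree : G.IsTree) {x u : V} (hu : u ≠ x) :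
    ∃ h : G.Adj (par htree x u) u,
      pathTo htree x u = (pathTo htree x (par htree x u)).concat h := by
  rw [par, dif_neg hu]
  exact (exists_parent htree hu).choose_spec

lemma adj_par (htree : G.IsTree) {x u : V} (hu : u ≠ x) : G.Adj (par htree x u) u :=
  (par_spec htree hu).choose

lemma support_pathTo_eq (htree : G.IsTree) {x u : V} (hu : u ≠ x) :
    (pathTo htree x u).support = (pathTo htree x (par htree x u)).support ++ [u] := by
  obtain ⟨h, hp⟩ := par_spec htree hu
  rw [hp, Walk.support_concat]

lemma dist_par (htree : G.IsTree) {x u : V} (hu : u ≠ x) :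
    G.dist x u = G.dist x (par htree x u) + 1 := by
  obtain ⟨h, hp⟩ := par_spec htree hu
  rw [dist_eq_length_pathTo htree, dist_eq_length_pathTo htree, hp, Walk.length_concat]

lemma par_mem_support (htree : G.IsTree) {x u : V} (hu : u ≠ x) :
    par htree x u ∈ (pathTo htree x u).support := by
  rw [support_pathTo_eq htree hu]
  exact List.mem_append_left _ (Walk.end_mem_support _)

lemma par_eq_of_not_mem_support (htree : G.IsTree) {x u v : V} (h : G.Adj v u)
    (hmem : u ∉ (pathTo htree x v).support) : u ≠ x ∧ par htree x u = v := by
  have hux : u ≠ x := fun e => hmem (e ▸ Walk.start_mem_support _)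
  have hW : ((pathTo htree x v).concat h).IsPath := by
    rw [Walk.isPath_def, Walk.support_concat]
    rw [List.nodup_append]
    exact ⟨(pathTo_isPath htree x v).support_nodup, List.nodup_singleton u,
      fun a ha b hb => by simp at hb; subst hb; exact fun e => hmem (e ▸ ha)⟩
  have hWe : (pathTo htree x v).concat h = pathTo htree x u :=
    pathTo_unique htree _ hW
  obtain ⟨h', hp'⟩ := par_spec htree hux
  rw [← hWe] at hp'
  obtain ⟨hv, -⟩ := Walk.concat_inj hp'
  exact ⟨hux, hv.symm⟩

lemma par_eq_of_child (htree : G.IsTree) {x u v : V} (h : G.Adj v u)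
    (hd : G.dist x u = G.dist x v + 1) : u ≠ x ∧ par htree x u = v := by
  refine par_eq_of_not_mem_support htree h fun hmem => ?_
  have h1 : G.dist x u ≤ ((pathTo htree x v).takeUntil u hmem).length :=
    SimpleGraph.dist_le _
  have h2 : ((pathTo htree x v).takeUntil u hmem).length ≤ (pathTo htree x v).length :=
    Walk.length_takeUntil_le _ hmem
  rw [← dist_eq_length_pathTo htree] at h2
  omega

lemma child_of_par (htree : G.IsTree) {x u : V} (hu : u ≠ x) :
    G.Adj (par htree x u) u ∧ G.dist x u = G.dist x (par htree x u) + 1 :=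
  ⟨adj_par htree hu, dist_par htree hu⟩

lemma adj_parent (htree : G.IsTree) {x a b : V} (h : G.Adj a b) :
    (b ≠ x ∧ par htree x b = a) ∨ (a ≠ x ∧ par htree x a = b) := by
  by_cases hb : b ∈ (pathTo htree x a).support
  · right
    refine par_eq_of_not_mem_support htree h.symm fun ha => ?_
    -- pathTo x b = takeUntil
    have htk : (pathTo htree x a).takeUntil b hb = pathTo htree x b :=
      pathTo_unique htree _ ((pathTo_isPath htree x a).takeUntil hb)
    rw [← htk] at ha
    have hsp := (pathTo htree x a).take_spec hb
    have hnodup : ((((pathTo htree x a).takeUntil b hb).append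
        ((pathTo htree x a).dropUntil b hb)).support).Nodup := by
      rw [hsp]; exact (pathTo_isPath htree x a).support_nodup
    rw [Walk.support_append, List.nodup_append] at hnodup
    refine hnodup.2.2 a ha a ?_ rfl
    have hba : b ≠ a := h.ne'
    have : a ∈ ((pathTo htree x a).dropUntil b hb).support :=
      Walk.end_mem_support _
    rw [Walk.support_eq_cons] at this
    simp only [List.mem_cons] at this
    rcases this with h' | h'
    · exact absurd h'.symm hba
    · exact h'
  · exact Or.inl (par_eq_of_not_mem_support htree h hb)


/-! ### Interior of a contour -/

/-- The connected component of `x` after deleting `C`. -/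
def interior (G : SimpleGraph V) (x : V) (C : Set (Sym2 V)) : Set V :=
  ((G.deleteEdges C).connectedComponentMk x).supp

lemma mem_interior_iff {x u : V} {C : Set (Sym2 V)} :
    u ∈ interior G x C ↔ (G.deleteEdges C).Reachable u x := by
  rw [interior, ConnectedComponent.mem_supp_iff, ConnectedComponent.eq]

lemma x_mem_interior (x : V) (C : Set (Sym2 V)) : x ∈ interior G x C :=
  mem_interior_iff.2 (Reachable.refl x)

lemma walk_closed {G'' : SimpleGraph V} {S : Set V}
    (hcl : ∀ ⦃a b : V⦄, a ∈ S → G''.Adj a b → b ∈ S) {a b : V} (ha : a ∈ S)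
    (w : G''.Walk a b) : b ∈ S := by
  induction w with
  | nil => exact ha
  | cons h p ih => exact ih (hcl ha h)

lemma interior_adj_closed {x u v : V} {C : Set (Sym2 V)} (hu : u ∈ interior G x C)
    (h : (G.deleteEdges C).Adj u v) : v ∈ interior G x C :=
  mem_interior_iff.2 ((Reachable.symm ⟨Walk.cons h Walk.nil⟩).trans (mem_interior_iff.1 hu))

lemma support_subset_interior (htree : G.IsTree) {x u : V} {C : Set (Sym2 V)}
    (hu : u ∈ interior G x C) : ∀ w ∈ (pathTo htree x u).support, w ∈ interior G x C := by
  obtain ⟨W⟩ := (mem_interior_iff.1 hu).symm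
  have hedges : ∀ e ∈ W.bypass.edges, e ∈ G.edgeSet := by
    intro e he
    have := W.bypass.edges_subset_edgeSet he
    rw [edgeSet_deleteEdges] at this
    exact this.1
  have htr : (W.bypass.transfer G hedges).IsPath := W.bypass_isPath.transfer hedges
  have heq : W.bypass.transfer G hedges = pathTo htree x u := pathTo_unique htree _ htr
  intro w hw
  rw [← heq, Walk.support_transfer] at hw
  have hw' : w ∈ W.support := W.support_bypass_subset hw
  exact mem_interior_iff.2 (Reachable.symm ⟨W.takeUntil w hw'⟩)

lemma par_mem_interior (htree : G.IsTree) {x u : V} {C : Set (Sym2 V)}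
    (hu : u ∈ interior G x C) (hux : u ≠ x) : par htree x u ∈ interior G x C :=
  support_subset_interior htree hu _ (par_mem_support htree hux)

/-! ### Contours are edge boundaries of their interiors -/

lemma contour_subset_boundary {x : V} {C : Set (Sym2 V)} (hcont : IsContour G C)
    (hfin : (interior G x C).Finite) :
    ∀ e ∈ C, ∃ u v, e = s(u, v) ∧ G.Adj u v ∧ u ∈ interior G x C ∧ v ∉ interior G x C := by
  intro e he
  induction e using Sym2.ind with
  | _ u v =>
  have hadj : G.Adj u v := (mem_edgeSet G).1 (hcont.2.1 he)
  -- auxiliary: if both endpoints are in, or both out, then minimality fails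
  have haux : (u ∈ interior G x C ↔ v ∈ interior G x C) → False := by
    intro hiff
    refine hcont.2.2.2 _ he ((G.deleteEdges (C \ {s(u, v)})).connectedComponentMk x) ?_
    refine hfin.subset ?_
    intro w hw
    rw [ConnectedComponent.mem_supp_iff, ConnectedComponent.eq] at hw
    obtain ⟨W⟩ := hw.symm
    refine walk_closed ?_ (x_mem_interior x C) W
    intro a b ha hab
    rw [deleteEdges_adj] at hab
    by_cases hC : s(a, b) ∈ C
    · have : s(a, b) = s(u, v) := by
        by_contra hne
        exact hab.2 ⟨hC, hne⟩
      rw [Sym2.eq_iff] at this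
      rcases this with ⟨rfl, rfl⟩ | ⟨rfl, rfl⟩
      · exact hiff.1 ha
      · exact hiff.2 ha
    · exact interior_adj_closed ha (by rw [deleteEdges_adj]; exact ⟨hab.1, hC⟩)
  by_cases hu : u ∈ interior G x C <;> by_cases hv : v ∈ interior G x C
  · exact absurd (iff_of_true hu hv) haux
  · exact ⟨u, v, rfl, hadj, hu, hv⟩
  · exact ⟨v, u, Sym2.eq_swap, hadj.symm, hv, hu⟩
  · exact absurd (iff_of_false hu hv) haux

lemma boundary_subset_contour {x u v : V} {C : Set (Sym2 V)} (hadj : G.Adj u v)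
    (hu : u ∈ interior G x C) (hv : v ∉ interior G x C) : s(u, v) ∈ C := by
  by_contra hC
  exact hv (interior_adj_closed hu (by rw [deleteEdges_adj]; exact ⟨hadj, hC⟩))

lemma contour_eq_of_interior_eq {x : V} {C C' : Set (Sym2 V)} (hcont : IsContour G C)
    (hcont' : IsContour G C') (hfin : (interior G x C).Finite)
    (hI : interior G x C = interior G x C') : C = C' := by
  have hfin' : (interior G x C').Finite := hI ▸ hfin
  ext e
  constructor
  · intro he
    obtain ⟨u, v, rfl, hadj, hu, hv⟩ := contour_subset_boundary hcont hfin e he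
    exact boundary_subset_contour hadj (hI ▸ hu) (hI ▸ hv)
  · intro he
    obtain ⟨u, v, rfl, hadj, hu, hv⟩ := contour_subset_boundary hcont' hfin' e he
    exact boundary_subset_contour hadj (hI ▸ hu) (hI ▸ hv)


/-! ### Slots -/

/-- The set of children of `v` in the tree rooted at `x`. -/
def childSet (G : SimpleGraph V) (x v : V) : Set V :=
  {u : V | G.Adj v u ∧ G.dist x u = G.dist x v + 1}

lemma mem_childSet_iff (htree : G.IsTree) {x v u : V} :
    u ∈ childSet G x v ↔ u ≠ x ∧ par htree x u = v := by
  constructor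
  · rintro ⟨h1, h2⟩
    exact par_eq_of_child htree h1 h2
  · rintro ⟨h1, rfl⟩
    exact ⟨adj_par htree h1, dist_par htree h1⟩

lemma childSet_finite (hlocfin : ∀ v : V, (G.neighborSet v).Finite) (x v : V) :
    (childSet G x v).Finite :=
  (hlocfin v).subset fun u hu => hu.1

/-- The slots of a contour: vertices other than `x` whose parent lies in the interior. -/
def slots (htree : G.IsTree) (x : V) (C : Set (Sym2 V)) : Set V :=
  {u : V | u ≠ x ∧ par htree x u ∈ interior G x C}

lemma mem_slots_iff (htree : G.IsTree) {x u : V} {C : Set (Sym2 V)} :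
    u ∈ slots htree x C ↔ u ≠ x ∧ par htree x u ∈ interior G x C := Iff.rfl

lemma slots_eq_biUnion (htree : G.IsTree) (x : V) (C : Set (Sym2 V)) :
    slots htree x C = ⋃ v ∈ interior G x C, childSet G x v := by
  ext u
  simp only [mem_slots_iff htree, Set.mem_iUnion, mem_childSet_iff htree, exists_prop]
  constructor
  · rintro ⟨h1, h2⟩; exact ⟨_, h2, h1, rfl⟩
  · rintro ⟨v, hv, h1, rfl⟩; exact ⟨h1, hv⟩

lemma slots_finite (htree : G.IsTree) (hlocfin : ∀ v : V, (G.neighborSet v).Finite)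
    {x : V} {C : Set (Sym2 V)} (hfin : (interior G x C).Finite) :
    (slots htree x C).Finite := by
  rw [slots_eq_biUnion htree]
  exact Set.Finite.biUnion hfin fun v _ => childSet_finite hlocfin x v

lemma slots_inter_interior (htree : G.IsTree) (x : V) (C : Set (Sym2 V)) :
    slots htree x C ∩ interior G x C = interior G x C \ {x} := by
  ext u
  constructor
  · rintro ⟨⟨h1, h2⟩, h3⟩; exact ⟨h3, h1⟩
  · rintro ⟨h1, h2⟩
    have h2' : u ≠ x := h2
    exact ⟨⟨h2', par_mem_interior htree h1 h2'⟩, h1⟩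

lemma image_slots_diff (htree : G.IsTree) {x : V} {C : Set (Sym2 V)}
    (hcont : IsContour G C) (hfin : (interior G x C).Finite) :
    (fun u => s(par htree x u, u)) '' (slots htree x C \ interior G x C) = C := by
  ext e
  constructor
  · rintro ⟨u, ⟨⟨hux, hpar⟩, hu⟩, rfl⟩
    exact boundary_subset_contour (adj_par htree hux) hpar hu
  · intro he
    obtain ⟨a, b, rfl, hadj, ha, hb⟩ := contour_subset_boundary hcont hfin e he
    rcases adj_parent htree hadj with ⟨hbx, hpb⟩ | ⟨hax, hpa⟩
    · exact ⟨b, ⟨⟨hbx, hpb.symm ▸ ha⟩, hb⟩, by simp [hpb, Sym2.eq_swap]⟩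
    · exact absurd (hpa ▸ par_mem_interior htree ha hax) hb

lemma injOn_slots_diff (htree : G.IsTree) {x : V} {C : Set (Sym2 V)} :
    Set.InjOn (fun u => s(par htree x u, u)) (slots htree x C \ interior G x C) := by
  rintro u ⟨⟨hux, hpu⟩, hu⟩ w ⟨⟨hwx, hpw⟩, hw⟩ h
  simp only [Sym2.eq_iff] at h
  rcases h with ⟨-, h⟩ | ⟨h1, h2⟩
  · exact h
  · subst h1
    exact absurd hpu hw

lemma ncard_slots_diff (htree : G.IsTree) {x : V} {C : Set (Sym2 V)}
    (hcont : IsContour G C) (hfin : (interior G x C).Finite) :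
    (slots htree x C \ interior G x C).ncard = C.ncard := by
  conv_rhs => rw [← image_slots_diff htree hcont hfin]
  rw [Set.ncard_image_of_injOn (injOn_slots_diff htree)]


/-! ### Cardinality bounds -/

lemma slots_ncard_split (htree : G.IsTree) {x : V} {C : Set (Sym2 V)}
    (hcont : IsContour G C) (hfin : (interior G x C).Finite)
    (hSfin : (slots htree x C).Finite) :
    (slots htree x C).ncard = ((interior G x C).ncard - 1) + C.ncard := by
  rw [← Set.ncard_inter_add_ncard_diff_eq_ncard (slots htree x C) (interior G x C) hSfin,
    slots_inter_interior, Set.ncard_diff_singleton_of_mem (x_mem_interior x C),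
    ncard_slots_diff htree hcont hfin]

lemma mul_le_slots_ncard {r : ℕ} (htree : G.IsTree)
    (hlocfin : ∀ v : V, (G.neighborSet v).Finite) {x : V}
    (hchild : ∀ v : V, r ≤ (childSet G x v).ncard) {C : Set (Sym2 V)}
    (hfin : (interior G x C).Finite) :
    (interior G x C).ncard * r ≤ (slots htree x C).ncard := by
  classical
  have hSfin := slots_finite htree hlocfin hfin
  set IF := hfin.toFinset with hIF
  have hSF : hSfin.toFinset = IF.biUnion (fun v => (childSet_finite hlocfin x v).toFinset) := by
    ext u
    simp only [Set.Finite.mem_toFinset, Finset.mem_biUnion, slots_eq_biUnion htree,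
      Set.mem_iUnion, exists_prop, hIF]
  have hdisj : ∀ v ∈ IF, ∀ w ∈ IF, v ≠ w →
      Disjoint ((childSet_finite hlocfin x v).toFinset)
        ((childSet_finite hlocfin x w).toFinset) := by
    intro v _ w _ hvw
    rw [Finset.disjoint_left]
    intro u hu hu'
    rw [Set.Finite.mem_toFinset, mem_childSet_iff htree] at hu hu'
    exact hvw (hu.2.symm.trans hu'.2)
  have hcard : hSfin.toFinset.card = ∑ v ∈ IF, ((childSet_finite hlocfin x v).toFinset).card := by
    rw [hSF, Finset.card_biUnion hdisj]
  have hge : ∀ v ∈ IF, r ≤ ((childSet_finite hlocfin x v).toFinset).card := by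
    intro v _
    rw [← Set.ncard_eq_toFinset_card _ (childSet_finite hlocfin x v)]
    exact hchild v
  have := Finset.card_nsmul_le_sum IF (fun v => ((childSet_finite hlocfin x v).toFinset).card) r hge
  rw [smul_eq_mul] at this
  rw [Set.ncard_eq_toFinset_card _ hfin, Set.ncard_eq_toFinset_card _ hSfin]
  calc IF.card * r ≤ ∑ v ∈ IF, ((childSet_finite hlocfin x v).toFinset).card := this
    _ = hSfin.toFinset.card := hcard.symm

lemma interior_ncard_pos {x : V} {C : Set (Sym2 V)} (hfin : (interior G x C).Finite) :
    0 < (interior G x C).ncard :=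
  (Set.ncard_pos hfin).2 ⟨x, x_mem_interior x C⟩


/-! ### Ordering vertices by their root-paths -/

/-- The root-path of a vertex, as a list. -/
noncomputable def vorder (htree : G.IsTree) (x u : V) : List V := (pathTo htree x u).support

lemma vorder_injective (htree : G.IsTree) (x : V) :
    Function.Injective (vorder htree x) := by
  intro u w h
  have hu : (vorder htree x u).getLast? = some u := by
    rw [List.getLast?_eq_getLast (l := vorder htree x u) (by simp [vorder])]
    exact congrArg some (Walk.getLast_support _)
  have hw : (vorder htree x w).getLast? = some w := by
    rw [List.getLast?_eq_getLast (l := vorder htree x w) (by simp [vorder])]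
    exact congrArg some (Walk.getLast_support _)
  rw [h, hw] at hu
  exact (Option.some_injective _ hu).symm

lemma lex_append {α : Type*} [LinearOrder α] :
    ∀ (l : List α) (a : α) (t : List α), List.Lex (· < ·) l (l ++ a :: t)
  | [], a, t => List.Lex.nil
  | _ :: l, a, t => List.Lex.cons (lex_append l a t)

lemma vorder_par_lt [LinearOrder V] (htree : G.IsTree) {x u : V} (hu : u ≠ x) :
    vorder htree x (par htree x u) < vorder htree x u := by
  show List.Lex (· < ·) (vorder htree x (par htree x u)) (vorder htree x u)
  rw [vorder, vorder, support_pathTo_eq htree hu]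
  exact lex_append _ u []

section Rank

variable [LinearOrder V]

/-- The rank of a vertex within a finite set of vertices, by root-path order. -/
noncomputable def rank (htree : G.IsTree) (x : V) (SF : Finset V) (u : V) : ℕ :=
  (SF.filter (fun w => vorder htree x w < vorder htree x u)).card

lemma rank_lt_card (htree : G.IsTree) {x : V} {SF : Finset V} {u : V} (h : u ∈ SF) :
    rank htree x SF u < SF.card := by
  have hne : u ∉ SF.filter (fun w => vorder htree x w < vorder htree x u) := by
    simp
  have hsub : SF.filter (fun w => vorder htree x w < vorder htree x u) ⊂ SF :=
    ⟨Finset.filter_subset _ _, fun hs => hne (hs h)⟩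
  exact Finset.card_lt_card hsub

lemma rank_lt_rank (htree : G.IsTree) {x : V} {SF : Finset V} {u w : V} (hu : u ∈ SF)
    (hlt : vorder htree x u < vorder htree x w) :
    rank htree x SF u < rank htree x SF w := by
  apply Finset.card_lt_card
  constructor
  · intro a ha
    rw [Finset.mem_filter] at ha ⊢
    exact ⟨ha.1, ha.2.trans hlt⟩
  · intro hs
    have : u ∈ SF.filter (fun w' => vorder htree x w' < vorder htree x w) :=
      Finset.mem_filter.2 ⟨hu, hlt⟩
    have := (Finset.mem_filter.1 (hs this)).2
    exact absurd this (lt_irrefl _)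

lemma rank_injOn (htree : G.IsTree) {x : V} {SF : Finset V} {u w : V} (hu : u ∈ SF)
    (hw : w ∈ SF) (h : rank htree x SF u = rank htree x SF w) : u = w := by
  by_contra hne
  have hvne : vorder htree x u ≠ vorder htree x w :=
    fun e => hne (vorder_injective htree x e)
  rcases hvne.lt_or_gt with hlt | hlt
  · exact absurd h (Nat.ne_of_lt (rank_lt_rank htree hu hlt))
  · exact absurd h.symm (Nat.ne_of_lt (rank_lt_rank htree hw hlt))

end Rank


/-! ### The encoding -/

section Encode

variable [LinearOrder V]

open scoped Classical in
/-- The code of a contour: positions of interior slots, padded. -/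
noncomputable def code (htree : G.IsTree) (hlocfin : ∀ v : V, (G.neighborSet v).Finite)
    (x : V) (n m : ℕ) (C : Set (Sym2 V)) : Finset ℕ :=
  if hfin : (interior G x C).Finite then
    ((slots_finite htree hlocfin hfin).toFinset.filter (fun u => u ∈ interior G x C)).image
        (rank htree x (slots_finite htree hlocfin hfin).toFinset)
      ∪ Finset.Ico (n + ((interior G x C).ncard - 1)) (n + m)
  else ∅

variable {r n : ℕ} {x : V} {C : Set (Sym2 V)}

/-! Basic consequences of membership in `contours`. -/

lemma contours_interior_finite (hC : C ∈ contours G x n) : (interior G x C).Finite := hC.2.2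

lemma contours_slots_card (htree : G.IsTree) (hlocfin : ∀ v : V, (G.neighborSet v).Finite)
    (hC : C ∈ contours G x n) :
    (slots_finite htree hlocfin (contours_interior_finite hC)).toFinset.card
      = ((interior G x C).ncard - 1) + n := by
  rw [← Set.ncard_eq_toFinset_card _ (slots_finite htree hlocfin (contours_interior_finite hC)),
    slots_ncard_split htree hC.1 (contours_interior_finite hC)
      (slots_finite htree hlocfin (contours_interior_finite hC)), hC.2.1]

lemma nat_helper {k r n : ℕ} (hk : 0 < k) (hr : 2 ≤ r) (h1 : k * r ≤ (k - 1) + n) :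
    (k - 1) * (r - 1) ≤ n - r := by
  obtain ⟨j, rfl⟩ : ∃ j, k = j + 1 := ⟨k - 1, by omega⟩
  simp only [Nat.add_sub_cancel] at h1 ⊢
  have e2 : j * (r - 1) + j = j * r := by
    have h3 : r - 1 + 1 = r := by omega
    calc j * (r - 1) + j = j * ((r - 1) + 1) := by ring
      _ = j * r := by rw [h3]
  have e3 : (j + 1) * r = j * r + r := by ring
  have h4 : j * (r - 1) + r ≤ n := by linarith
  omega

lemma contours_j_le_m (htree : G.IsTree) (hlocfin : ∀ v : V, (G.neighborSet v).Finite)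
    (hchild : ∀ v : V, r ≤ (childSet G x v).ncard) (hr : 2 ≤ r) (hC : C ∈ contours G x n) :
    (interior G x C).ncard - 1 ≤ (n - r) / (r - 1) := by
  have hfin := contours_interior_finite hC
  have hk : 0 < (interior G x C).ncard := interior_ncard_pos hfin
  have h1 : (interior G x C).ncard * r ≤ ((interior G x C).ncard - 1) + n := by
    have := mul_le_slots_ncard htree hlocfin hchild hfin
    rw [slots_ncard_split htree hC.1 hfin (slots_finite htree hlocfin hfin), hC.2.1] at this
    exact this
  exact (Nat.le_div_iff_mul_le (by omega : 0 < r - 1)).2 (nat_helper hk hr h1)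

/-- The maximal slot is not in the interior. -/
lemma contours_max_slot_not_interior (htree : G.IsTree)
    (hlocfin : ∀ v : V, (G.neighborSet v).Finite)
    (hchild : ∀ v : V, r ≤ (childSet G x v).ncard) (hr : 2 ≤ r)
    (hC : C ∈ contours G x n) {u : V}
    (huSF : u ∈ (slots_finite htree hlocfin (contours_interior_finite hC)).toFinset)
    (hmax : ∀ w ∈ (slots_finite htree hlocfin (contours_interior_finite hC)).toFinset,
      vorder htree x w ≤ vorder htree x u) :
    u ∉ interior G x C := by
  intro huI
  have hne : (childSet G x u).Nonempty :=
    Set.nonempty_of_ncard_ne_zero (by have := hchild u; omega)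
  obtain ⟨c, hc⟩ := hne
  rw [mem_childSet_iff htree] at hc
  have hcS : c ∈ slots htree x C := ⟨hc.1, hc.2.symm ▸ huI⟩
  have hcSF : c ∈ (slots_finite htree hlocfin (contours_interior_finite hC)).toFinset :=
    (Set.Finite.mem_toFinset _).2 hcS
  have hlt : vorder htree x u < vorder htree x c := by
    have := vorder_par_lt htree (x := x) hc.1
    rwa [hc.2] at this
  exact absurd (hmax c hcSF) (not_le.2 hlt)

open scoped Classical in
lemma code_eq (htree : G.IsTree) (hlocfin : ∀ v : V, (G.neighborSet v).Finite)
    {x : V} {n m : ℕ} {C : Set (Sym2 V)} (hfin : (interior G x C).Finite) :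
    code htree hlocfin x n m C =
      ((slots_finite htree hlocfin hfin).toFinset.filter
          (fun u => u ∈ interior G x C)).image
        (rank htree x (slots_finite htree hlocfin hfin).toFinset)
      ∪ Finset.Ico (n + ((interior G x C).ncard - 1)) (n + m) := dif_pos hfin

open scoped Classical in
lemma filter_card (htree : G.IsTree) (hlocfin : ∀ v : V, (G.neighborSet v).Finite)
    {x : V} {C : Set (Sym2 V)} (hfin : (interior G x C).Finite) :
    ((slots_finite htree hlocfin hfin).toFinset.filter
        (fun u => u ∈ interior G x C)).card = (interior G x C).ncard - 1 := by
  have hIfin : (slots htree x C ∩ interior G x C).Finite :=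
    (slots_finite htree hlocfin hfin).inter_of_left _
  have h1 : (slots htree x C ∩ interior G x C).ncard = (interior G x C).ncard - 1 := by
    rw [slots_inter_interior htree, Set.ncard_diff_singleton_of_mem (x_mem_interior x C)]
  rw [Set.ncard_eq_toFinset_card _ hIfin] at h1
  rw [← h1]
  congr 1
  ext u
  simp only [Finset.mem_filter, Set.Finite.mem_toFinset, Set.mem_inter_iff]

open scoped Classical in
lemma code_mem_image_lt {n : ℕ} {x : V} {C : Set (Sym2 V)} (htree : G.IsTree)
    (hlocfin : ∀ v : V, (G.neighborSet v).Finite) (hC : C ∈ contours G x n) {q : ℕ}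
    (hq : q ∈ ((slots_finite htree hlocfin (contours_interior_finite hC)).toFinset.filter
          (fun u => u ∈ interior G x C)).image
        (rank htree x (slots_finite htree hlocfin (contours_interior_finite hC)).toFinset)) :
    q < n + ((interior G x C).ncard - 1) := by
  obtain ⟨w, hw, rfl⟩ := Finset.mem_image.1 hq
  have hwSF := (Finset.mem_filter.1 hw).1
  have := rank_lt_card htree (x := x) hwSF
  rw [contours_slots_card htree hlocfin hC] at this
  omega

open scoped Classical in
lemma code_card {n m : ℕ} {x : V} {C : Set (Sym2 V)} (htree : G.IsTree)
    (hlocfin : ∀ v : V, (G.neighborSet v).Finite) (hC : C ∈ contours G x n)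
    (hm : (interior G x C).ncard - 1 ≤ m) :
    (code htree hlocfin x n m C).card = m := by
  have hfin := contours_interior_finite hC
  rw [code_eq htree hlocfin hfin]
  rw [Finset.card_union_of_disjoint]
  · have h1 : (((slots_finite htree hlocfin hfin).toFinset.filter
        (fun u => u ∈ interior G x C)).image
          (rank htree x (slots_finite htree hlocfin hfin).toFinset)).card
        = (interior G x C).ncard - 1 := by
      rw [Finset.card_image_of_injOn, filter_card htree hlocfin hfin]
      intro a ha b hb hab
      exact rank_injOn htree (Finset.mem_filter.1 ha).1 (Finset.mem_filter.1 hb).1 hab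
    rw [h1, Nat.card_Ico]
    omega
  · rw [Finset.disjoint_left]
    intro q hq hq'
    have := code_mem_image_lt htree hlocfin hC hq
    have := (Finset.mem_Ico.1 hq').1
    omega

open scoped Classical in
lemma code_subset_range {n m : ℕ} {x : V} {C : Set (Sym2 V)} (htree : G.IsTree)
    (hlocfin : ∀ v : V, (G.neighborSet v).Finite) (hC : C ∈ contours G x n)
    (hm : (interior G x C).ncard - 1 ≤ m) :
    code htree hlocfin x n m C ⊆ Finset.range (n + m) := by
  have hfin := contours_interior_finite hC
  rw [code_eq htree hlocfin hfin]
  intro q hq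
  rw [Finset.mem_union] at hq
  rw [Finset.mem_range]
  rcases hq with hq | hq
  · have := code_mem_image_lt htree hlocfin hC hq
    omega
  · exact (Finset.mem_Ico.1 hq).2

open scoped Classical in
lemma code_notmem {r n m : ℕ} {x : V} {C : Set (Sym2 V)} (htree : G.IsTree)
    (hlocfin : ∀ v : V, (G.neighborSet v).Finite)
    (hchild : ∀ v : V, r ≤ (childSet G x v).ncard) (hr : 2 ≤ r) (hn : 1 ≤ n)
    (hC : C ∈ contours G x n) :
    n + ((interior G x C).ncard - 1) - 1 ∉ code htree hlocfin x n m C := by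
  have hfin := contours_interior_finite hC
  intro h
  rw [code_eq htree hlocfin hfin, Finset.mem_union] at h
  rcases h with h | h
  · obtain ⟨w, hw, hrw⟩ := Finset.mem_image.1 h
    have hwSF := (Finset.mem_filter.1 hw).1
    have hwI : w ∈ interior G x C := (Finset.mem_filter.1 hw).2
    obtain ⟨u, huSF, hmax⟩ := Finset.exists_max_image
      (slots_finite htree hlocfin hfin).toFinset (vorder htree x) ⟨w, hwSF⟩
    have huI : u ∉ interior G x C :=
      contours_max_slot_not_interior htree hlocfin hchild hr hC huSF hmax
    have hne : w ≠ u := fun e => huI (e ▸ hwI)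
    have hlt : vorder htree x w < vorder htree x u :=
      lt_of_le_of_ne (hmax w hwSF) (fun e => hne (vorder_injective htree x e))
    have h1 : rank htree x (slots_finite htree hlocfin hfin).toFinset w
        < rank htree x (slots_finite htree hlocfin hfin).toFinset u :=
      rank_lt_rank htree hwSF hlt
    have h2 := rank_lt_card htree (x := x) huSF
    rw [contours_slots_card htree hlocfin hC] at h2
    omega
  · have := Finset.mem_Ico.1 h
    omega

open scoped Classical in
lemma code_mem_char {n m : ℕ} {x : V} {C : Set (Sym2 V)} (htree : G.IsTree)
    (hlocfin : ∀ v : V, (G.neighborSet v).Finite) (hC : C ∈ contours G x n) {q : ℕ}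
    (hq : q ∈ code htree hlocfin x n m C) (hlt : q < n + ((interior G x C).ncard - 1)) :
    ∃ w ∈ (slots_finite htree hlocfin (contours_interior_finite hC)).toFinset,
      w ∈ interior G x C ∧
        rank htree x (slots_finite htree hlocfin (contours_interior_finite hC)).toFinset w = q := by
  have hfin := contours_interior_finite hC
  rw [code_eq htree hlocfin hfin, Finset.mem_union] at hq
  rcases hq with hq | hq
  · obtain ⟨w, hw, hrw⟩ := Finset.mem_image.1 hq
    exact ⟨w, (Finset.mem_filter.1 hw).1, (Finset.mem_filter.1 hw).2, hrw⟩
  · have := (Finset.mem_Ico.1 hq).1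
    omega

open scoped Classical in
lemma code_j_aux {r n m : ℕ} {x : V} {C C' : Set (Sym2 V)} (htree : G.IsTree)
    (hlocfin : ∀ v : V, (G.neighborSet v).Finite)
    (hchild : ∀ v : V, r ≤ (childSet G x v).ncard) (hr : 2 ≤ r) (hn : 1 ≤ n)
    (hC : C ∈ contours G x n) (hC' : C' ∈ contours G x n)
    (hm' : (interior G x C').ncard - 1 ≤ m)
    (hlt : (interior G x C).ncard - 1 < (interior G x C').ncard - 1)
    (heq : code htree hlocfin x n m C = code htree hlocfin x n m C') : False := by
  have hfin := contours_interior_finite hC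
  set j := (interior G x C).ncard - 1
  set j' := (interior G x C').ncard - 1
  have h1 : n + j' - 1 ∈ code htree hlocfin x n m C := by
    rw [code_eq htree hlocfin hfin, Finset.mem_union]
    right
    rw [Finset.mem_Ico]
    omega
  rw [heq] at h1
  exact code_notmem htree hlocfin hchild hr hn hC' h1

open scoped Classical in
lemma code_inj_aux {n m : ℕ} {x : V} {C C' : Set (Sym2 V)} (htree : G.IsTree)
    (hlocfin : ∀ v : V, (G.neighborSet v).Finite)
    (hC : C ∈ contours G x n) (hC' : C' ∈ contours G x n)
    (hjeq : (interior G x C).ncard - 1 = (interior G x C').ncard - 1)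
    (heq : code htree hlocfin x n m C = code htree hlocfin x n m C') {u : V}
    (hu : u ∈ interior G x C \ interior G x C')
    (hmin : ∀ w, vorder htree x w < vorder htree x u →
      (w ∈ interior G x C ↔ w ∈ interior G x C')) : False := by
  have hfin := contours_interior_finite hC
  have hfin' := contours_interior_finite hC'
  have hux : u ≠ x := fun e => hu.2 (by rw [e]; exact x_mem_interior x C')
  have hpu : par htree x u ∈ interior G x C := par_mem_interior htree hu.1 hux
  have hpu' : par htree x u ∈ interior G x C' :=
    (hmin (par htree x u) (vorder_par_lt htree hux)).1 hpu
  have huS : u ∈ slots htree x C := ⟨hux, hpu⟩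
  have huS' : u ∈ slots htree x C' := ⟨hux, hpu'⟩
  have huSF : u ∈ (slots_finite htree hlocfin hfin).toFinset :=
    (Set.Finite.mem_toFinset _).2 huS
  have huSF' : u ∈ (slots_finite htree hlocfin hfin').toFinset :=
    (Set.Finite.mem_toFinset _).2 huS'
  have key : ∀ w, vorder htree x w < vorder htree x u →
      (w ∈ slots htree x C ↔ w ∈ slots htree x C') := by
    intro w hw
    constructor
    · rintro ⟨h1, h2⟩
      exact ⟨h1, (hmin _ ((vorder_par_lt htree h1).trans hw)).1 h2⟩
    · rintro ⟨h1, h2⟩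
      exact ⟨h1, (hmin _ ((vorder_par_lt htree h1).trans hw)).2 h2⟩
  have hfilter : ((slots_finite htree hlocfin hfin).toFinset.filter
      (fun w => vorder htree x w < vorder htree x u))
      = ((slots_finite htree hlocfin hfin').toFinset.filter
      (fun w => vorder htree x w < vorder htree x u)) := by
    ext w
    simp only [Finset.mem_filter, Set.Finite.mem_toFinset]
    constructor
    · rintro ⟨h1, h2⟩; exact ⟨(key w h2).1 h1, h2⟩
    · rintro ⟨h1, h2⟩; exact ⟨(key w h2).2 h1, h2⟩
  have hrank : rank htree x (slots_finite htree hlocfin hfin).toFinset u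
      = rank htree x (slots_finite htree hlocfin hfin').toFinset u := by
    rw [rank, rank, hfilter]
  have hq : rank htree x (slots_finite htree hlocfin hfin).toFinset u
      ∈ code htree hlocfin x n m C := by
    rw [code_eq htree hlocfin hfin, Finset.mem_union]
    left
    exact Finset.mem_image.2 ⟨u, Finset.mem_filter.2 ⟨huSF, hu.1⟩, rfl⟩
  have hqlt : rank htree x (slots_finite htree hlocfin hfin).toFinset u
      < n + ((interior G x C').ncard - 1) := by
    have := rank_lt_card htree (x := x) huSF
    rw [contours_slots_card htree hlocfin hC] at this
    omega
  rw [heq] at hq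
  obtain ⟨w, hwSF', hwI', hrw⟩ := code_mem_char htree hlocfin hC' hq hqlt
  have : w = u := rank_injOn htree hwSF' huSF' (by rw [hrw, hrank])
  exact hu.2 (this ▸ hwI')

open scoped Classical in
lemma code_injective {r n m : ℕ} {x : V} {C C' : Set (Sym2 V)} (htree : G.IsTree)
    (hlocfin : ∀ v : V, (G.neighborSet v).Finite)
    (hchild : ∀ v : V, r ≤ (childSet G x v).ncard) (hr : 2 ≤ r) (hn : 1 ≤ n)
    (hC : C ∈ contours G x n) (hC' : C' ∈ contours G x n)
    (hm : (interior G x C).ncard - 1 ≤ m) (hm' : (interior G x C').ncard - 1 ≤ m)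
    (heq : code htree hlocfin x n m C = code htree hlocfin x n m C') : C = C' := by
  have hfin := contours_interior_finite hC
  have hfin' := contours_interior_finite hC'
  have hjeq : (interior G x C).ncard - 1 = (interior G x C').ncard - 1 := by
    rcases lt_trichotomy ((interior G x C).ncard - 1) ((interior G x C').ncard - 1)
      with h | h | h
    · exact absurd (code_j_aux htree hlocfin hchild hr hn hC hC' hm' h heq) id
    · exact h
    · exact absurd (code_j_aux htree hlocfin hchild hr hn hC' hC hm h heq.symm) id
  have hIeq : interior G x C = interior G x C' := by
    by_contra hne
    have hDex : ∃ u, u ∈ (interior G x C \ interior G x C')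
        ∪ (interior G x C' \ interior G x C) := by
      by_contra hempty
      push_neg at hempty
      apply hne
      ext w
      constructor
      · intro hw
        by_contra hw'
        exact hempty w (Or.inl ⟨hw, hw'⟩)
      · intro hw
        by_contra hw'
        exact hempty w (Or.inr ⟨hw, hw'⟩)
    have hDfin : ((interior G x C \ interior G x C')
        ∪ (interior G x C' \ interior G x C)).Finite :=
      (hfin.subset Set.diff_subset).union (hfin'.subset Set.diff_subset)
    obtain ⟨u0, hu0⟩ := hDex
    obtain ⟨u, huDF, hminim⟩ := Finset.exists_min_image hDfin.toFinset (vorder htree x)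
      ⟨u0, hDfin.mem_toFinset.2 hu0⟩
    have huD := hDfin.mem_toFinset.1 huDF
    have hmin : ∀ w, vorder htree x w < vorder htree x u →
        (w ∈ interior G x C ↔ w ∈ interior G x C') := by
      intro w hw
      by_contra hiff
      have hwD : w ∈ (interior G x C \ interior G x C')
          ∪ (interior G x C' \ interior G x C) := by
        by_cases h1 : w ∈ interior G x C
        · exact Or.inl ⟨h1, fun h2 => hiff ⟨fun _ => h2, fun _ => h1⟩⟩
        · rcases Classical.em (w ∈ interior G x C') with h2 | h2
          · exact Or.inr ⟨h2, h1⟩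
          · exact absurd ⟨fun h => absurd h h1, fun h => absurd h h2⟩ hiff
      exact absurd (hminim w (hDfin.mem_toFinset.2 hwD)) (not_le.2 hw)
    rcases huD with hu | hu
    · exact absurd (code_inj_aux htree hlocfin hC hC' hjeq heq hu hmin) id
    · refine absurd (code_inj_aux htree hlocfin hC' hC hjeq.symm heq.symm hu ?_) id
      intro w hw
      exact (hmin w hw).symm
  exact contour_eq_of_interior_eq hC.1 hC'.1 hfin hIeq

end Encode

end ContourAux

/-- If `T` is a locally finite, infinite rooted tree with root `x` in which
every vertex has at least `r ≥ 2` children, then for all `n ≥ 1`,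
`|F^n_T(x)| ≤ binom(n + ⌊(n-r)/(r-1)⌋, ⌊(n-r)/(r-1)⌋)` (floors are natural-number division
with truncated subtraction). -/
theorem card_contours_le_binom {V : Type*} (G : SimpleGraph V) (x : V) (r : ℕ) (hr : 2 ≤ r)
    (htree : G.IsTree) (hlocfin : ∀ v : V, (G.neighborSet v).Finite) (hinf : Infinite V)
    (hchild : ∀ v : V, r ≤ {u : V | G.Adj v u ∧ G.dist x u = G.dist x v + 1}.ncard)
    (n : ℕ) (hn : 1 ≤ n) :
    (contours G x n).encard ≤ ((n + (n - r) / (r - 1)).choose ((n - r) / (r - 1)) : ℕ) := by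
  classical
  letI : LinearOrder V := IsWellOrder.linearOrder WellOrderingRel
  set m := (n - r) / (r - 1) with hm
  have hchild' : ∀ v : V, r ≤ (ContourAux.childSet G x v).ncard := hchild
  set f := ContourAux.code (G := G) htree hlocfin x n m with hf
  have hmem : ∀ C ∈ contours G x n, f C ∈ (Finset.range (n + m)).powersetCard m := by
    intro C hC
    rw [Finset.mem_powersetCard]
    exact ⟨ContourAux.code_subset_range htree hlocfin hC
        (ContourAux.contours_j_le_m htree hlocfin hchild' hr hC),
      ContourAux.code_card htree hlocfin hC
        (ContourAux.contours_j_le_m htree hlocfin hchild' hr hC)⟩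
  have hinj : Set.InjOn f (contours G x n) := by
    intro C hC C' hC' heq
    exact ContourAux.code_injective htree hlocfin hchild' hr hn hC hC'
      (ContourAux.contours_j_le_m htree hlocfin hchild' hr hC)
      (ContourAux.contours_j_le_m htree hlocfin hchild' hr hC') heq
  calc (contours G x n).encard = (f '' contours G x n).encard := (hinj.encard_image).symm
    _ ≤ (↑((Finset.range (n + m)).powersetCard m) : Set (Finset ℕ)).encard := by
        apply Set.encard_mono
        rintro q ⟨C, hC, rfl⟩
        exact Finset.mem_coe.2 (hmem C hC)
    _ = (((Finset.range (n + m)).powersetCard m).card : ℕ∞) :=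
        Set.encard_coe_eq_coe_finsetCard _
    _ = (((n + m).choose m : ℕ) : ℕ∞) := by
        rw [Finset.card_powersetCard, Finset.card_range]
end

section
/- Let T be a locally finite, infinite rooted tree in which every vertex has at least r children, where r ≥ 2, and let C be a contour of T of size n with finite component I_C. Then the number of vertices of I_C is at most (n−1)/(r−1), and hence the number of edges of the subtree induced on I_C is at most (n−r)/(r−1). -/
open SimpleGraph

/-- If `T` is a locally finite, infinite rooted tree in which every vertex
has at least `r ≥ 2` children, and `C` is a contour of size `n` with finite component `I`,
then `|I| ≤ (n-1)/(r-1)` and the number of edges of the subtree induced on `I` is at most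
`(n-r)/(r-1)`. -/
theorem interior_card_le {V : Type*} (G : SimpleGraph V) (x : V) (r : ℕ) (hr : 2 ≤ r)
    (htree : G.IsTree) (hlocfin : ∀ v : V, (G.neighborSet v).Finite) (hinf : Infinite V)
    (hchild : ∀ v : V, r ≤ {u : V | G.Adj v u ∧ G.dist x u = G.dist x v + 1}.ncard)
    (C : Set (Sym2 V)) (n : ℕ) (hC : IsContour G C) (hcard : C.ncard = n)
    (I : Set V) (hI : IsInterior G C I) :
    (I.ncard : ℚ) ≤ ((n : ℚ) - 1) / ((r : ℚ) - 1) ∧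
    ({e : Sym2 V | e ∈ G.edgeSet ∧ ∀ v ∈ e, v ∈ I}.ncard : ℚ) ≤
      ((n : ℚ) - (r : ℚ)) / ((r : ℚ) - 1) := by
  classical
  obtain ⟨hIfin, K, hK⟩ := hI
  have hmem : ∀ v, v ∈ I ↔ (G.deleteEdges C).connectedComponentMk v = K := by
    intro v; rw [← hK]; exact K.mem_supp_iff v
  obtain ⟨w, hwK⟩ := K.exists_rep
  have hwI : w ∈ I := (hmem w).2 hwK
  -- edges leaving I are in C
  have h_leave : ∀ v ∈ I, ∀ u, G.Adj v u → u ∉ I → s(v, u) ∈ C := by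
    intro v hv u hadj hu
    by_contra he
    have hadj' : (G.deleteEdges C).Adj v u := by
      rw [SimpleGraph.deleteEdges_adj]; exact ⟨hadj, he⟩
    apply hu
    rw [hmem, ← (hmem v).1 hv]
    exact ConnectedComponent.eq.2 hadj'.symm.reachable
  -- walks in the deleted graph give reachability in the induced graph
  have hreach : ∀ {a b : V} (_ : (G.deleteEdges C).Walk a b) (ha : a ∈ I) (hb : b ∈ I),
      (G.induce I).Reachable ⟨a, ha⟩ ⟨b, hb⟩ := by
    intro a b p
    induction p with
    | nil => intro ha hb; exact Reachable.refl _
    | @cons u v z h q ih =>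
      intro ha hb
      have hv : v ∈ I := by
        rw [hmem] at ha ⊢
        rw [← ha]
        exact ConnectedComponent.eq.2 h.symm.reachable
      have hadj : (G.induce I).Adj ⟨u, ha⟩ ⟨v, hv⟩ := ((SimpleGraph.deleteEdges_adj).1 h).1
      exact hadj.reachable.trans (ih hv hb)
  have hconn : (G.induce I).Connected := by
    rw [connected_iff]
    refine ⟨?_, ⟨⟨w, hwI⟩⟩⟩
    rintro ⟨a, ha⟩ ⟨b, hb⟩
    have hr2 : (G.deleteEdges C).Reachable a b :=
      ConnectedComponent.exact (by rw [(hmem a).1 ha, (hmem b).1 hb])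
    obtain ⟨p⟩ := hr2
    exact hreach p ha hb
  have hacyc : (G.induce I).IsAcyclic := by
    intro v c hc
    exact htree.IsAcyclic _ (hc.map (f := (SimpleGraph.Embedding.induce (G := G) I).toHom)
      (SimpleGraph.Embedding.induce (G := G) I).injective)
  have htree' : (G.induce I).IsTree := ⟨hconn, hacyc⟩
  haveI : Fintype I := hIfin.fintype
  haveI : Fintype (G.induce I).edgeSet := Fintype.ofFinite _
  have hcardeq : (G.induce I).edgeFinset.card + 1 = Fintype.card I := htree'.card_edgeFinset
  -- identify the edge set of the induced subgraph
  set ES : Set (Sym2 V) := {e : Sym2 V | e ∈ G.edgeSet ∧ ∀ v ∈ e, v ∈ I} with hES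
  have hESeq : ES = Sym2.map (Subtype.val : I → V) '' (G.induce I).edgeSet := by
    ext e
    induction e using Sym2.ind with
    | _ a b =>
      constructor
      · rintro ⟨he, hall⟩
        have ha : a ∈ I := hall a (by simp)
        have hb : b ∈ I := hall b (by simp)
        refine ⟨s(⟨a, ha⟩, ⟨b, hb⟩), ?_, by simp⟩
        exact (G.induce I).mem_edgeSet.2 (by exact G.mem_edgeSet.1 he)
      · rintro ⟨e', he', heq⟩
        induction e' using Sym2.ind with
        | _ p q =>
          simp only [Sym2.map_pair_eq] at heq
          have hadj : G.Adj p.1 q.1 := (G.induce I).mem_edgeSet.1 he'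
          refine ⟨?_, ?_⟩
          · rw [← heq]; exact G.mem_edgeSet.2 hadj
          · intro v hv
            rw [← heq, Sym2.mem_iff] at hv
            rcases hv with rfl | rfl
            · exact p.2
            · exact q.2
  have hESfin : ES.Finite := by
    rw [hESeq]; exact ((G.induce I).edgeSet.toFinite).image _
  have hm : ES.ncard = (G.induce I).edgeFinset.card := by
    rw [hESeq, Set.ncard_image_of_injective _ (Sym2.map.injective Subtype.val_injective),
      Set.ncard_eq_toFinset_card']
    exact congrArg Finset.card (by ext; simp)
  have hk : I.ncard = Fintype.card I := by
    rw [← Nat.card_coe_set_eq, Nat.card_eq_fintype_card]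
  -- counting child edges
  have hchildfin : ∀ v : V, {u : V | G.Adj v u ∧ G.dist x u = G.dist x v + 1}.Finite :=
    fun v => (hlocfin v).subset (fun u hu => hu.1)
  set IF := hIfin.toFinset with hIF
  set childF : V → Finset V := fun v => (hchildfin v).toFinset with hchildF
  set T : Finset (Sym2 V) := IF.biUnion (fun v => (childF v).image (fun u => s(v, u))) with hT
  have hdisj : ∀ v ∈ IF, ∀ v' ∈ IF, v ≠ v' →
      Disjoint ((childF v).image (fun u => s(v, u))) ((childF v').image (fun u => s(v', u))) := by
    intro v _ v' _ hne
    rw [Finset.disjoint_left]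
    rintro e he he'
    simp only [Finset.mem_image, hchildF, Set.Finite.mem_toFinset, Set.mem_setOf_eq] at he he'
    obtain ⟨u, ⟨_, hd⟩, rfl⟩ := he
    obtain ⟨u', ⟨_, hd'⟩, heq⟩ := he'
    rw [Sym2.eq_iff] at heq
    rcases heq with ⟨h1, _⟩ | ⟨h1, h2⟩
    · exact hne h1.symm
    · rw [h1] at hd'; rw [← h2] at hd; omega
  have hTcard : r * IF.card ≤ T.card := by
    rw [hT, Finset.card_biUnion hdisj]
    calc r * IF.card = ∑ _v ∈ IF, r := by rw [Finset.sum_const, smul_eq_mul, mul_comm]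
      _ ≤ ∑ v ∈ IF, ((childF v).image (fun u => s(v, u))).card := by
          apply Finset.sum_le_sum
          intro v _
          have hinj : Set.InjOn (fun u => s(v, u)) (childF v) := by
            intro u _ u' _ h
            simp only [Sym2.eq_iff] at h
            rcases h with ⟨_, h⟩ | ⟨h1, h2⟩
            · exact h
            · exact h2.trans h1
          rw [Finset.card_image_of_injOn hinj]
          have := hchild v
          rwa [Set.ncard_eq_toFinset_card _ (hchildfin v)] at this
  have hsub : T ⊆ hESfin.toFinset ∪ hC.1.toFinset := by
    intro e he
    simp only [hT, Finset.mem_biUnion, Finset.mem_image, hchildF, hIF,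
      Set.Finite.mem_toFinset, Set.mem_setOf_eq] at he
    obtain ⟨v, hvI, u, ⟨hadj, _⟩, rfl⟩ := he
    by_cases hu : u ∈ I
    · apply Finset.mem_union_left
      rw [Set.Finite.mem_toFinset]
      refine ⟨G.mem_edgeSet.2 hadj, ?_⟩
      intro z hz
      rw [Sym2.mem_iff] at hz
      rcases hz with rfl | rfl
      · exact hvI
      · exact hu
    · exact Finset.mem_union_right _
        (by rw [Set.Finite.mem_toFinset]; exact h_leave v hvI u hadj hu)
  have hTle : T.card ≤ ES.ncard + n := by
    calc T.card ≤ (hESfin.toFinset ∪ hC.1.toFinset).card := Finset.card_le_card hsub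
      _ ≤ hESfin.toFinset.card + hC.1.toFinset.card := Finset.card_union_le _ _
      _ = ES.ncard + n := by
          rw [← Set.ncard_eq_toFinset_card _ hESfin, ← Set.ncard_eq_toFinset_card _ hC.1, hcard]
  have hIFcard : IF.card = I.ncard := (Set.ncard_eq_toFinset_card _ hIfin).symm
  -- assemble the numeric inequalities
  have key1 : r * I.ncard ≤ ES.ncard + n := by
    rw [← hIFcard]; exact le_trans hTcard hTle
  have key2 : ES.ncard + 1 = I.ncard := by rw [hm, hk]; exact hcardeq
  have c1 : (r : ℚ) * I.ncard ≤ (ES.ncard : ℚ) + n := by exact_mod_cast key1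
  have c2 : (ES.ncard : ℚ) + 1 = I.ncard := by exact_mod_cast key2
  have hr' : (2 : ℚ) ≤ r := by exact_mod_cast hr
  have hrpos : (0 : ℚ) < (r : ℚ) - 1 := by linarith
  constructor
  · rw [le_div_iff₀ hrpos]
    nlinarith [c1, c2]
  · rw [le_div_iff₀ hrpos]
    nlinarith [c1, c2]
end

section
/- Let d ≥ 2 and let T_d be the d-ary tree with root x₀. Then |F^n_{r,T_d}(x₀)| = 0 for n < d, and for all n ≥ d: |F^n_{r,T_d}(x₀)| = a_n − Σ_{m₁+⋯+m_d = n, mᵢ ≥ 1} a_{m₁}⋯a_{m_d}, where a_m = |F^m_{T_d}(x₀)| and F^n_{r,T_d}(x₀) is the set of rooted contours of T_d of size n. -/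
open SimpleGraph

section Aux
variable {d : ℕ}

def GoodS (S : Finset (List (Fin d))) : Prop :=
  [] ∈ S ∧ ∀ x ∈ S, x ≠ [] → x.tail ∈ S

lemma GoodS.cons_mem {S : Finset (List (Fin d))} (hS : GoodS S) {a : Fin d} {l : List (Fin d)}
    (h : a :: l ∈ S) : l ∈ S := by
  simpa using hS.2 _ h (by simp)

lemma GoodS.suffix_mem {S : Finset (List (Fin d))} (hS : GoodS S) {l m : List (Fin d)}
    (h : l <:+ m) (hm : m ∈ S) : l ∈ S := by
  obtain ⟨t, rfl⟩ := h
  induction t with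
  | nil => simpa using hm
  | cons a t ih => exact ih (hS.cons_mem hm)

lemma sym2_cons_eq {l l' : List (Fin d)} {a a' : Fin d} :
    s(l, a :: l) = s(l', a' :: l') ↔ l = l' ∧ a = a' := by
  constructor
  · intro h
    rw [Sym2.eq_iff] at h
    rcases h with ⟨h1, h2⟩ | ⟨h1, h2⟩
    · exact ⟨h1, by injection h2 with h3 h4⟩
    · subst h2; apply_fun List.length at h1; simp at h1; omega
  · rintro ⟨rfl, rfl⟩; rfl


instance : DecidablePred (GoodS (d := d)) := fun S => by
  unfold GoodS; infer_instance

def bndF (S : Finset (List (Fin d))) : Finset (Sym2 (List (Fin d))) :=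
  ((S ×ˢ (Finset.univ : Finset (Fin d))).filter (fun p => p.2 :: p.1 ∉ S)).image
    (fun p => s(p.1, p.2 :: p.1))

lemma mem_bndF {S : Finset (List (Fin d))} {e : Sym2 (List (Fin d))} :
    e ∈ bndF S ↔ ∃ l a, l ∈ S ∧ a :: l ∉ S ∧ e = s(l, a :: l) := by
  simp only [bndF, Finset.mem_image, Finset.mem_filter, Finset.mem_product, Finset.mem_univ,
    true_and, and_true, Prod.exists]
  constructor
  · rintro ⟨l, a, ⟨hl, hnl⟩, rfl⟩; exact ⟨l, a, hl, hnl, rfl⟩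
  · rintro ⟨l, a, hl, hnl, rfl⟩; exact ⟨l, a, ⟨hl, hnl⟩, rfl⟩

/-- If all boundary edges of `S` are deleted, a walk starting in `S` stays in `S`. -/
lemma mem_of_reachable {S : Finset (List (Fin d))} (hS : GoodS S) {C : Set (Sym2 (List (Fin d)))}
    (hC : ↑(bndF S) ⊆ C) {u v : List (Fin d)}
    (h : ((daryTree d).deleteEdges C).Reachable u v) (hu : u ∈ S) : v ∈ S := by
  obtain ⟨p⟩ := h
  induction p with
  | nil => exact hu
  | @cons u u' v h q ih =>
    apply ih
    rw [SimpleGraph.deleteEdges_adj] at h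
    obtain ⟨hadj, hne⟩ := h
    rcases hadj with ⟨a, rfl⟩ | ⟨a, rfl⟩
    · by_contra hu'
      exact hne (hC (mem_bndF.mpr ⟨u, a, hu, hu', rfl⟩))
    · exact hS.cons_mem hu

/-- If only boundary edges of `S` are deleted, every vertex of `S` is reachable
from the root. -/
lemma reachable_root {S : Finset (List (Fin d))} (hS : GoodS S) {C : Set (Sym2 (List (Fin d)))}
    (hC : C ⊆ ↑(bndF S)) {x : List (Fin d)} (hx : x ∈ S) :
    ((daryTree d).deleteEdges C).Reachable [] x := by
  induction x with
  | nil => exact Reachable.refl _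
  | cons a l ih =>
    refine (ih (hS.cons_mem hx)).trans (Adj.reachable ?_)
    rw [SimpleGraph.deleteEdges_adj]
    refine ⟨Or.inl ⟨a, rfl⟩, fun hmem => ?_⟩
    obtain ⟨l', a', _, hnotmem, heq⟩ := mem_bndF.mp (hC hmem)
    obtain ⟨rfl, rfl⟩ := sym2_cons_eq.mp heq
    exact hnotmem hx

/-- If only boundary edges of `S` are deleted, every descendant of a vertex outside `S`
is reachable from it. -/
lemma reachable_append {S : Finset (List (Fin d))} (hS : GoodS S) {C : Set (Sym2 (List (Fin d)))}
    (hC : C ⊆ ↑(bndF S)) {x : List (Fin d)} (hx : x ∉ S) (w : List (Fin d)) :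
    ((daryTree d).deleteEdges C).Reachable x (w ++ x) := by
  induction w with
  | nil => exact Reachable.refl _
  | cons a w ih =>
    refine ih.trans (Adj.reachable ?_)
    rw [SimpleGraph.deleteEdges_adj]
    refine ⟨Or.inl ⟨a, rfl⟩, fun hmem => ?_⟩
    obtain ⟨l', a', hmem', hnotmem, heq⟩ := mem_bndF.mp (hC hmem)
    obtain ⟨rfl, rfl⟩ := sym2_cons_eq.mp heq
    exact hx (hS.suffix_mem (List.suffix_append w x) hmem')

/-- The component of a vertex outside `S` is infinite. -/
lemma supp_infinite_of_not_mem (hd : 0 < d) {S : Finset (List (Fin d))} (hS : GoodS S)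
    {C : Set (Sym2 (List (Fin d)))} (hC : C ⊆ ↑(bndF S)) {x : List (Fin d)} (hx : x ∉ S) :
    (((daryTree d).deleteEdges C).connectedComponentMk x).supp.Infinite := by
  apply Set.infinite_of_injective_forall_mem
    (f := fun k : ℕ => List.replicate k (⟨0, hd⟩ : Fin d) ++ x)
  · intro k₁ k₂ h
    apply_fun List.length at h
    simpa using h
  · intro k
    rw [ConnectedComponent.mem_supp_iff]
    exact ConnectedComponent.sound (reachable_append hS hC hx _).symm

/-- The component of the root in `G \ ∂S` is exactly `S`. -/
lemma supp_root_eq {S : Finset (List (Fin d))} (hS : GoodS S) :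
    (((daryTree d).deleteEdges ↑(bndF S)).connectedComponentMk ([] : List (Fin d))).supp
      = ↑S := by
  ext v
  rw [ConnectedComponent.mem_supp_iff, ConnectedComponent.eq]
  constructor
  · intro h
    exact mem_of_reachable hS (le_refl _) h.symm hS.1
  · intro h
    exact (reachable_root hS (le_refl _) h).symm

/-- In a tree, a walk from `x` to `y` visits every "ancestor" (suffix) of `y`
which is not a suffix of `x`. -/
lemma reachable_suffix {C : Set (Sym2 (List (Fin d)))} {l : List (Fin d)} :
    ∀ {x y : List (Fin d)}, ((daryTree d).deleteEdges C).Walk x y → l <:+ y → ¬ l <:+ x →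
      ((daryTree d).deleteEdges C).Reachable x l := by
  intro x y p
  induction p with
  | nil => intro hly hlx; exact absurd hly hlx
  | @cons u u' v h q ih =>
    intro hly hlx
    by_cases hl' : l <:+ u'
    · have hadj := h
      rw [SimpleGraph.deleteEdges_adj] at hadj
      rcases hadj.1 with ⟨a, hu'⟩ | ⟨a, hu⟩
      · subst hu'
        rcases List.suffix_cons_iff.mp hl' with rfl | hlu
        · exact h.reachable
        · exact absurd hlu hlx
      · subst hu
        exact absurd (hl'.trans (List.suffix_cons a u')) hlx
    · exact (h.reachable).trans (ih hly hl')


lemma deleteEdges_mono' {V : Type*} (G : SimpleGraph V) {C C' : Set (Sym2 V)} (h : C' ⊆ C) :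
    G.deleteEdges C ≤ G.deleteEdges C' := by
  intro a b hab
  rw [SimpleGraph.deleteEdges_adj] at hab ⊢
  exact ⟨hab.1, fun hm => hab.2 (h hm)⟩

lemma isContour_bnd (hd : 0 < d) {S : Finset (List (Fin d))} (hS : GoodS S) :
    IsContour (daryTree d) ↑(bndF S) := by
  refine ⟨(bndF S).finite_toSet, ?_, ?_, ?_⟩
  · -- edges
    intro e he
    obtain ⟨l, a, _, _, rfl⟩ := mem_bndF.mp he
    exact (SimpleGraph.mem_edgeSet _).mpr (Or.inl ⟨a, rfl⟩)
  · -- unique finite component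
    refine ⟨((daryTree d).deleteEdges ↑(bndF S)).connectedComponentMk [], ?_, ?_⟩
    · show (((daryTree d).deleteEdges ↑(bndF S)).connectedComponentMk
          ([] : List (Fin d))).supp.Finite
      rw [supp_root_eq hS]; exact S.finite_toSet
    · intro K hK
      induction K using ConnectedComponent.ind with
      | _ x =>
        by_cases hx : x ∈ S
        · exact ConnectedComponent.sound (reachable_root hS (le_refl _) hx).symm
        · exact absurd hK (supp_infinite_of_not_mem hd hS (le_refl _) hx)
  · -- minimality
    intro e he K hK
    obtain ⟨l₀, a₀, hl₀, hnl₀, rfl⟩ := mem_bndF.mp he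
    have hC' : (↑(bndF S) \ {s(l₀, a₀ :: l₀)} : Set (Sym2 (List (Fin d)))) ⊆ ↑(bndF S) :=
      Set.diff_subset
    obtain ⟨x, hxK⟩ : ∃ x, ((daryTree d).deleteEdges
        (↑(bndF S) \ {s(l₀, a₀ :: l₀)})).connectedComponentMk x = K := K.exists_rep
    by_cases hsub : ∀ y ∈ K.supp, y ∈ S
    · -- the component contains S and also the outside endpoint of e : contradiction
      have hx : x ∈ K.supp := by rw [ConnectedComponent.mem_supp_iff, hxK]
      have hxS : x ∈ S := hsub x hx
      have hl₀K : l₀ ∈ K.supp := by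
        rw [ConnectedComponent.mem_supp_iff, ← hxK]
        exact ConnectedComponent.sound
          ((reachable_root hS hC' hl₀).symm.trans (reachable_root hS hC' hxS))
      have hadj : ((daryTree d).deleteEdges
          (↑(bndF S) \ {s(l₀, a₀ :: l₀)} : Set (Sym2 (List (Fin d))))).Adj l₀ (a₀ :: l₀) := by
        rw [SimpleGraph.deleteEdges_adj]
        exact ⟨Or.inl ⟨a₀, rfl⟩, by simp⟩
      have hmem : (a₀ :: l₀) ∈ K.supp := by
        rw [ConnectedComponent.mem_supp_iff]
        rw [ConnectedComponent.mem_supp_iff] at hl₀K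
        rw [← hl₀K]
        exact ConnectedComponent.sound hadj.reachable.symm
      exact hnl₀ (hsub _ hmem)
    · push_neg at hsub
      obtain ⟨y, hy, hyS⟩ := hsub
      rw [ConnectedComponent.mem_supp_iff] at hy
      rw [← hy] at hK
      exact (supp_infinite_of_not_mem hd hS hC' hyS) hK

lemma contour_eq_bnd {C : Set (Sym2 (List (Fin d)))} (hC : IsContour (daryTree d) C)
    (hfin : (((daryTree d).deleteEdges C).connectedComponentMk ([] : List (Fin d))).supp.Finite) :
    ∃ S : Finset (List (Fin d)), GoodS S ∧ C = ↑(bndF S) := by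
  set S := hfin.toFinset with hSdef
  have hsupp : (↑S : Set (List (Fin d)))
      = (((daryTree d).deleteEdges C).connectedComponentMk ([] : List (Fin d))).supp :=
    hfin.coe_toFinset
  have hmemS : ∀ v, v ∈ S ↔ ((daryTree d).deleteEdges C).Reachable [] v := by
    intro v
    rw [← Finset.mem_coe, hsupp, ConnectedComponent.mem_supp_iff, ConnectedComponent.eq]
    exact ⟨Reachable.symm, Reachable.symm⟩
  have hS : GoodS S := by
    constructor
    · rw [hmemS]
    · intro x hx hne
      obtain ⟨a, l, rfl⟩ : ∃ a l, x = a :: l := by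
        cases x with
        | nil => exact absurd rfl hne
        | cons a l => exact ⟨a, l, rfl⟩
      rw [hmemS] at hx ⊢
      by_cases hl : l = []
      · subst hl; exact Reachable.refl _
      · obtain ⟨p⟩ := hx
        exact reachable_suffix p (List.suffix_cons a l) (by simp [List.suffix_nil, hl])
  have hbndsub : ↑(bndF S) ⊆ C := by
    intro e he
    obtain ⟨l, a, hl, hnl, rfl⟩ := mem_bndF.mp he
    by_contra hmem
    apply hnl
    rw [hmemS] at hl ⊢
    refine hl.trans (Adj.reachable ?_)
    rw [SimpleGraph.deleteEdges_adj]
    exact ⟨Or.inl ⟨a, rfl⟩, hmem⟩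
  refine ⟨S, hS, ?_⟩
  apply Set.Subset.antisymm _ hbndsub
  intro e he
  by_contra hnotbnd
  apply hC.2.2.2 e he (((daryTree d).deleteEdges (C \ {e})).connectedComponentMk [])
  have hsub' : ↑(bndF S) ⊆ C \ {e} := fun f hf =>
    ⟨hbndsub hf, fun hfe => hnotbnd (hfe ▸ hf)⟩
  have hle : (daryTree d).deleteEdges C ≤ (daryTree d).deleteEdges (C \ {e}) :=
    deleteEdges_mono' _ Set.diff_subset
  have : (((daryTree d).deleteEdges (C \ {e})).connectedComponentMk
      ([] : List (Fin d))).supp = ↑S := by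
    apply Set.Subset.antisymm
    · intro v hv
      rw [ConnectedComponent.mem_supp_iff, ConnectedComponent.eq] at hv
      exact mem_of_reachable hS hsub' hv.symm hS.1
    · intro v hv
      rw [ConnectedComponent.mem_supp_iff, ConnectedComponent.eq]
      rw [Finset.mem_coe, hmemS] at hv
      exact (hv.mono hle).symm
  rw [this]
  exact S.finite_toSet

/-- All lists over `Fin d` of length at most `k`. -/
def listsLen (d : ℕ) : ℕ → Finset (List (Fin d))
  | 0 => {[]}
  | k + 1 => {[]} ∪ ((Finset.univ : Finset (Fin d)) ×ˢ listsLen d k).image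
      (fun p => p.1 :: p.2)

lemma mem_listsLen {k : ℕ} {l : List (Fin d)} : l ∈ listsLen d k ↔ l.length ≤ k := by
  induction k generalizing l with
  | zero => simp [listsLen, List.length_eq_zero_iff]
  | succ k ih =>
    cases l with
    | nil => simp [listsLen]
    | cons a l =>
      simp only [listsLen, Finset.mem_union, Finset.mem_singleton, Finset.mem_image,
        Finset.mem_product, Finset.mem_univ, true_and, Prod.exists]
      constructor
      · rintro (h | ⟨b, m, hm, heq⟩)
        · simp at h
        · injection heq with h1 h2; subst h1; subst h2
          simpa using ih.mp hm
      · intro h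
        exact Or.inr ⟨a, l, ih.mpr (by simpa using h), rfl⟩

lemma length_lt_card {S : Finset (List (Fin d))} (hS : GoodS S) {x : List (Fin d)}
    (hx : x ∈ S) : x.length < S.card := by
  have : (Finset.range (x.length + 1)).card ≤ S.card := by
    apply Finset.card_le_card_of_injOn (fun k => x.drop k)
    · intro k hk
      exact hS.suffix_mem (List.drop_suffix k x) hx
    · intro k hk k' hk' h
      simp only [Finset.coe_range, Set.mem_Iio] at hk hk'
      apply_fun List.length at h
      simp only [List.length_drop] at h
      omega
  simpa using this

/-- Cardinality of the boundary: `|bndF S| = d * |S| - (|S| - 1)`. -/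
lemma card_bndF {S : Finset (List (Fin d))} (hS : [] ∈ S)
    (hcl : ∀ (a : Fin d) (l : List (Fin d)), a :: l ∈ S → l ∈ S) :
    (bndF S).card + (S.card - 1) = d * S.card := by
  classical
  have hinj : Set.InjOn (fun p : List (Fin d) × Fin d => s(p.1, p.2 :: p.1))
      ↑((S ×ˢ (Finset.univ : Finset (Fin d))).filter (fun p => p.2 :: p.1 ∉ S)) := by
    intro p _ q _ h
    obtain ⟨h1, h2⟩ := sym2_cons_eq.mp h
    exact Prod.ext h1 h2
  have hcard : (bndF S).card =
      ((S ×ˢ (Finset.univ : Finset (Fin d))).filter (fun p => p.2 :: p.1 ∉ S)).card :=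
    Finset.card_image_of_injOn hinj
  have hsplit := Finset.card_filter_add_card_filter_not
    (s := S ×ˢ (Finset.univ : Finset (Fin d))) (p := fun p => p.2 :: p.1 ∈ S)
  have hprod : (S ×ˢ (Finset.univ : Finset (Fin d))).card = S.card * d := by
    simp [Finset.card_product]
  -- pairs with child in S ↔ S.erase []
  have hbij : ((S ×ˢ (Finset.univ : Finset (Fin d))).filter (fun p => p.2 :: p.1 ∈ S)).card
      = (S.erase []).card := by
    apply Finset.card_bij (fun p _ => p.2 :: p.1)
    · intro p hp
      simp only [Finset.mem_filter] at hp
      simp [Finset.mem_erase, hp.2]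
    · intro p hp q hq h
      simp only [Finset.mem_filter, Finset.mem_product] at hp hq
      injection h with h1 h2
      exact Prod.ext h2 h1
    · intro x hx
      simp only [Finset.mem_erase] at hx
      obtain ⟨hne, hmem⟩ := hx
      obtain ⟨a, l, rfl⟩ : ∃ a l, x = a :: l := by
        cases x with
        | nil => exact absurd rfl hne
        | cons a l => exact ⟨a, l, rfl⟩
      exact ⟨(l, a), Finset.mem_filter.mpr
        ⟨Finset.mem_product.mpr ⟨hcl a l hmem, Finset.mem_univ a⟩, hmem⟩, rfl⟩
  have herase : (S.erase []).card = S.card - 1 := by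
    rw [Finset.card_erase_of_mem hS]
  have hneg : ((S ×ˢ (Finset.univ : Finset (Fin d))).filter (fun p => ¬ p.2 :: p.1 ∈ S))
      = ((S ×ˢ (Finset.univ : Finset (Fin d))).filter (fun p => p.2 :: p.1 ∉ S)) := rfl
  rw [hbij, herase, hneg] at hsplit
  rw [hprod, Nat.mul_comm S.card d] at hsplit
  rw [hcard]
  omega


/-- The finset of good sets with boundary of size `n`. -/
def AF (d n : ℕ) : Finset (Finset (List (Fin d))) :=
  (listsLen d n).powerset.filter (fun S => GoodS S ∧ (bndF S).card = n)

lemma mem_AF (hd : 2 ≤ d) {n : ℕ} {S : Finset (List (Fin d))} :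
    S ∈ AF d n ↔ GoodS S ∧ (bndF S).card = n := by
  rw [AF, Finset.mem_filter, and_iff_right_iff_imp]
  rintro ⟨hS, hcard⟩
  rw [Finset.mem_powerset]
  intro x hx
  rw [mem_listsLen]
  have h1 := length_lt_card hS hx
  have h2 := card_bndF hS.1 (fun a l h => hS.cons_mem h)
  have h3 : 1 ≤ S.card := Finset.card_pos.mpr ⟨[], hS.1⟩
  have h4 : 2 * S.card ≤ d * S.card := Nat.mul_le_mul_right _ hd
  omega

lemma card_bnd_ge (hd : 2 ≤ d) {S : Finset (List (Fin d))} (hS : GoodS S) :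
    d ≤ (bndF S).card := by
  have h2 := card_bndF hS.1 (fun a l h => hS.cons_mem h)
  obtain ⟨c', hc'⟩ : ∃ c', S.card = c' + 1 :=
    ⟨S.card - 1, by have := Finset.card_pos.mpr ⟨([] : List (Fin d)), hS.1⟩; omega⟩
  rw [hc'] at h2
  have h5 : d * (c' + 1) = d * c' + d := by ring
  have h6 : c' ≤ d * c' := Nat.le_mul_of_pos_left c' (by omega)
  omega

lemma bnd_injOn {S₁ S₂ : Finset (List (Fin d))} (h1 : GoodS S₁) (h2 : GoodS S₂)
    (h : (↑(bndF S₁) : Set (Sym2 (List (Fin d)))) = ↑(bndF S₂)) : S₁ = S₂ := by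
  have e1 := supp_root_eq h1
  have e2 := supp_root_eq h2
  rw [h] at e1
  rw [e2] at e1
  exact Finset.coe_injective e1.symm

lemma contours_eq_image (hd : 2 ≤ d) (n : ℕ) :
    contours (daryTree d) ([] : List (Fin d)) n
      = (fun S => (↑(bndF S) : Set (Sym2 (List (Fin d))))) '' (↑(AF d n) : Set (Finset (List (Fin d)))) := by
  ext C
  constructor
  · rintro ⟨hC, hcard, hfin⟩
    obtain ⟨S, hS, rfl⟩ := contour_eq_bnd hC hfin
    refine ⟨S, ?_, rfl⟩
    rw [Finset.mem_coe, mem_AF hd]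
    rw [Set.ncard_coe_finset] at hcard
    exact ⟨hS, hcard⟩
  · rintro ⟨S, hS, rfl⟩
    rw [Finset.mem_coe, mem_AF hd] at hS
    refine ⟨isContour_bnd (by omega) hS.1, ?_, ?_⟩
    · rw [Set.ncard_coe_finset]; exact hS.2
    · rw [supp_root_eq hS.1]; exact S.finite_toSet

lemma ncard_image_AF (hd : 2 ≤ d) {n : ℕ} {B : Finset (Finset (List (Fin d)))}
    (hB : B ⊆ AF d n) :
    ((fun S => (↑(bndF S) : Set (Sym2 (List (Fin d))))) '' (↑B : Set (Finset (List (Fin d))))).ncard = B.card := by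
  rw [Set.ncard_image_of_injOn, Set.ncard_coe_finset]
  intro S₁ hS₁ S₂ hS₂ h
  exact bnd_injOn ((mem_AF hd).mp (hB hS₁)).1 ((mem_AF hd).mp (hB hS₂)).1 h


/-- Glue `d` good sets into one below a new root. -/
def glueF (f : Fin d → Finset (List (Fin d))) : Finset (List (Fin d)) :=
  {([] : List (Fin d))} ∪ Finset.univ.biUnion (fun i => (f i).image (fun l => l ++ [i]))

/-- The `i`-th section of a good set. -/
noncomputable def sectF (S : Finset (List (Fin d))) (i : Fin d) : Finset (List (Fin d)) :=
  S.preimage (fun l => l ++ [i]) ((List.append_left_injective [i]).injOn)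

lemma mem_glueF {f : Fin d → Finset (List (Fin d))} {x : List (Fin d)} :
    x ∈ glueF f ↔ x = [] ∨ ∃ i y, y ∈ f i ∧ x = y ++ [i] := by
  simp only [glueF, Finset.mem_union, Finset.mem_singleton, Finset.mem_biUnion,
    Finset.mem_image, Finset.mem_univ, true_and]
  constructor
  · rintro (rfl | ⟨i, y, hy, rfl⟩)
    · exact Or.inl rfl
    · exact Or.inr ⟨i, y, hy, rfl⟩
  · rintro (rfl | ⟨i, y, hy, rfl⟩)
    · exact Or.inl rfl
    · exact Or.inr ⟨i, y, hy, rfl⟩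

lemma mem_sectF {S : Finset (List (Fin d))} {i : Fin d} {m : List (Fin d)} :
    m ∈ sectF S i ↔ m ++ [i] ∈ S := by
  simp [sectF, Finset.mem_preimage]

lemma append_singleton_inj {y z : List (Fin d)} {i j : Fin d}
    (h : y ++ [i] = z ++ [j]) : y = z ∧ i = j := by
  obtain ⟨h1, h2⟩ := List.append_inj' h rfl
  injection h2 with h3
  exact ⟨h1, h3⟩

lemma goodS_sectF {S : Finset (List (Fin d))} (hS : GoodS S) {i : Fin d} (hi : [i] ∈ S) :
    GoodS (sectF S i) := by
  constructor
  · rw [mem_sectF]; simpa using hi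
  · intro x hx hne
    obtain ⟨a, l, rfl⟩ : ∃ a l, x = a :: l := by
      cases x with
      | nil => exact absurd rfl hne
      | cons a l => exact ⟨a, l, rfl⟩
    rw [mem_sectF] at hx ⊢
    exact hS.cons_mem (by simpa using hx)

lemma goodS_glueF {f : Fin d → Finset (List (Fin d))} (hf : ∀ i, GoodS (f i)) :
    GoodS (glueF f) := by
  constructor
  · rw [mem_glueF]; exact Or.inl rfl
  · intro x hx hne
    obtain ⟨a, l, rfl⟩ : ∃ a l, x = a :: l := by
      cases x with
      | nil => exact absurd rfl hne
      | cons a l => exact ⟨a, l, rfl⟩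
    rw [mem_glueF] at hx
    rcases hx with h | ⟨i, y, hy, hay⟩
    · exact absurd h hne
    · show l ∈ glueF f
      rw [mem_glueF]
      cases y with
      | nil =>
        simp only [List.nil_append] at hay
        injection hay with h1 h2
        exact Or.inl h2
      | cons c y' =>
        rw [List.cons_append] at hay
        injection hay with h1 h2
        subst h1
        exact Or.inr ⟨i, y', (hf i).cons_mem hy, h2⟩

lemma sectF_glueF {f : Fin d → Finset (List (Fin d))} (i : Fin d) :
    sectF (glueF f) i = f i := by
  ext m
  rw [mem_sectF, mem_glueF]
  constructor
  · rintro (h | ⟨j, y, hy, hm⟩)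
    · exact absurd h (by simp)
    · obtain ⟨rfl, rfl⟩ := append_singleton_inj hm
      exact hy
  · intro h
    exact Or.inr ⟨i, m, h, rfl⟩

lemma glueF_sectF {S : Finset (List (Fin d))} (hS : GoodS S) :
    glueF (sectF S) = S := by
  ext x
  rw [mem_glueF]
  constructor
  · rintro (rfl | ⟨i, y, hy, rfl⟩)
    · exact hS.1
    · exact mem_sectF.mp hy
  · intro hx
    rcases List.eq_nil_or_concat' x with rfl | ⟨y, i, rfl⟩
    · exact Or.inl rfl
    · exact Or.inr ⟨i, y, mem_sectF.mpr hx, rfl⟩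

lemma card_glueF {f : Fin d → Finset (List (Fin d))} :
    (glueF f).card = 1 + ∑ i, (f i).card := by
  rw [glueF, Finset.card_union_of_disjoint, Finset.card_biUnion]
  · simp only [Finset.card_singleton]
    congr 1
    exact Finset.sum_congr rfl
      (fun i _ => Finset.card_image_of_injective _ (List.append_left_injective [i]))
  · intro i _ j _ hij
    simp only [Finset.disjoint_left, Finset.mem_image]
    rintro x ⟨y, hy, rfl⟩ ⟨z, hz, hzx⟩
    exact hij (append_singleton_inj hzx.symm).2
  · simp only [Finset.disjoint_left, Finset.mem_singleton, Finset.mem_biUnion]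
    rintro x rfl ⟨i, _, hmem⟩
    simp only [Finset.mem_image] at hmem
    obtain ⟨y, _, hy⟩ := hmem
    exact absurd hy (by simp)

lemma card_bndF' (hd : 1 ≤ d) {S : Finset (List (Fin d))} (hS : GoodS S) :
    (bndF S).card = (d - 1) * S.card + 1 := by
  have h2 := card_bndF hS.1 (fun a l h => hS.cons_mem h)
  have h3 : 1 ≤ S.card := Finset.card_pos.mpr ⟨[], hS.1⟩
  obtain ⟨d', rfl⟩ : ∃ d', d = d' + 1 := ⟨d - 1, by omega⟩
  simp only [Nat.add_sub_cancel]
  have h5 : (d' + 1) * S.card = d' * S.card + S.card := by ring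
  omega

lemma card_bndF_glueF (hd : 1 ≤ d) {f : Fin d → Finset (List (Fin d))}
    (hf : ∀ i, GoodS (f i)) :
    (bndF (glueF f)).card = ∑ i, (bndF (f i)).card := by
  rw [card_bndF' hd (goodS_glueF hf), card_glueF]
  have : ∀ i ∈ (Finset.univ : Finset (Fin d)), (bndF (f i)).card = (d - 1) * (f i).card + 1 :=
    fun i _ => card_bndF' hd (hf i)
  rw [Finset.sum_congr rfl this, Finset.sum_add_distrib, ← Finset.mul_sum]
  simp only [Finset.sum_const, Finset.card_univ, Fintype.card_fin, smul_eq_mul, mul_one]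
  have : d - 1 + 1 = d := by omega
  rw [Nat.mul_add, Nat.mul_one]
  omega


def RF (d n : ℕ) : Finset (Finset (List (Fin d))) :=
  (AF d n).filter (fun S => ∃ i : Fin d, [i] ∉ S)

def NF (d n : ℕ) : Finset (Finset (List (Fin d))) :=
  (AF d n).filter (fun S => ¬ ∃ i : Fin d, [i] ∉ S)

lemma AF_card_split (d n : ℕ) : (AF d n).card = (RF d n).card + (NF d n).card :=
  (Finset.card_filter_add_card_filter_not _).symm

lemma exists_root_edge {S : Finset (List (Fin d))} (hS : GoodS S) :
    (∃ e ∈ (↑(bndF S) : Set (Sym2 (List (Fin d)))), ([] : List (Fin d)) ∈ e)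
      ↔ ∃ i : Fin d, [i] ∉ S := by
  constructor
  · rintro ⟨e, he, hroot⟩
    obtain ⟨l, a, hl, hnl, rfl⟩ := mem_bndF.mp (Finset.mem_coe.mp he)
    rw [Sym2.mem_iff] at hroot
    rcases hroot with rfl | h
    · exact ⟨a, hnl⟩
    · exact absurd h.symm (by simp)
  · rintro ⟨i, hi⟩
    refine ⟨s(([] : List (Fin d)), [i]), ?_, ?_⟩
    · exact Finset.mem_coe.mpr (mem_bndF.mpr ⟨[], i, hS.1, hi, rfl⟩)
    · rw [Sym2.mem_iff]; exact Or.inl rfl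

lemma rooted_eq_image (hd : 2 ≤ d) (n : ℕ) :
    rootedContours (daryTree d) ([] : List (Fin d)) n
      = (fun S => (↑(bndF S) : Set (Sym2 (List (Fin d))))) ''
          (↑(RF d n) : Set (Finset (List (Fin d)))) := by
  ext C
  constructor
  · rintro ⟨hC, hedge⟩
    rw [contours_eq_image hd n] at hC
    obtain ⟨S, hS, rfl⟩ := hC
    rw [Finset.mem_coe, mem_AF hd] at hS
    refine ⟨S, ?_, rfl⟩
    rw [Finset.mem_coe, RF, Finset.mem_filter]
    exact ⟨(mem_AF hd).mpr hS, (exists_root_edge hS.1).mp hedge⟩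
  · rintro ⟨S, hS, rfl⟩
    rw [Finset.mem_coe, RF, Finset.mem_filter] at hS
    constructor
    · rw [contours_eq_image hd n]
      exact ⟨S, hS.1, rfl⟩
    · exact (exists_root_edge ((mem_AF hd).mp hS.1).1).mpr hS.2

lemma NF_card_eq (hd : 2 ≤ d) (n : ℕ) :
    (NF d n).card = ∑ m ∈ Finset.Nat.antidiagonalTuple d n, ∏ i, (AF d (m i)).card := by
  classical
  have hdd : 1 ≤ d := by omega
  have hdisj : ∀ m₁ ∈ Finset.Nat.antidiagonalTuple d n,
      ∀ m₂ ∈ Finset.Nat.antidiagonalTuple d n, m₁ ≠ m₂ →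
      Disjoint (Fintype.piFinset (fun i => AF d (m₁ i)))
        (Fintype.piFinset (fun i => AF d (m₂ i))) := by
    intro m₁ _ m₂ _ hne
    rw [Finset.disjoint_left]
    intro f hf1 hf2
    rw [Fintype.mem_piFinset] at hf1 hf2
    apply hne
    funext i
    have e1 := ((mem_AF hd).mp (hf1 i)).2
    have e2 := ((mem_AF hd).mp (hf2 i)).2
    omega
  have hpi : ∀ m ∈ Finset.Nat.antidiagonalTuple d n,
      ∏ i, (AF d (m i)).card = (Fintype.piFinset fun i => AF d (m i)).card :=
    fun m _ => (Fintype.card_piFinset _).symm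
  rw [Finset.sum_congr rfl hpi, ← Finset.card_biUnion hdisj]
  apply Finset.card_bij (fun S _ => sectF S)
  · -- maps into
    intro S hS
    rw [NF, Finset.mem_filter] at hS
    obtain ⟨hAF, hall⟩ := hS
    push_neg at hall
    obtain ⟨hGood, hcard⟩ := (mem_AF hd).mp hAF
    have hgoods : ∀ i, GoodS (sectF S i) := fun i => goodS_sectF hGood (hall i)
    have hsum : ∑ i, (bndF (sectF S i)).card = n := by
      rw [← card_bndF_glueF hdd hgoods, glueF_sectF hGood]
      exact hcard
    rw [Finset.mem_biUnion]
    refine ⟨fun i => (bndF (sectF S i)).card, ?_, ?_⟩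
    · rw [Finset.Nat.mem_antidiagonalTuple]
      exact hsum
    · rw [Fintype.mem_piFinset]
      intro i
      exact (mem_AF hd).mpr ⟨hgoods i, rfl⟩
  · -- injective
    intro S₁ hS₁ S₂ hS₂ h
    rw [NF, Finset.mem_filter] at hS₁ hS₂
    have g₁ := ((mem_AF hd).mp hS₁.1).1
    have g₂ := ((mem_AF hd).mp hS₂.1).1
    rw [← glueF_sectF g₁, ← glueF_sectF g₂, h]
  · -- surjective
    intro f hf
    rw [Finset.mem_biUnion] at hf
    obtain ⟨m, hm, hfm⟩ := hf
    rw [Fintype.mem_piFinset] at hfm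
    have hgoods : ∀ i, GoodS (f i) := fun i => ((mem_AF hd).mp (hfm i)).1
    refine ⟨glueF f, ?_, funext fun i => sectF_glueF i⟩
    rw [NF, Finset.mem_filter]
    constructor
    · rw [mem_AF hd]
      refine ⟨goodS_glueF hgoods, ?_⟩
      rw [card_bndF_glueF hdd hgoods]
      rw [Finset.Nat.mem_antidiagonalTuple] at hm
      rw [← hm]
      exact Finset.sum_congr rfl (fun i _ => ((mem_AF hd).mp (hfm i)).2)
    · push_neg
      intro i
      rw [mem_glueF]
      exact Or.inr ⟨i, [], (hgoods i).1, rfl⟩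

lemma AF_zero_empty (hd : 2 ≤ d) : AF d 0 = ∅ := by
  rw [Finset.eq_empty_iff_forall_notMem]
  intro S hS
  obtain ⟨hGood, hcard⟩ := (mem_AF hd).mp hS
  have := card_bnd_ge hd hGood
  omega

end Aux

/-- For the `d`-ary tree (`d ≥ 2`) with root `x₀`: there are no rooted
contours of size `n < d`, and for `n ≥ d`,
`|F^n_{r,T_d}(x₀)| = a_n - Σ_{m₁+⋯+m_d = n, mᵢ ≥ 1} a_{m₁} ⋯ a_{m_d}`,
where `a_m = |F^m_{T_d}(x₀)|`. -/
theorem card_rootedContours_daryTree (d : ℕ) (hd : 2 ≤ d)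
    (a : ℕ → ℕ) (ha : ∀ m, a m = (contours (daryTree d) ([] : List (Fin d)) m).ncard)
    (n : ℕ) :
    (n < d → (rootedContours (daryTree d) ([] : List (Fin d)) n).ncard = 0) ∧
    (d ≤ n → (rootedContours (daryTree d) ([] : List (Fin d)) n).ncard =
      a n - ∑ m ∈ (Finset.Nat.antidiagonalTuple d n).filter (fun m => ∀ i, 1 ≤ m i),
        ∏ i, a (m i)) := by
  have ha' : ∀ k, a k = (AF d k).card := by
    intro k
    rw [ha k, contours_eq_image hd k, ncard_image_AF hd (le_refl _)]
  have hrooted : (rootedContours (daryTree d) ([] : List (Fin d)) n).ncard = (RF d n).card := by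
    rw [rooted_eq_image hd n]
    exact ncard_image_AF hd (fun x hx => Finset.mem_of_mem_filter x hx)
  constructor
  · intro hn
    rw [hrooted]
    rw [Finset.card_eq_zero, Finset.eq_empty_iff_forall_notMem]
    intro S hS
    rw [RF, Finset.mem_filter] at hS
    obtain ⟨hGood, hcard⟩ := (mem_AF hd).mp hS.1
    have := card_bnd_ge hd hGood
    omega
  · intro hn
    rw [hrooted]
    have hsum : ∑ m ∈ (Finset.Nat.antidiagonalTuple d n).filter (fun m => ∀ i, 1 ≤ m i),
        ∏ i, a (m i) = ∑ m ∈ Finset.Nat.antidiagonalTuple d n, ∏ i, (AF d (m i)).card := by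
      have hcongr : ∀ m ∈ (Finset.Nat.antidiagonalTuple d n).filter (fun m => ∀ i, 1 ≤ m i),
          ∏ i, a (m i) = ∏ i, (AF d (m i)).card :=
        fun m _ => Finset.prod_congr rfl (fun i _ => ha' (m i))
      rw [Finset.sum_congr rfl hcongr]
      apply Finset.sum_filter_of_ne
      intro m hm hne i
      by_contra hi
      apply hne
      apply Finset.prod_eq_zero (Finset.mem_univ i)
      have : m i = 0 := by omega
      rw [this, AF_zero_empty hd, Finset.card_empty]
    rw [hsum]
    rw [← NF_card_eq hd n]
    rw [ha' n]
    rw [AF_card_split d n]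
    exact (Nat.add_sub_cancel _ _).symm
end

section
/- Let T be a locally finite rooted tree with root x and without leaves. Then there exists n ≥ 1 such that F^n_T(x) is infinite if and only if T has an infinite independent path. -/
open SimpleGraph

open SimpleGraph.Walk

namespace TreeContour

variable {V : Type*} {G : SimpleGraph V} {a u v w p : V}

lemma walk_eq_walk (hG : G.IsAcyclic) {p q : G.Walk u v} (hp : p.IsPath) (hq : q.IsPath) :
    p = q :=
  congrArg Subtype.val (hG.path_unique ⟨p, hp⟩ ⟨q, hq⟩)

lemma dist_lt_of_mem_support {P : G.Walk a u} (h : v ∈ P.support) (hvu : v ≠ u) :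
    G.dist a v < P.length := by
  classical
  have hspec := P.take_spec h
  have hlen : (P.takeUntil v h).length + (P.dropUntil v h).length = P.length := by
    rw [← length_append, hspec]
  have h1 : G.dist a v ≤ (P.takeUntil v h).length := dist_le _
  have h2 : (P.dropUntil v h).length ≠ 0 := by
    intro h0
    exact hvu (Walk.eq_of_length_eq_zero h0)
  omega

lemma concat_isPath {P : G.Walk a u} (hP : P.IsPath) (h : G.Adj u w) (hw : w ∉ P.support) :
    (P.concat h).IsPath := by
  rw [← isPath_reverse_iff, reverse_concat]
  exact IsPath.cons hP.reverse (by rwa [support_reverse, List.mem_reverse]) (h := h.symm)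

lemma adj_dist (hG : G.IsTree) (h : G.Adj u v) (a : V) :
    G.dist a v = G.dist a u + 1 ∨ G.dist a u = G.dist a v + 1 := by
  have hc := hG.isConnected
  have h1 : G.dist a v ≤ G.dist a u + 1 := by
    calc G.dist a v ≤ G.dist a u + G.dist u v := hc.dist_triangle
    _ ≤ G.dist a u + 1 := by
        have : G.dist u v = 1 := (dist_eq_one_iff_adj).2 h
        omega
  have h2 : G.dist a u ≤ G.dist a v + 1 := by
    calc G.dist a u ≤ G.dist a v + G.dist v u := hc.dist_triangle
    _ ≤ G.dist a v + 1 := by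
        have : G.dist v u = 1 := (dist_eq_one_iff_adj).2 h.symm
        omega
  by_contra hcon
  push_neg at hcon
  obtain ⟨hc1, hc2⟩ := hcon
  -- then dist a u = dist a v
  have heq : G.dist a u = G.dist a v := by omega
  obtain ⟨Pu, hPu, hPul⟩ := (hc.exists_path_of_dist a u)
  obtain ⟨Pv, hPv, hPvl⟩ := (hc.exists_path_of_dist a v)
  have hvn : v ∉ Pu.support := by
    intro hmem
    have := dist_lt_of_mem_support hmem h.ne'
    omega
  have : Pu.concat h = Pv := walk_eq_walk hG.IsAcyclic (concat_isPath hPu h hvn) hPv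
  have hl : (Pu.concat h).length = Pv.length := by rw [this]
  rw [length_concat] at hl
  omega

lemma unique_parent (hG : G.IsTree) (hpw : G.Adj p w) (huw : G.Adj u w)
    (hp : G.dist a w = G.dist a p + 1) (hu : G.dist a w = G.dist a u + 1) : p = u := by
  have hc := hG.isConnected
  obtain ⟨Pp, hPp, hPpl⟩ := (hc.exists_path_of_dist a p)
  obtain ⟨Pu, hPu, hPul⟩ := (hc.exists_path_of_dist a u)
  have hwp : w ∉ Pp.support := by
    intro hmem
    have := dist_lt_of_mem_support hmem hpw.ne'
    omega
  have hwu : w ∉ Pu.support := by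
    intro hmem
    have := dist_lt_of_mem_support hmem huw.ne'
    omega
  have heq : Pp.concat hpw = Pu.concat huw :=
    walk_eq_walk hG.IsAcyclic (concat_isPath hPp hpw hwp) (concat_isPath hPu huw hwu)
  have hlen : Pp.length = Pu.length := by omega
  have h1 : (Pp.concat hpw).getVert Pp.length = p := by
    rw [concat_eq_append, getVert_append]
    simp
  have h2 : (Pu.concat huw).getVert Pu.length = u := by
    rw [concat_eq_append, getVert_append]
    simp
  rw [← h1, ← h2, heq, hlen]

lemma dist_step (hG : G.IsTree) (hpw : G.Adj p w) (hwu : G.Adj w u) (hup : u ≠ p)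
    (hw : G.dist a w = G.dist a p + 1) : G.dist a u = G.dist a w + 1 := by
  rcases adj_dist hG hwu a with h | h
  · exact h
  · exact absurd (unique_parent hG hpw hwu.symm hw h) (Ne.symm hup)


lemma exists_other (hlf : ∀ v : V, (G.neighborSet v).Finite)
    (hdeg : ∀ v : V, 2 ≤ (G.neighborSet v).ncard) (v p : V) :
    ∃ u, G.Adj v u ∧ u ≠ p := by
  have h1 : 1 < (G.neighborSet v).ncard := hdeg v
  rw [Set.one_lt_ncard_iff (hlf v)] at h1
  obtain ⟨x, y, hx, hy, hxy⟩ := h1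
  by_cases hxp : x = p
  · exact ⟨y, hy, (hxp ▸ hxy).symm⟩
  · exact ⟨x, hx, hxp⟩

lemma raybuild (hG : G.IsTree) {D : Set (Sym2 V)} {a b : V}
    (hab : (G.deleteEdges D).Adj a b)
    (hext : ∀ p w, (G.deleteEdges D).Adj p w → (G.deleteEdges D).Reachable a p →
      G.dist a w = G.dist a p + 1 → ∃ u, (G.deleteEdges D).Adj w u ∧ u ≠ p) :
    ∃ f : ℕ → V, f 0 = a ∧ (∀ k, (G.deleteEdges D).Adj (f k) (f (k + 1))) ∧
      ∀ k, G.dist a (f k) = k := by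
  classical
  set G' := G.deleteEdges D with hG'
  have hle : G' ≤ G := deleteEdges_le D
  let next : V → V → V := fun p w =>
    if h : ∃ u, G'.Adj w u ∧ u ≠ p then h.choose else w
  let g : ℕ → V × V := fun k => Nat.rec (a, b) (fun _ pw => (pw.2, next pw.1 pw.2)) k
  have hg0 : g 0 = (a, b) := rfl
  have hgs : ∀ k, g (k + 1) = ((g k).2, next (g k).1 (g k).2) := fun k => rfl
  have hinv : ∀ k, (G'.Adj (g k).1 (g k).2 ∧ G.dist a (g k).1 = k ∧
      G.dist a (g k).2 = k + 1) ∧ G'.Reachable a (g k).1 := by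
    intro k
    induction k with
    | zero =>
      refine ⟨⟨hab, by rw [show (g 0).1 = a from rfl]; exact SimpleGraph.dist_self, ?_⟩, by rfl⟩
      exact (dist_eq_one_iff_adj).2 (hle hab)
    | succ k ih =>
      obtain ⟨⟨hadj, hd1, hd2⟩, hreach⟩ := ih
      have hreach2 : G'.Reachable a (g k).2 := hreach.trans hadj.reachable
      have hex := hext (g k).1 (g k).2 hadj hreach (by omega)
      have hnext : next (g k).1 (g k).2 = hex.choose := dif_pos hex
      obtain ⟨hadj2, hne⟩ := hex.choose_spec
      have hd3 := dist_step hG (hle hadj) (hle hadj2) hne (a := a) (by omega)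
      rw [hgs k]
      refine ⟨⟨?_, hd2, ?_⟩, hreach2⟩
      · show G'.Adj (g k).2 (next (g k).1 (g k).2)
        rw [hnext]; exact hadj2
      · show G.dist a (next (g k).1 (g k).2) = k + 1 + 1
        rw [hnext]; omega
  refine ⟨fun k => (g k).1, rfl, fun k => ?_, fun k => (hinv k).1.2.1⟩
  show G'.Adj (g k).1 (g (k+1)).1
  have h2 : (g (k + 1)).1 = (g k).2 := by rw [hgs k]
  rw [h2]
  exact (hinv k).1.1

/-- The edge boundary of a vertex set. -/
def bd (G : SimpleGraph V) (S : Set V) : Set (Sym2 V) :=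
  {e | e ∈ G.edgeSet ∧ ∃ a b, e = s(a, b) ∧ a ∈ S ∧ b ∉ S}

lemma bd_subset (S : Set V) : bd G S ⊆ G.edgeSet := fun _ h => h.1

lemma mem_bd_iff {S : Set V} {a b : V} :
    s(a, b) ∈ bd G S ↔ G.Adj a b ∧ ((a ∈ S ∧ b ∉ S) ∨ (b ∈ S ∧ a ∉ S)) := by
  constructor
  · rintro ⟨he, c, d, hcd, hc, hd⟩
    rw [Sym2.eq_iff] at hcd
    refine ⟨he, ?_⟩
    rcases hcd with ⟨rfl, rfl⟩ | ⟨rfl, rfl⟩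
    · exact Or.inl ⟨hc, hd⟩
    · exact Or.inr ⟨hc, hd⟩
  · rintro ⟨he, ⟨ha, hb⟩ | ⟨hb, ha⟩⟩
    · exact ⟨he, a, b, rfl, ha, hb⟩
    · exact ⟨he, b, a, Sym2.eq_swap, hb, ha⟩

lemma bd_finite (hlf : ∀ v : V, (G.neighborSet v).Finite) {S : Set V} (hS : S.Finite) :
    (bd G S).Finite := by
  apply Set.Finite.subset (Set.Finite.biUnion hS
    (fun a _ => ((hlf a).image (fun b => s(a, b)))))
  rintro e ⟨he, a, b, rfl, ha, hb⟩
  exact Set.mem_biUnion ha ⟨b, he, rfl⟩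

lemma adj_stay {S : Set V} {u v : V} (h : (G.deleteEdges (bd G S)).Adj u v) :
    (u ∈ S ↔ v ∈ S) := by
  rw [deleteEdges_adj] at h
  obtain ⟨hadj, hnb⟩ := h
  constructor
  · intro hu
    by_contra hv
    exact hnb (mem_bd_iff.2 ⟨hadj, Or.inl ⟨hu, hv⟩⟩)
  · intro hv
    by_contra hu
    exact hnb (mem_bd_iff.2 ⟨hadj, Or.inr ⟨hv, hu⟩⟩)

lemma reach_stay {S : Set V} {u v : V} (h : (G.deleteEdges (bd G S)).Reachable u v) :
    (u ∈ S ↔ v ∈ S) := by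
  obtain ⟨W⟩ := h
  induction W with
  | nil => rfl
  | cons hadj _ ih => exact (adj_stay hadj).trans ih

lemma supp_eq {S : Set V} {x : V} (hx : x ∈ S)
    (hcon : ∀ a ∈ S, (G.deleteEdges (bd G S)).Reachable x a) :
    ((G.deleteEdges (bd G S)).connectedComponentMk x).supp = S := by
  ext v
  rw [ConnectedComponent.mem_supp_iff, ConnectedComponent.eq]
  constructor
  · intro h
    exact (reach_stay h.symm).1 hx
  · intro h
    exact (hcon v h).symm

lemma edge_unique (hG : G.IsTree) {S : Set V} {a1 b1 a2 b2 : V}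
    (h1 : s(a1, b1) ∈ bd G S) (hb1 : b1 ∈ S)
    (h2 : s(a2, b2) ∈ bd G S) (hb2 : b2 ∈ S)
    (hne : s(a1, b1) ≠ s(a2, b2))
    (hr : (G.deleteEdges (bd G S)).Reachable a1 a2)
    (hrS : (G.deleteEdges (bd G S)).Reachable b2 b1) : False := by
  have hbr : G.IsBridge s(a1, b1) :=
    (isAcyclic_iff_forall_edge_isBridge.mp hG.IsAcyclic) (bd_subset S h1)
  rw [isBridge_iff] at hbr
  apply hbr
  have hle : G.deleteEdges (bd G S) ≤ G.deleteEdges {s(a1, b1)} :=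
    deleteEdges_anti (Set.singleton_subset_iff.2 h1)
  have hadj2 : (G.deleteEdges {s(a1, b1)}).Adj a2 b2 := by
    rw [deleteEdges_adj]
    exact ⟨G.mem_edgeSet.mp h2.1, by simpa using hne.symm⟩
  have step1 : (G.deleteEdges {s(a1, b1)}).Reachable a1 a2 := Reachable.mono hle hr
  have step2 : (G.deleteEdges {s(a1, b1)}).Reachable b2 b1 := Reachable.mono hle hrS
  exact (step1.trans hadj2.reachable).trans step2

lemma branch_infinite (hG : G.IsTree) (hlf : ∀ v : V, (G.neighborSet v).Finite)
    (hdeg : ∀ v : V, 2 ≤ (G.neighborSet v).ncard) {S : Set V}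
    (hScon : ∀ a ∈ S, ∀ b ∈ S, (G.deleteEdges (bd G S)).Reachable a b)
    (K : (G.deleteEdges (bd G S)).ConnectedComponent) (hdisj : ∀ v ∈ K.supp, v ∉ S) :
    K.supp.Infinite := by
  classical
  obtain ⟨v₀, hv₀⟩ := K.exists_rep
  have hv₀K : v₀ ∈ K.supp := by rw [ConnectedComponent.mem_supp_iff]; exact hv₀
  -- membership transfer
  have hmemK : ∀ w ∈ K.supp, ∀ z, (G.deleteEdges (bd G S)).Reachable w z → z ∈ K.supp := by
    intro w hw z hz
    rw [ConnectedComponent.mem_supp_iff] at hw ⊢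
    rw [← hw, ConnectedComponent.eq]
    exact hz.symm
  -- Claim A
  have claimA : ∀ w, w ∉ S → ∀ u, G.Adj w u → u ∉ S → (G.deleteEdges (bd G S)).Adj w u := by
    intro w hw u hadj hu
    rw [deleteEdges_adj]
    refine ⟨hadj, fun hmem => ?_⟩
    rcases (mem_bd_iff.1 hmem).2 with ⟨h1, _⟩ | ⟨h1, _⟩
    · exact hw h1
    · exact hu h1
  -- Claim B
  have claimB : ∀ w1 ∈ K.supp, ∀ w2 ∈ K.supp, ∀ s1 ∈ S, ∀ s2 ∈ S,
      G.Adj w1 s1 → G.Adj w2 s2 → s(w1, s1) = s(w2, s2) := by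
    intro w1 hw1 w2 hw2 s1 hs1 s2 hs2 ha1 ha2
    by_contra hne
    have hm1 : s(w1, s1) ∈ bd G S := mem_bd_iff.2 ⟨ha1, Or.inr ⟨hs1, hdisj _ hw1⟩⟩
    have hm2 : s(w2, s2) ∈ bd G S := mem_bd_iff.2 ⟨ha2, Or.inr ⟨hs2, hdisj _ hw2⟩⟩
    have hr : (G.deleteEdges (bd G S)).Reachable w1 w2 := by
      rw [ConnectedComponent.mem_supp_iff] at hw1 hw2
      exact ConnectedComponent.exact (hw1.trans hw2.symm)
    exact edge_unique hG hm1 hs1 hm2 hs2 hne hr (hScon s2 hs2 s1 hs1)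
  -- find starting edge
  have hstart : ∃ a b, a ∈ K.supp ∧ (G.deleteEdges (bd G S)).Adj a b ∧
      (∀ w ∈ K.supp, w ≠ a → ∀ u, G.Adj w u → u ∉ S) := by
    by_cases hcase : ∃ w0 ∈ K.supp, ∃ s0 ∈ S, G.Adj w0 s0
    · obtain ⟨w0, hw0, s0, hs0, hadj0⟩ := hcase
      obtain ⟨b, hb, hbs0⟩ := exists_other hlf hdeg w0 s0
      have hbS : b ∉ S := by
        intro hbS
        have := claimB w0 hw0 w0 hw0 b hbS s0 hs0 hb hadj0
        rw [Sym2.eq_iff] at this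
        rcases this with ⟨_, h⟩ | ⟨h, _⟩
        · exact hbs0 h
        · exact (hdisj _ hw0) (h ▸ hs0)
      refine ⟨w0, b, hw0, claimA w0 (hdisj _ hw0) b hb hbS, ?_⟩
      intro w hw hwne u hadj huS
      have := claimB w hw w0 hw0 u huS s0 hs0 hadj hadj0
      rw [Sym2.eq_iff] at this
      rcases this with ⟨h, _⟩ | ⟨h, _⟩
      · exact hwne h
      · exact (hdisj _ hw) (h ▸ hs0)
    · push_neg at hcase
      obtain ⟨b, hb, _⟩ := exists_other hlf hdeg v₀ v₀
      have hbS : b ∉ S := fun hbS => (hcase v₀ hv₀K b hbS) hb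
      exact ⟨v₀, b, hv₀K, claimA v₀ (hdisj _ hv₀K) b hb hbS,
        fun w hw _ u hadj huS => (hcase w hw u huS) hadj⟩
  obtain ⟨a, b, haK, hab, hnoS⟩ := hstart
  have hray := raybuild hG (D := bd G S) hab ?hext
  case hext =>
    intro p w hpw hreach hdist
    have hpK : p ∈ K.supp := hmemK a haK p hreach
    have hwK : w ∈ K.supp := hmemK a haK w (hreach.trans hpw.reachable)
    have hwa : w ≠ a := by
      intro h
      rw [h] at hdist
      rw [SimpleGraph.dist_self] at hdist
      omega
    obtain ⟨u, hu, hup⟩ := exists_other hlf hdeg w p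
    exact ⟨u, claimA w (hdisj _ hwK) u hu (hnoS w hwK hwa u hu), hup⟩
  obtain ⟨f, hf0, hfadj, hfdist⟩ := hray
  have hfinj : Function.Injective f := by
    intro i j hij
    have : G.dist a (f i) = G.dist a (f j) := by rw [hij]
    rwa [hfdist, hfdist] at this
  apply Set.infinite_of_injective_forall_mem hfinj
  intro k
  induction k with
  | zero => rw [hf0]; exact haK
  | succ k ih => exact hmemK _ ih _ (hfadj k).reachable

lemma contour_of_good (hG : G.IsTree) (hlf : ∀ v : V, (G.neighborSet v).Finite)
    (hdeg : ∀ v : V, 2 ≤ (G.neighborSet v).ncard) {S : Set V} {x : V}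
    (hx : x ∈ S) (hfin : S.Finite)
    (hcon : ∀ a ∈ S, (G.deleteEdges (bd G S)).Reachable x a) :
    bd G S ∈ contours G x (bd G S).ncard := by
  classical
  have hScon : ∀ a ∈ S, ∀ b ∈ S, (G.deleteEdges (bd G S)).Reachable a b :=
    fun a ha b hb => (hcon a ha).symm.trans (hcon b hb)
  have hsupp : ((G.deleteEdges (bd G S)).connectedComponentMk x).supp = S := supp_eq hx hcon
  have hxfin : ((G.deleteEdges (bd G S)).connectedComponentMk x).supp.Finite := by
    rw [hsupp]; exact hfin
  refine ⟨⟨bd_finite hlf hfin, bd_subset S, ⟨_, hxfin, ?_⟩, ?_⟩, rfl, hxfin⟩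
  · -- uniqueness of finite component
    intro K hK
    by_cases hcase : ∃ v ∈ K.supp, v ∈ S
    · obtain ⟨v, hvK, hvS⟩ := hcase
      rw [ConnectedComponent.mem_supp_iff] at hvK
      rw [← hvK, ConnectedComponent.eq]
      exact (hcon v hvS).symm
    · push_neg at hcase
      exact absurd hK (branch_infinite hG hlf hdeg hScon K hcase)
  · -- minimality
    rintro e he K
    obtain ⟨hedge, a0, b0, rfl, ha0, hb0⟩ := he
    have hee : s(a0, b0) ∈ bd G S := ⟨hedge, a0, b0, rfl, ha0, hb0⟩
    have hle : G.deleteEdges (bd G S) ≤ G.deleteEdges (bd G S \ {s(a0, b0)}) :=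
      deleteEdges_anti Set.diff_subset
    obtain ⟨v, hv⟩ := K.exists_rep
    have hvK : v ∈ K.supp := by rw [ConnectedComponent.mem_supp_iff]; exact hv
    have hmemK : ∀ w ∈ K.supp, ∀ z, (G.deleteEdges (bd G S \ {s(a0, b0)})).Reachable w z →
        z ∈ K.supp := by
      intro w hw z hz
      rw [ConnectedComponent.mem_supp_iff] at hw ⊢
      rw [← hw, ConnectedComponent.eq]
      exact hz.symm
    have hw : ∃ w, w ∈ K.supp ∧ w ∉ S := by
      by_cases hvS : v ∈ S
      · refine ⟨b0, ?_, hb0⟩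
        have hr1 : (G.deleteEdges (bd G S \ {s(a0, b0)})).Reachable v a0 :=
          Reachable.mono hle (hScon v hvS a0 ha0)
        have hadj : (G.deleteEdges (bd G S \ {s(a0, b0)})).Adj a0 b0 := by
          rw [deleteEdges_adj]
          exact ⟨G.mem_edgeSet.mp hedge, by simp⟩
        exact hmemK v hvK b0 (hr1.trans hadj.reachable)
      · exact ⟨v, hvK, hvS⟩
    obtain ⟨w, hwK, hwS⟩ := hw
    set L := (G.deleteEdges (bd G S)).connectedComponentMk w with hLdef
    have hLdisj : ∀ z ∈ L.supp, z ∉ S := by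
      intro z hz hzS
      rw [ConnectedComponent.mem_supp_iff, ConnectedComponent.eq] at hz
      exact hwS ((reach_stay hz).1 hzS)
    have hLinf : L.supp.Infinite := branch_infinite hG hlf hdeg hScon L hLdisj
    intro hKfin
    have hsub2 : L.supp ⊆ K.supp := by
      intro z hz
      rw [ConnectedComponent.mem_supp_iff, ConnectedComponent.eq] at hz
      exact hmemK w hwK z (Reachable.mono hle hz.symm)
    exact (hLinf.mono hsub2) hKfin

lemma pair_eq {α : Type*} {s : Set α} (h2 : s.ncard = 2) {a b : α} (ha : a ∈ s) (hb : b ∈ s)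
    (hab : a ≠ b) : s = {a, b} := by
  obtain ⟨c, d, hcd, rfl⟩ := Set.ncard_eq_two.mp h2
  simp only [Set.mem_insert_iff, Set.mem_singleton_iff] at ha hb
  rcases ha with rfl | rfl <;> rcases hb with rfl | rfl
  · exact absurd rfl hab
  · rfl
  · exact Set.pair_comm a b ▸ rfl
  · exact absurd rfl hab

lemma dist_le_of_mem_support {a u v : V} {P : G.Walk a u} (h : v ∈ P.support) :
    G.dist a v ≤ P.length := by
  classical
  exact le_trans (dist_le (P.takeUntil v h)) (length_takeUntil_le P h)

lemma walk_to_deleted {S : Set V} {u v : V} (W : G.Walk u v)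
    (hsupp : ∀ z ∈ W.support, z ∈ S) :
    (G.deleteEdges (bd G S)).Reachable u v := by
  induction W with
  | nil => rfl
  | @cons u b v h W ih =>
    have hu : u ∈ S := hsupp u (by simp)
    have hb : b ∈ S := hsupp b (by simp)
    have hadj : (G.deleteEdges (bd G S)).Adj u b := by
      rw [deleteEdges_adj]
      refine ⟨h, fun hmem => ?_⟩
      rcases (mem_bd_iff.1 hmem).2 with ⟨_, h2⟩ | ⟨_, h2⟩
      · exact h2 hb
      · exact h2 hu
    exact hadj.reachable.trans (ih (fun z hz => hsupp z (by simp [hz])))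

lemma backward (hG : G.IsTree) (hlf : ∀ v : V, (G.neighborSet v).Finite)
    (hdeg : ∀ v : V, 2 ≤ (G.neighborSet v).ncard) (x : V)
    (hip : HasInfiniteIndependentPath G) :
    ∃ n : ℕ, 1 ≤ n ∧ (contours G x n).Infinite := by
  classical
  obtain ⟨f, hinj, hadj, hdeg2⟩ := hip
  have hfne : ∀ {i j : ℕ}, i ≠ j → f i ≠ f j := fun h => fun heq => h (hinj heq)
  -- neighbor structure of the ray
  have hnbr : ∀ m : ℕ, G.neighborSet (f (m + 1)) = {f m, f (m + 2)} := by
    intro m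
    exact pair_eq (hdeg2 (m + 1) (by omega)) ((hadj m).symm) (hadj (m + 1))
      (hfne (by omega))
  -- eventually the distance from x increases along the ray
  have hstep : ∀ i, G.dist x (f (i + 1)) = G.dist x (f i) + 1 →
      G.dist x (f (i + 2)) = G.dist x (f (i + 1)) + 1 :=
    fun i h => dist_step hG (hadj i) (hadj (i + 1)) (hfne (by omega)) h
  have hexists_inc : ∃ i, G.dist x (f (i + 1)) = G.dist x (f i) + 1 := by
    by_contra hcon
    push_neg at hcon
    have hdec : ∀ i, G.dist x (f i) = G.dist x (f (i + 1)) + 1 := by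
      intro i
      rcases adj_dist hG (hadj i) x with h | h
      · exact absurd h (hcon i)
      · exact h
    have hbound : ∀ i, G.dist x (f i) + i ≤ G.dist x (f 0) := by
      intro i
      induction i with
      | zero => omega
      | succ k ih => have := hdec k; omega
    have := hbound (G.dist x (f 0) + 1)
    omega
  obtain ⟨j0, hj0⟩ := hexists_inc
  set i0 := j0 + 1 with hi0def
  have hinc : ∀ i, i0 ≤ i → G.dist x (f (i + 1)) = G.dist x (f i) + 1 := by
    intro i hi
    induction i, hi using Nat.le_induction with
    | base => exact hstep j0 hj0
    | succ k hk ih => exact hstep k ih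
  have hmono : ∀ m, i0 ≤ m → ∀ j, m < j → G.dist x (f m) < G.dist x (f j) := by
    intro m hm j hj
    induction j, hj using Nat.le_induction with
    | base => rw [hinc m hm]; omega
    | succ k hk ih =>
      have := hinc k (by omega)
      omega
  -- the geodesic paths
  have hpaths : ∀ m : ℕ, ∃ p : G.Walk x (f m), p.IsPath ∧ p.length = G.dist x (f m) :=
    fun m => hG.isConnected.exists_path_of_dist x (f m)
  choose P hPpath hPlen using hpaths
  set S : ℕ → Set V := fun m => {v | v ∈ (P m).support} with hSdef
  have hSfin : ∀ m, (S m).Finite := fun m => (P m).support.finite_toSet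
  have hxS : ∀ m, x ∈ S m := fun m => (P m).start_mem_support
  have hfS : ∀ m, f m ∈ S m := fun m => (P m).end_mem_support
  have hdistS : ∀ m, ∀ v ∈ S m, G.dist x v ≤ G.dist x (f m) := by
    intro m v hv
    rw [← hPlen m]
    exact dist_le_of_mem_support hv
  have hnotin : ∀ m, i0 ≤ m → ∀ j, m < j → f j ∉ S m := by
    intro m hm j hj hmem
    exact absurd (hdistS m _ hmem) (not_le.2 (hmono m hm j hj))
  -- path recurrence
  have hPrec : ∀ m, i0 ≤ m → P (m + 1) = (P m).concat (hadj m) := by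
    intro m hm
    have hnot : f (m + 1) ∉ (P m).support := hnotin m hm (m + 1) (by omega)
    exact (walk_eq_walk hG.IsAcyclic (hPpath (m + 1))
      (concat_isPath (hPpath m) (hadj m) hnot)).symm ▸ rfl
  have hSrec : ∀ m, i0 ≤ m → S (m + 1) = S m ∪ {f (m + 1)} := by
    intro m hm
    have h1 : P (m + 1) = (P m).concat (hadj m) := hPrec m hm
    ext v
    simp only [hSdef, Set.mem_setOf_eq, h1, support_concat, List.concat_eq_append,
      List.mem_append, List.mem_singleton, Set.mem_union, Set.mem_singleton_iff]
  have hSsub : ∀ m, i0 ≤ m → S m ⊆ S (m + 1) := by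
    intro m hm
    rw [hSrec m hm]
    exact Set.subset_union_left
  have hfmem : ∀ m, i0 ≤ m → ∀ j, j ≤ m → i0 ≤ j → f j ∈ S m := by
    intro m hm
    induction m, hm using Nat.le_induction with
    | base => intro j h1 h2; have : j = i0 := by omega
              rw [this]; exact hfS i0
    | succ k hk ih =>
      intro j h1 h2
      rcases Nat.lt_or_ge j (k + 1) with h | h
      · exact hSsub k hk (ih j (by omega) h2)
      · have : j = k + 1 := by omega
        rw [this, hSrec k hk]
        exact Set.mem_union_right _ rfl
  -- boundary recurrence
  have hbdpre : ∀ m, i0 ≤ m → s(f m, f (m + 1)) ∈ bd G (S m) := by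
    intro m hm
    exact mem_bd_iff.2 ⟨hadj m, Or.inl ⟨hfS m, hnotin m hm (m + 1) (by omega)⟩⟩
  have hbdrec : ∀ m, i0 ≤ m → bd G (S (m + 1)) =
      (bd G (S m) \ {s(f m, f (m + 1))}) ∪ {s(f (m + 1), f (m + 2))} := by
    intro m hm
    ext e
    constructor
    · rintro ⟨hedge, a, b, rfl, ha, hb⟩
      rw [hSrec m hm] at ha hb
      rcases ha with haS | haf
      · refine Or.inl ⟨⟨hedge, a, b, rfl, haS, fun hbS => hb (Or.inl hbS)⟩, ?_⟩
        simp only [Set.mem_singleton_iff, Sym2.eq_iff]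
        rintro (⟨rfl, rfl⟩ | ⟨rfl, rfl⟩)
        · exact hb (Or.inr rfl)
        · exact hb (Or.inl (hfS m))
      · simp only [Set.mem_singleton_iff] at haf
        subst haf
        have hbnb : b ∈ G.neighborSet (f (m + 1)) := G.mem_edgeSet.mp hedge
        rw [hnbr m] at hbnb
        simp only [Set.mem_insert_iff, Set.mem_singleton_iff] at hbnb
        rcases hbnb with rfl | rfl
        · exact absurd (Or.inl (hfS m)) hb
        · exact Or.inr rfl
    · rintro (⟨⟨hedge, a, b, rfl, ha, hb⟩, hne⟩ | he)
      · refine ⟨hedge, a, b, rfl, hSsub m hm ha, ?_⟩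
        rw [hSrec m hm]
        rintro (hbS | hbf)
        · exact hb hbS
        · simp only [Set.mem_singleton_iff] at hbf
          subst hbf
          have hanb : a ∈ G.neighborSet (f (m + 1)) := by
            have := (G.mem_edgeSet.mp hedge).symm
            exact this
          rw [hnbr m] at hanb
          simp only [Set.mem_insert_iff, Set.mem_singleton_iff] at hanb
          rcases hanb with rfl | rfl
          · exact hne rfl
          · exact hnotin m hm (m + 2) (by omega) ha
      · simp only [Set.mem_singleton_iff] at he
        subst he
        refine ⟨G.mem_edgeSet.mpr (hadj (m + 1)), f (m + 1), f (m + 2), rfl, ?_, ?_⟩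
        · rw [hSrec m hm]; exact Set.mem_union_right _ rfl
        · exact hnotin (m + 1) (by omega) (m + 2) (by omega)
  have hbdfin : ∀ m, (bd G (S m)).Finite := fun m => bd_finite hlf (hSfin m)
  have hcard : ∀ m, i0 ≤ m → (bd G (S (m + 1))).ncard = (bd G (S m)).ncard := by
    intro m hm
    rw [hbdrec m hm]
    have hmem : s(f m, f (m + 1)) ∈ bd G (S m) := hbdpre m hm
    have hnotmem : s(f (m + 1), f (m + 2)) ∉ bd G (S m) \ {s(f m, f (m + 1))} := by
      rintro ⟨hmem2, -⟩
      rcases (mem_bd_iff.1 hmem2).2 with ⟨h1, -⟩ | ⟨h1, -⟩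
      · exact hnotin m hm (m + 1) (by omega) h1
      · exact hnotin m hm (m + 2) (by omega) h1
    rw [Set.union_singleton, Set.ncard_insert_of_notMem hnotmem
      ((hbdfin m).diff), Set.ncard_diff_singleton_of_mem hmem]
    have hpos : 0 < (bd G (S m)).ncard := (Set.ncard_pos (hbdfin m)).2 ⟨_, hmem⟩
    omega
  set n := (bd G (S i0)).ncard with hndef
  have hconst : ∀ m, i0 ≤ m → (bd G (S m)).ncard = n := by
    intro m hm
    induction m, hm using Nat.le_induction with
    | base => rfl
    | succ k hk ih => rw [hcard k hk, ih]
  have hn1 : 1 ≤ n :=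
    (Set.ncard_pos (hbdfin i0)).2 ⟨_, hbdpre i0 (le_refl i0)⟩
  -- membership in contours
  have hgood : ∀ m, i0 ≤ m → bd G (S m) ∈ contours G x n := by
    intro m hm
    have hcon : ∀ a ∈ S m, (G.deleteEdges (bd G (S m))).Reachable x a := by
      intro a ha
      apply walk_to_deleted ((P m).takeUntil a ha)
      intro z hz
      exact support_takeUntil_subset _ ha hz
    have := contour_of_good hG hlf hdeg (hxS m) (hSfin m) hcon
    rwa [hconst m hm] at this
  -- distinctness
  have hinj2 : Function.Injective (fun k : ℕ => bd G (S (k + i0))) := by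
    have key : ∀ k l : ℕ, k < l → bd G (S (k + i0)) ≠ bd G (S (l + i0)) := by
      intro k l hkl heq
      have h1 : s(f (k + i0), f (k + i0 + 1)) ∈ bd G (S (k + i0)) :=
        hbdpre (k + i0) (by omega)
      rw [heq] at h1
      obtain ⟨-, a, b, hab, ha, hb⟩ := h1
      rw [Sym2.eq_iff] at hab
      have h2 : f (k + i0) ∈ S (l + i0) := hfmem (l + i0) (by omega) (k + i0) (by omega) (by omega)
      have h3 : f (k + i0 + 1) ∈ S (l + i0) :=
        hfmem (l + i0) (by omega) (k + i0 + 1) (by omega) (by omega)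
      rcases hab with ⟨rfl, rfl⟩ | ⟨rfl, rfl⟩
      · exact hb h3
      · exact hb h2
    intro k l hkl
    rcases Nat.lt_trichotomy k l with h | h | h
    · exact absurd hkl (key k l h)
    · exact h
    · exact absurd hkl.symm (key l k h)
  refine ⟨n, hn1, Set.infinite_of_injective_forall_mem hinj2 ?_⟩
  intro k
  exact hgood (k + i0) (by omega)

lemma getVert_mem_support {u v : V} (p : G.Walk u v) (i : ℕ) : p.getVert i ∈ p.support := by
  induction p generalizing i with
  | nil => cases i <;> simp [Walk.getVert]
  | cons h q ih =>
    cases i with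
    | zero => simp [Walk.getVert]
    | succ i => simp only [getVert_cons_succ, support_cons, List.mem_cons]; exact Or.inr (ih i)

lemma getVert_inj {u v : V} {p : G.Walk u v} (hp : p.IsPath) :
    ∀ i j, i ≤ p.length → j ≤ p.length → p.getVert i = p.getVert j → i = j := by
  induction p with
  | nil => intro i j hi hj _; simp only [length_nil, Nat.le_zero] at hi hj; omega
  | @cons u b w h q ih =>
    intro i j hi hj heq
    have hnotin : u ∉ q.support := ((cons_isPath_iff h q).1 hp).2
    cases i with
    | zero =>
      cases j with
      | zero => rfl
      | succ j =>
        rw [getVert_zero, getVert_cons_succ] at heq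
        exact absurd (heq ▸ getVert_mem_support q j) hnotin
    | succ i =>
      cases j with
      | zero =>
        rw [getVert_zero, getVert_cons_succ] at heq
        exact absurd (heq ▸ getVert_mem_support q i) hnotin
      | succ j =>
        rw [getVert_cons_succ, getVert_cons_succ] at heq
        have := ih ((cons_isPath_iff h q).1 hp).1 i j (by simpa using hi) (by simpa using hj) heq
        omega

lemma dist_getVert_le (hconn : G.Connected) {x v : V} (P : G.Walk x v) (i : ℕ) :
    G.dist x (P.getVert i) ≤ i := by
  induction P generalizing i with
  | nil => cases i <;> simp [Walk.getVert, SimpleGraph.dist_self]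
  | @cons u b w h q ih =>
    cases i with
    | zero => simp [Walk.getVert, SimpleGraph.dist_self]
    | succ i =>
      rw [getVert_cons_succ]
      calc G.dist u (q.getVert i) ≤ G.dist u b + G.dist b (q.getVert i) := hconn.dist_triangle
      _ ≤ 1 + i := by
          have h1 : G.dist u b = 1 := (dist_eq_one_iff_adj).2 h
          have h2 := ih i
          omega
      _ = i + 1 := by omega

lemma ball_finite (hconn : G.Connected) (hlf : ∀ v : V, (G.neighborSet v).Finite) (x : V) :
    ∀ r : ℕ, {v | G.dist x v ≤ r}.Finite := by
  intro r
  induction r with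
  | zero =>
    apply Set.Finite.subset (Set.finite_singleton x)
    intro v hv
    simp only [Set.mem_setOf_eq, Nat.le_zero] at hv
    exact ((hconn.dist_eq_zero_iff).1 hv).symm
  | succ r ih =>
    apply Set.Finite.subset (ih.union (Set.Finite.biUnion ih (fun u _ => hlf u)))
    intro v hv
    simp only [Set.mem_setOf_eq] at hv
    rcases Nat.lt_or_ge (G.dist x v) (r + 1) with h | h
    · exact Or.inl (by simpa using Nat.lt_succ_iff.1 h)
    · have hd : G.dist x v = r + 1 := by omega
      obtain ⟨P, hPp, hPl⟩ := hconn.exists_path_of_dist x v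
      have hr : r < P.length := by omega
      have hadj : G.Adj (P.getVert r) (P.getVert (r + 1)) := adj_getVert_succ P hr
      have hv' : P.getVert (r + 1) = v := by
        have hl : P.length = r + 1 := by omega
        rw [← hl]
        exact P.getVert_length
      apply Or.inr
      refine Set.mem_biUnion (s := {v | G.dist x v ≤ r}) (dist_getVert_le hconn P r) ?_
      rw [hv'] at hadj
      exact hadj

/-- vertices reachable from `u` by a path whose interior vertices all have degree two -/
def Dset (G : SimpleGraph V) (u : V) : Set V :=
  {v | ∃ W : G.Walk u v, W.IsPath ∧
    ∀ z ∈ W.support, z ≠ u → z ≠ v → (G.neighborSet z).ncard = 2}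

lemma self_mem_Dset (u : V) : u ∈ Dset G u :=
  ⟨Walk.nil, IsPath.nil, by simp⟩

lemma run_finite (hG : G.IsTree) (hlf : ∀ v : V, (G.neighborSet v).Finite)
    (hdeg : ∀ v : V, 2 ≤ (G.neighborSet v).ncard)
    (hni : ¬ HasInfiniteIndependentPath G) (u : V) : (Dset G u).Finite := by
  classical
  by_contra hinf
  -- arbitrarily long witnesses
  have hlong : ∀ L : ℕ, ∃ v ∈ Dset G u, L + 1 ≤ G.dist u v := by
    intro L
    by_contra hcon
    push_neg at hcon
    exact hinf (Set.Finite.subset (ball_finite hG.isConnected hlf u L)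
      (fun v hv => by simpa using Nat.lt_succ_iff.1 (hcon v hv)))
  -- pigeonhole on the first step
  set Q : V → ℕ → Prop := fun y L => ∃ (v : V) (W : G.Walk u v), W.IsPath ∧
    (∀ z ∈ W.support, z ≠ u → z ≠ v → (G.neighborSet z).ncard = 2) ∧
    L + 1 ≤ W.length ∧ W.getVert 1 = y with hQdef
  have hQmono : ∀ y L L', L' ≤ L → Q y L → Q y L' := by
    rintro y L L' hle ⟨v, W, h1, h2, h3, h4⟩
    exact ⟨v, W, h1, h2, by omega, h4⟩
  have hQ : ∀ L, ∃ y ∈ G.neighborSet u, Q y L := by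
    intro L
    obtain ⟨v, ⟨W, hW1, hW2⟩, hWd⟩ := hlong L
    have hlen : L + 1 ≤ W.length := le_trans hWd (dist_le W)
    refine ⟨W.getVert 1, ?_, v, W, hW1, hW2, hlen, rfl⟩
    have := adj_getVert_succ W (by omega : 0 < W.length)
    rwa [getVert_zero] at this
  have hy : ∃ y, ∀ L, Q y L := by
    by_contra hcon
    push_neg at hcon
    choose ℓ hℓ using hcon
    obtain ⟨M, hM⟩ := ((hlf u).image ℓ).bddAbove
    obtain ⟨y, hynbr, hQy⟩ := hQ M
    exact hℓ y (hQmono y M (ℓ y) (hM (Set.mem_image_of_mem ℓ hynbr)) hQy)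
  obtain ⟨y, hy⟩ := hy
  -- the deterministic continuation
  let other : V → V → V := fun p w =>
    if h : ∃ z, G.Adj w z ∧ z ≠ p then h.choose else w
  let h : ℕ → V × V := fun k => Nat.rec (u, y) (fun _ pw => (pw.2, other pw.1 pw.2)) k
  have hh0 : h 0 = (u, y) := rfl
  have hhs : ∀ k, h (k + 1) = ((h k).2, other (h k).1 (h k).2) := fun k => rfl
  have hfollow : ∀ (v : V) (W : G.Walk u v), W.IsPath →
      (∀ z ∈ W.support, z ≠ u → z ≠ v → (G.neighborSet z).ncard = 2) →
      W.getVert 1 = y → ∀ k, k + 1 ≤ W.length →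
      (W.getVert k, W.getVert (k + 1)) = h k := by
    intro v W hWp hWd hWy k
    induction k with
    | zero => intro _; rw [hh0, getVert_zero, hWy]
    | succ k ih =>
      intro hk
      have ihk := ih (by omega)
      rw [hhs k, ← ihk]
      have hzdeg : (G.neighborSet (W.getVert (k + 1))).ncard = 2 := by
        apply hWd _ (getVert_mem_support W (k + 1))
        · intro hzu
          have := getVert_inj hWp (k + 1) 0 (by omega) (by omega)
            (by rw [hzu, getVert_zero])
          omega
        · intro hzv
          have := getVert_inj hWp (k + 1) W.length (by omega) (le_refl _)
            (by rw [hzv, getVert_length])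
          omega
      have hadj1 : G.Adj (W.getVert k) (W.getVert (k + 1)) := adj_getVert_succ W (by omega)
      have hadj2 : G.Adj (W.getVert (k + 1)) (W.getVert (k + 2)) := adj_getVert_succ W (by omega)
      have hne02 : W.getVert k ≠ W.getVert (k + 2) := by
        intro hcon
        have := getVert_inj hWp k (k + 2) (by omega) (by omega) hcon
        omega
      have hnbrz : G.neighborSet (W.getVert (k + 1)) = {W.getVert k, W.getVert (k + 2)} :=
        pair_eq hzdeg hadj1.symm hadj2 hne02
      have hex : ∃ z, G.Adj (W.getVert (k + 1)) z ∧ z ≠ W.getVert k :=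
        ⟨W.getVert (k + 2), hadj2, fun hcon => hne02 hcon.symm⟩
      have hchoose : other (W.getVert k) (W.getVert (k + 1)) = hex.choose := dif_pos hex
      obtain ⟨hc1, hc2⟩ := hex.choose_spec
      have : hex.choose ∈ G.neighborSet (W.getVert (k + 1)) := hc1
      rw [hnbrz] at this
      simp only [Set.mem_insert_iff, Set.mem_singleton_iff] at this
      rcases this with hcc | hcc
      · exact absurd hcc hc2
      · show (W.getVert (k + 1), W.getVert (k + 1 + 1)) =
          (W.getVert (k + 1), other (W.getVert k) (W.getVert (k + 1)))
        rw [hchoose, hcc]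
  -- extract facts about g
  have hwitness : ∀ k : ℕ, ∀ j, j + 1 ≤ k + 1 → (∃ (v : V) (W : G.Walk u v), W.IsPath ∧
      (∀ z ∈ W.support, z ≠ u → z ≠ v → (G.neighborSet z).ncard = 2) ∧
      k + 1 ≤ W.length ∧ W.getVert 1 = y ∧ (W.getVert j, W.getVert (j + 1)) = h j) := by
    intro k j hj
    obtain ⟨v, W, h1, h2, h3, h4⟩ := hy k
    exact ⟨v, W, h1, h2, h3, h4, hfollow v W h1 h2 h4 j (by omega)⟩
  set g : ℕ → V := fun k => (h k).1 with hgdef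
  have hgadj : ∀ k, G.Adj (g k) (g (k + 1)) := by
    intro k
    obtain ⟨v, W, h1, h2, h3, h4, h5⟩ := hwitness k k (le_refl _)
    have e1 : W.getVert k = g k := congrArg Prod.fst h5
    have e2 : W.getVert (k + 1) = g (k + 1) := congrArg Prod.snd h5
    rw [← e1, ← e2]
    exact adj_getVert_succ W (by omega)
  have hgnb : ∀ k, g (k + 2) ≠ g k := by
    intro k
    obtain ⟨v, W, h1, h2, h3, h4, h5⟩ := hwitness (k + 2) (k + 1) (by omega)
    have h5k := hfollow v W h1 h2 h4 k (by omega)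
    have e0 : W.getVert k = g k := congrArg Prod.fst h5k
    have e2 : W.getVert (k + 2) = g (k + 2) := congrArg Prod.snd h5
    rw [← e0, ← e2]
    intro hcon
    have := getVert_inj h1 (k + 2) k (by omega) (by omega) hcon
    omega
  have hgdeg : ∀ k, 1 ≤ k → (G.neighborSet (g k)).ncard = 2 := by
    intro k hk
    obtain ⟨v, W, h1, h2, h3, h4, h5⟩ := hwitness (k + 1) k (by omega)
    have e0 : W.getVert k = g k := congrArg Prod.fst h5
    rw [← e0]
    apply h2 _ (getVert_mem_support W k)
    · intro hzu
      have := getVert_inj h1 k 0 (by omega) (by omega) (by rw [hzu, getVert_zero])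
      omega
    · intro hzv
      have := getVert_inj h1 k W.length (by omega) (le_refl _) (by rw [hzv, getVert_length])
      omega
  have hgdist : ∀ k, G.dist u (g k) = k := by
    intro k
    induction k using Nat.strong_induction_on with
    | _ k ih =>
      match k with
      | 0 => rw [show g 0 = u from rfl]; exact SimpleGraph.dist_self
      | 1 =>
        have : g 0 = u := rfl
        rw [dist_eq_one_iff_adj]
        have := hgadj 0
        rwa [show g 0 = u from rfl] at this
      | (k + 2) =>
        have h1 := ih (k + 1) (by omega)
        have h0 := ih k (by omega)
        have hds := dist_step hG (hgadj k) (hgadj (k + 1)) (hgnb k) (a := u) (by omega)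
        rw [show k + 1 + 1 = k + 2 from rfl] at hds
        omega
  have hginj : Function.Injective g := by
    intro i j hij
    have : G.dist u (g i) = G.dist u (g j) := by rw [hij]
    rwa [hgdist, hgdist] at this
  exact hni ⟨g, hginj, hgadj, hgdeg⟩

/-- vertices reachable from `x` through at most `m` degree-2 runs -/
def REACH (G : SimpleGraph V) (x : V) : ℕ → Set V :=
  fun m => Nat.rec {x} (fun _ R => ⋃ v ∈ R, Dset G v) m

lemma REACH_succ {x : V} (m : ℕ) : REACH G x (m + 1) = ⋃ v ∈ REACH G x m, Dset G v := rfl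

lemma REACH_mono {x : V} {m m' : ℕ} (h : m ≤ m') : REACH G x m ⊆ REACH G x m' := by
  induction m', h using Nat.le_induction with
  | base => exact fun _ h => h
  | succ k hk ih =>
    refine subset_trans ih ?_
    rw [REACH_succ]
    exact fun v hv => Set.mem_biUnion hv (self_mem_Dset v)

lemma REACH_finite (hG : G.IsTree) (hlf : ∀ v : V, (G.neighborSet v).Finite)
    (hdeg : ∀ v : V, 2 ≤ (G.neighborSet v).ncard)
    (hni : ¬ HasInfiniteIndependentPath G) (x : V) (m : ℕ) : (REACH G x m).Finite := by
  induction m with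
  | zero => exact Set.finite_singleton x
  | succ k ih =>
    rw [REACH_succ]
    exact Set.Finite.biUnion ih (fun v _ => run_finite hG hlf hdeg hni v)

/-- interior branch vertices of a walk -/
def IntBr (G : SimpleGraph V) {a v : V} (W : G.Walk a v) : Set V :=
  {z | z ∈ W.support ∧ z ≠ a ∧ z ≠ v ∧ 3 ≤ (G.neighborSet z).ncard}

lemma IntBr_finite {a v : V} (W : G.Walk a v) : (IntBr G W).Finite :=
  Set.Finite.subset W.support.finite_toSet (fun t ht => ht.1)

lemma reach_claim (hdeg : ∀ v : V, 2 ≤ (G.neighborSet v).ncard) (x : V) :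
    ∀ (len : ℕ) {a v : V} (W : G.Walk a v), W.length ≤ len → W.IsPath →
    ∀ m, a ∈ REACH G x m → v ∈ REACH G x (m + (IntBr G W).ncard + 1) := by
  classical
  intro len
  induction len with
  | zero =>
    intro a v W hlen hWp m hm
    have : W.length = 0 := by omega
    have hav : a = v := Walk.eq_of_length_eq_zero this
    subst hav
    exact REACH_mono (by omega) hm
  | succ len ih =>
    intro a v W hlen hWp m hm
    by_cases hem : IntBr G W = ∅
    · -- no interior branch vertices: one run
      have hdset : v ∈ Dset G a := by
        refine ⟨W, hWp, fun z hz hza hzv => ?_⟩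
        have h3 : ¬ 3 ≤ (G.neighborSet z).ncard := by
          intro h3
          have hmem : z ∈ IntBr G W := ⟨hz, hza, hzv, h3⟩
          rw [hem] at hmem
          exact hmem
        have h2 := hdeg z
        omega
      have : v ∈ REACH G x (m + 1) := by
        rw [REACH_succ]
        exact Set.mem_biUnion hm hdset
      exact REACH_mono (by omega) this
    · obtain ⟨z, hzsup, hza, hzv, hzdeg⟩ := Set.nonempty_iff_ne_empty.2 hem
      set W1 := W.takeUntil z hzsup with hW1def
      set W2 := W.dropUntil z hzsup with hW2def
      have hspec : W1.append W2 = W := W.take_spec hzsup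
      have hW1p : W1.IsPath := hWp.takeUntil hzsup
      have hW2p : W2.IsPath := hWp.dropUntil hzsup
      have hltot : W1.length + W2.length = W.length := by
        rw [← length_append, hspec]
      have hl1 : W1.length ≠ 0 := fun h0 => hza (Walk.eq_of_length_eq_zero h0).symm
      have hl2 : W2.length ≠ 0 := fun h0 => hzv (Walk.eq_of_length_eq_zero h0)
      have hsup : W.support = W1.support ++ W2.support.tail := by
        rw [← hspec, support_append]
      have hnd : (W1.support ++ W2.support.tail).Nodup := hsup ▸ hWp.support_nodup
      have hdisjL : W1.support.Disjoint W2.support.tail :=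
        fun t ht1 ht2 => (List.nodup_append.1 hnd).2.2 t ht1 t ht2 rfl
      have hvtail : v ∈ W2.support.tail := by
        have hve : v ∈ W2.support := W2.end_mem_support
        rw [W2.support_eq_cons] at hve
        rcases List.mem_cons.1 hve with h | h
        · exact absurd h.symm hzv
        · exact h
      have hmemtail : ∀ t, t ∈ W2.support → t ≠ z → t ∈ W2.support.tail := by
        intro t ht htz
        rw [W2.support_eq_cons] at ht
        rcases List.mem_cons.1 ht with h | h
        · exact absurd h htz
        · exact h
      have hsub1 : IntBr G W1 ⊆ IntBr G W := by
        rintro t ⟨ht, hta, htz, htd⟩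
        refine ⟨support_takeUntil_subset W hzsup ht, hta, ?_, htd⟩
        intro htv
        exact hdisjL (htv ▸ ht) hvtail
      have hsub2 : IntBr G W2 ⊆ IntBr G W := by
        rintro t ⟨ht, htz, htv, htd⟩
        refine ⟨support_dropUntil_subset W hzsup ht, ?_, htv, htd⟩
        intro hta
        exact hdisjL (hta ▸ W1.start_mem_support) (hmemtail t ht htz)
      have hdisj12 : Disjoint (IntBr G W1) (IntBr G W2) := by
        rw [Set.disjoint_left]
        rintro t ⟨ht1, _, _, _⟩ ⟨ht2, ht2z, _, _⟩
        exact hdisjL ht1 (hmemtail t ht2 ht2z)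
      have hzn : z ∉ IntBr G W1 ∪ IntBr G W2 := by
        rintro (⟨_, _, hc, _⟩ | ⟨_, hc, _, _⟩) <;> exact hc rfl
      have hcount : (IntBr G W1).ncard + (IntBr G W2).ncard + 1 ≤ (IntBr G W).ncard := by
        have hu := Set.ncard_union_eq hdisj12 (IntBr_finite W1) (IntBr_finite W2)
        have hins : insert z (IntBr G W1 ∪ IntBr G W2) ⊆ IntBr G W :=
          Set.insert_subset ⟨hzsup, hza, hzv, hzdeg⟩ (Set.union_subset hsub1 hsub2)
        have he1 : (insert z (IntBr G W1 ∪ IntBr G W2)).ncard =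
            (IntBr G W1 ∪ IntBr G W2).ncard + 1 :=
          Set.ncard_insert_of_notMem hzn ((IntBr_finite W1).union (IntBr_finite W2))
        have he2 := Set.ncard_le_ncard hins (IntBr_finite W)
        omega
      have hz' := ih W1 (by omega) hW1p m hm
      have hv' := ih W2 (by omega) hW2p _ hz'
      exact REACH_mono (by omega) hv'

lemma branch_bound (hG : G.IsTree) (hlf : ∀ v : V, (G.neighborSet v).Finite)
    (hdeg : ∀ v : V, 2 ≤ (G.neighborSet v).ncard) :
    ∀ (n : ℕ) (S : Set V), S.Finite → S.Nonempty → S.ncard = n →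
    (∀ a ∈ S, ∀ b ∈ S, ∃ W : G.Walk a b, ∀ z ∈ W.support, z ∈ S) →
    {v | v ∈ S ∧ 3 ≤ (G.neighborSet v).ncard}.ncard + 2 ≤ (bd G S).ncard := by
  classical
  intro n
  induction n using Nat.strong_induction_on with
  | _ n ih =>
  intro S hfin hne hcard hcon
  have hpos : 0 < n := hcard ▸ (Set.ncard_pos hfin).2 hne
  rcases Nat.lt_or_ge n 2 with hn1 | hn2
  · -- singleton case
    have h1 : S.ncard = 1 := by omega
    obtain ⟨s₀, rfl⟩ := Set.ncard_eq_one.mp h1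
    have hinj : Set.InjOn (fun b => s(s₀, b)) (G.neighborSet s₀) := by
      intro b _ b' _ hbb
      simp only [Sym2.eq_iff] at hbb
      rcases hbb with ⟨_, h⟩ | ⟨h1', h2'⟩
      · exact h
      · rw [← h1', h2']
    have hbd : bd G {s₀} = (fun b => s(s₀, b)) '' (G.neighborSet s₀) := by
      ext e
      constructor
      · rintro ⟨he, a, b, rfl, ha, hb⟩
        rw [Set.mem_singleton_iff] at ha; subst ha
        exact ⟨b, G.mem_edgeSet.mp he, rfl⟩
      · rintro ⟨b, hb, rfl⟩
        refine ⟨G.mem_edgeSet.mpr hb, s₀, b, rfl, rfl, ?_⟩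
        intro hc
        rw [Set.mem_singleton_iff] at hc
        subst hc
        exact G.loopless.irrefl _ hb
    have hbdcard : (bd G {s₀}).ncard = (G.neighborSet s₀).ncard := by
      rw [hbd, Set.ncard_image_of_injOn hinj]
    have hbr : {v | v ∈ ({s₀} : Set V) ∧ 3 ≤ (G.neighborSet v).ncard}.ncard ≤ 1 := by
      have hsub : {v | v ∈ ({s₀} : Set V) ∧ 3 ≤ (G.neighborSet v).ncard} ⊆ {s₀} :=
        fun v hv => hv.1
      exact le_trans (Set.ncard_le_ncard hsub (Set.finite_singleton s₀))
        (le_of_eq (Set.ncard_singleton s₀))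
    rcases Nat.lt_or_ge (G.neighborSet s₀).ncard 3 with hd | hd
    · have hbr0 : {v | v ∈ ({s₀} : Set V) ∧ 3 ≤ (G.neighborSet v).ncard} = ∅ := by
        ext v
        simp only [Set.mem_setOf_eq, Set.mem_singleton_iff, Set.mem_empty_iff_false, iff_false,
          not_and]
        rintro rfl h3
        omega
      rw [hbr0, Set.ncard_empty, hbdcard]
      have := hdeg s₀
      omega
    · rw [hbdcard]
      omega
  · -- inductive step : remove a leaf
    obtain ⟨s₀, hs₀⟩ := hne
    obtain ⟨l, hlS, hlmax⟩ := Set.exists_max_image S (G.dist s₀) hfin ⟨s₀, hs₀⟩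
    have hex2 : ∃ t ∈ S, t ≠ s₀ := by
      obtain ⟨a, b, ha, hb, hab⟩ := (Set.one_lt_ncard_iff hfin).1 (by omega)
      by_cases has : a = s₀
      · exact ⟨b, hb, by rw [← has]; exact hab.symm⟩
      · exact ⟨a, ha, has⟩
    obtain ⟨t, htS, hts⟩ := hex2
    have hls₀ : l ≠ s₀ := by
      have h1 : 0 < G.dist s₀ t := hG.isConnected.pos_dist_of_ne (Ne.symm hts)
      have h2 := hlmax t htS
      intro hc
      rw [hc, SimpleGraph.dist_self] at h2
      omega
    have hSnb : ∀ p ∈ S, G.Adj l p → G.dist s₀ l = G.dist s₀ p + 1 := by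
      intro p hp hadj
      rcases adj_dist hG hadj s₀ with h | h
      · have := hlmax p hp
        omega
      · exact h
    have huniq : ∀ p ∈ S, ∀ q ∈ S, G.Adj l p → G.Adj l q → p = q := by
      intro p hp q hq hadjp hadjq
      exact unique_parent hG hadjp.symm hadjq.symm (hSnb p hp hadjp) (hSnb q hq hadjq)
    -- the unique neighbour in S
    obtain ⟨W₀, hW₀⟩ := hcon l hlS s₀ hs₀
    have hW₀len : 0 < W₀.length := by
      rcases Nat.eq_zero_or_pos W₀.length with h | h
      · exact absurd (Walk.eq_of_length_eq_zero h) hls₀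
      · exact h
    set p := W₀.getVert 1 with hpdef
    have hadjlp : G.Adj l p := by
      have := adj_getVert_succ W₀ hW₀len
      rwa [getVert_zero] at this
    have hpS : p ∈ S := hW₀ _ (getVert_mem_support W₀ 1)
    have hpl : p ≠ l := fun hc => G.loopless.irrefl l (hc ▸ hadjlp)
    set S' := S \ {l} with hS'def
    have hS'fin : S'.Finite := hfin.diff
    have hs₀S' : s₀ ∈ S' := ⟨hs₀, fun hc => hls₀ (Set.mem_singleton_iff.1 hc).symm⟩
    have hpS' : p ∈ S' := ⟨hpS, fun hc => hpl (Set.mem_singleton_iff.1 hc)⟩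
    have hS'card : S'.ncard = n - 1 := by
      rw [hS'def, Set.ncard_diff_singleton_of_mem hlS, hcard]
    -- connectivity of S'
    have hcon' : ∀ a ∈ S', ∀ b ∈ S', ∃ W : G.Walk a b, ∀ z ∈ W.support, z ∈ S' := by
      rintro a ⟨haS, hal⟩ b ⟨hbS, hbl⟩
      rw [Set.mem_singleton_iff] at hal hbl
      obtain ⟨W₁, hW₁⟩ := hcon a haS b hbS
      set W' := W₁.toPath.1 with hW'def
      have hW'p : W'.IsPath := W₁.toPath.2
      have hW'sub : ∀ z ∈ W'.support, z ∈ S := fun z hz => hW₁ z (W₁.support_toPath_subset hz)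
      have hlnot : l ∉ W'.support := by
        intro hl
        set T1 := W'.takeUntil l hl with hT1def
        set T2 := W'.dropUntil l hl with hT2def
        have hT1len : 0 < T1.length := by
          rcases Nat.eq_zero_or_pos T1.length with h | h
          · exact absurd (Walk.eq_of_length_eq_zero h) hal
          · exact h
        have hT2len : 0 < T2.length := by
          rcases Nat.eq_zero_or_pos T2.length with h | h
          · exact absurd (Walk.eq_of_length_eq_zero h) (fun hc => hbl hc.symm)
          · exact h
        have hspec : T1.append T2 = W' := W'.take_spec hl
        have hsup : W'.support = T1.support ++ T2.support.tail := by
          rw [← hspec, support_append]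
        have hnd : (T1.support ++ T2.support.tail).Nodup := hsup ▸ hW'p.support_nodup
        have hdisjL : T1.support.Disjoint T2.support.tail :=
            fun t ht1 ht2 => (List.nodup_append.1 hnd).2.2 t ht1 t ht2 rfl
        -- the neighbour of l inside T1
        set q := T1.reverse.getVert 1 with hqdef
        have hadjlq : G.Adj l q := by
          have := adj_getVert_succ T1.reverse (by rwa [length_reverse])
          rwa [getVert_zero] at this
        have hqT1 : q ∈ T1.support := by
          have := getVert_mem_support T1.reverse 1
          rwa [support_reverse, List.mem_reverse] at this
        have hqS : q ∈ S := hW'sub q (support_takeUntil_subset W' hl hqT1)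
        -- the neighbour of l inside T2
        set w := T2.getVert 1 with hwdef
        have hadjlw : G.Adj l w := by
          have := adj_getVert_succ T2 hT2len
          rwa [getVert_zero] at this
        have hwT2 : w ∈ T2.support := getVert_mem_support T2 1
        have hwS : w ∈ S := hW'sub w (support_dropUntil_subset W' hl hwT2)
        have hwl : w ≠ l := fun hc => G.loopless.irrefl l (hc ▸ hadjlw)
        have hwtail : w ∈ T2.support.tail := by
          have := hwT2
          rw [T2.support_eq_cons] at this
          rcases List.mem_cons.1 this with h | h
          · exact absurd h hwl
          · exact h
        have hqw : q ≠ w := fun hc => hdisjL (hc ▸ hqT1) hwtail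
        exact hqw (huniq q hqS w hwS hadjlq hadjlw)
      refine ⟨W', fun z hz => ⟨hW'sub z hz, fun hc => ?_⟩⟩
      rw [Set.mem_singleton_iff] at hc
      exact hlnot (hc ▸ hz)
    -- the boundary recurrence
    set El := (fun b => s(l, b)) '' (G.neighborSet l \ {p}) with hEldef
    have hnbS : ∀ c ∈ G.neighborSet l, c ∈ S → c = p := fun c hc hcS =>
      huniq c hcS p hpS hc hadjlp
    have hElsub : El ⊆ bd G S := by
      rintro e ⟨c, ⟨hc, hcp⟩, rfl⟩
      refine ⟨G.mem_edgeSet.mpr hc, l, c, rfl, hlS, fun hcS => ?_⟩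
      exact hcp (hnbS c hc hcS)
    have hinjEl : Set.InjOn (fun b => s(l, b)) (G.neighborSet l \ {p}) := by
      intro b _ b' _ hbb
      simp only [Sym2.eq_iff] at hbb
      rcases hbb with ⟨_, h⟩ | ⟨h1', h2'⟩
      · exact h
      · rw [← h1', h2']
    have hElcard : El.ncard = (G.neighborSet l).ncard - 1 := by
      rw [hEldef, Set.ncard_image_of_injOn hinjEl]
      exact Set.ncard_diff_singleton_of_mem hadjlp
    have hslp : s(l, p) ∉ bd G S := by
      intro hmem
      rcases (mem_bd_iff.1 hmem).2 with ⟨_, h2⟩ | ⟨_, h2⟩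
      · exact h2 hpS
      · exact h2 hlS
    have hbdrec : bd G S' = (bd G S \ El) ∪ {s(l, p)} := by
      ext e
      constructor
      · rintro ⟨he, a, b, rfl, ⟨haS, hal⟩, hb⟩
        rw [Set.mem_singleton_iff] at hal
        by_cases hbl : b = l
        · subst hbl
          have hap : a = p := hnbS a (G.mem_edgeSet.mp he).symm haS
          subst hap
          exact Or.inr (by rw [Set.mem_singleton_iff, Sym2.eq_swap])
        · have hbS : b ∉ S := by
            intro hbS
            exact hb ⟨hbS, fun hc => hbl (Set.mem_singleton_iff.1 hc)⟩
          refine Or.inl ⟨⟨he, a, b, rfl, haS, hbS⟩, ?_⟩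
          rintro ⟨c, ⟨hc, hcp⟩, hcc⟩
          rw [Sym2.eq_iff] at hcc
          rcases hcc with ⟨h1', _⟩ | ⟨h1', _⟩
          · exact hal h1'.symm
          · exact hbl h1'.symm
      · rintro (⟨⟨he, a, b, rfl, haS, hbS⟩, hne'⟩ | he)
        · have hal : a ≠ l := by
            rintro rfl
            refine hne' ⟨b, ⟨G.mem_edgeSet.mp he, ?_⟩, rfl⟩
            intro hc
            rw [Set.mem_singleton_iff] at hc
            exact hbS (hc ▸ hpS)
          exact ⟨he, a, b, rfl, ⟨haS, fun hc => hal (Set.mem_singleton_iff.1 hc)⟩,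
            fun hc => hbS hc.1⟩
        · rw [Set.mem_singleton_iff] at he
          subst he
          refine ⟨G.mem_edgeSet.mpr hadjlp, p, l, Sym2.eq_swap, hpS', ?_⟩
          rintro ⟨-, hc⟩
          exact hc rfl
    -- cardinalities
    have hbdfin : (bd G S).Finite := bd_finite hlf hfin
    have hcard1 : (bd G S \ El).ncard + El.ncard = (bd G S).ncard :=
      Set.ncard_diff_add_ncard_of_subset hElsub hbdfin
    have hcard2 : (bd G S').ncard = (bd G S \ El).ncard + 1 := by
      rw [hbdrec, Set.union_singleton,
        Set.ncard_insert_of_notMem (fun hc => hslp hc.1) (hbdfin.diff)]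
    -- branch sets
    set Br := fun T : Set V => {v | v ∈ T ∧ 3 ≤ (G.neighborSet v).ncard} with hBrdef
    have hBrrec : Br S' = Br S \ {l} := by
      ext v
      simp only [hBrdef, hS'def, Set.mem_setOf_eq, Set.mem_diff, Set.mem_singleton_iff]
      tauto
    have hBrfin : (Br S).Finite := hfin.subset (fun v hv => hv.1)
    have hIH : (Br S').ncard + 2 ≤ (bd G S').ncard :=
      ih (n - 1) (by omega) S' hS'fin ⟨s₀, hs₀S'⟩ hS'card hcon'
    have hdegl := hdeg l
    show (Br S).ncard + 2 ≤ (bd G S).ncard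
    rcases Nat.lt_or_ge (G.neighborSet l).ncard 3 with hd | hd
    · -- degree two: boundary stays the same size
      have hBreq : Br S' = Br S := by
        rw [hBrrec]
        apply Set.diff_singleton_eq_self
        rintro ⟨-, h3⟩
        omega
      rw [← hBreq]
      omega
    · have hlBr : l ∈ Br S := ⟨hlS, hd⟩
      have hBcard : (Br S').ncard = (Br S).ncard - 1 := by
        rw [hBrrec, Set.ncard_diff_singleton_of_mem hlBr]
      have hBpos : 0 < (Br S).ncard := (Set.ncard_pos hBrfin).2 ⟨l, hlBr⟩
      omega

lemma contour_eq_bd {C : Set (Sym2 V)} {x : V} (hC : IsContour G C)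
    (hfin : ((G.deleteEdges C).connectedComponentMk x).supp.Finite) :
    C = bd G ((G.deleteEdges C).connectedComponentMk x).supp := by
  classical
  obtain ⟨hCfin, hCsub, hEU, hmin⟩ := hC
  set S := ((G.deleteEdges C).connectedComponentMk x).supp with hSdef
  have hclosed : ∀ u v, u ∈ S → (G.deleteEdges C).Adj u v → v ∈ S := by
    intro u v hu hadj
    rw [hSdef, ConnectedComponent.mem_supp_iff] at hu ⊢
    rw [← hu, ConnectedComponent.eq]
    exact hadj.reachable.symm
  apply Set.Subset.antisymm
  · intro e heC
    by_contra hebd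
    have hstay : ∀ (u v : V), u ∈ S → (G.deleteEdges (C \ {e})).Walk u v → v ∈ S := by
      intro u v hu W
      induction W with
      | nil => exact hu
      | @cons u b w hadj q ih =>
        rw [deleteEdges_adj] at hadj
        obtain ⟨hadj1, hadj2⟩ := hadj
        by_cases hub : s(u, b) ∈ C
        · have heq : s(u, b) = e := by
            by_contra hne
            exact hadj2 ⟨hub, hne⟩
          have hbS : b ∈ S := by
            by_contra hbS
            have hmem : s(u, b) ∈ bd G S := ⟨hCsub hub, u, b, rfl, hu, hbS⟩
            rw [heq] at hmem
            exact hebd hmem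
          exact ih hbS
        · exact ih (hclosed u b hu (by rw [deleteEdges_adj]; exact ⟨hadj1, hub⟩))
    have hsub : ((G.deleteEdges (C \ {e})).connectedComponentMk x).supp ⊆ S := by
      intro v hv
      rw [ConnectedComponent.mem_supp_iff, ConnectedComponent.eq] at hv
      obtain ⟨W⟩ := hv.symm
      exact hstay x v rfl W
    exact hmin e heC ((G.deleteEdges (C \ {e})).connectedComponentMk x) (hfin.subset hsub)
  · rintro e ⟨he, a, b, rfl, ha, hb⟩
    by_contra heC
    have hadj : (G.deleteEdges C).Adj a b := by
      rw [deleteEdges_adj]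
      exact ⟨G.mem_edgeSet.mp he, heC⟩
    exact hb (hclosed a b ha hadj)

lemma forward (hG : G.IsTree) (hlf : ∀ v : V, (G.neighborSet v).Finite)
    (hdeg : ∀ v : V, 2 ≤ (G.neighborSet v).ncard) (x : V)
    (hni : ¬ HasInfiniteIndependentPath G) (n : ℕ) :
    (contours G x n).Finite := by
  classical
  have hF : (REACH G x (n + 1)).Finite := REACH_finite hG hlf hdeg hni x (n + 1)
  apply Set.Finite.subset ((hF.finite_subsets).image (fun S => bd G S))
  rintro C ⟨hC, hCcard, hxfin⟩
  set S := ((G.deleteEdges C).connectedComponentMk x).supp with hSdef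
  have hCeq : C = bd G S := contour_eq_bd hC hxfin
  have hxS : x ∈ S := by rw [hSdef, ConnectedComponent.mem_supp_iff]
  have hwalks : ∀ a ∈ S, ∃ W : G.Walk x a, ∀ z ∈ W.support, z ∈ S := by
    intro a ha
    rw [hSdef, ConnectedComponent.mem_supp_iff, ConnectedComponent.eq] at ha
    obtain ⟨W⟩ := ha.symm
    have hedges : ∀ e ∈ W.edges, e ∈ G.edgeSet := by
      intro e he
      have := W.edges_subset_edgeSet he
      rw [edgeSet_deleteEdges] at this
      exact this.1
    refine ⟨W.transfer G hedges, ?_⟩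
    intro z hz
    rw [support_transfer] at hz
    rw [hSdef, ConnectedComponent.mem_supp_iff, ConnectedComponent.eq]
    exact Reachable.symm ⟨W.takeUntil z hz⟩
  have hcon : ∀ a ∈ S, ∀ b ∈ S, ∃ W : G.Walk a b, ∀ z ∈ W.support, z ∈ S := by
    intro a ha b hb
    obtain ⟨W1, hW1⟩ := hwalks a ha
    obtain ⟨W2, hW2⟩ := hwalks b hb
    refine ⟨W1.reverse.append W2, ?_⟩
    intro z hz
    rw [mem_support_append_iff] at hz
    rcases hz with hz | hz
    · exact hW1 z (by rwa [support_reverse, List.mem_reverse] at hz)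
    · exact hW2 z hz
  -- the branch bound
  have hbb := branch_bound hG hlf hdeg S.ncard S hxfin ⟨x, hxS⟩ rfl hcon
  rw [← hCeq, hCcard] at hbb
  have hBrfin : {v | v ∈ S ∧ 3 ≤ (G.neighborSet v).ncard}.Finite :=
    hxfin.subset (fun v hv => hv.1)
  refine ⟨S, ?_, hCeq.symm⟩
  intro v hv
  obtain ⟨W, hWsub⟩ := hwalks v hv
  set Wp := W.toPath.1 with hWpdef
  have hWpsub : ∀ z ∈ Wp.support, z ∈ S := fun z hz => hWsub z (W.support_toPath_subset hz)
  have hIB : IntBr G Wp ⊆ {v | v ∈ S ∧ 3 ≤ (G.neighborSet v).ncard} := by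
    rintro t ⟨ht, _, _, htd⟩
    exact ⟨hWpsub t ht, htd⟩
  have hIBcard : (IntBr G Wp).ncard ≤ n - 2 := by
    have := Set.ncard_le_ncard hIB hBrfin
    omega
  have hx0 : x ∈ REACH G x 0 := rfl
  have := reach_claim hdeg x Wp.length Wp le_rfl W.toPath.2 0 hx0
  exact REACH_mono (by omega) this

end TreeContour

/-- For a locally finite rooted tree `T` with root `x` and without leaves,
there exists `n ≥ 1` with `F^n_T(x)` infinite if and only if `T` has an infinite
independent path. -/
theorem infinite_contours_iff_infiniteIndependentPath {V : Type*} (G : SimpleGraph V) (x : V)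
    (htree : G.IsTree) (hlocfin : ∀ v : V, (G.neighborSet v).Finite) (hinf : Infinite V)
    (hnoleaf : ∀ v : V, (G.neighborSet v).ncard ≠ 1) :
    (∃ n : ℕ, 1 ≤ n ∧ (contours G x n).Infinite) ↔ HasInfiniteIndependentPath G := by
  have hdeg : ∀ v : V, 2 ≤ (G.neighborSet v).ncard := by
    intro v
    have hne : (G.neighborSet v).Nonempty := by
      obtain ⟨w, hw⟩ := exists_ne v
      obtain ⟨W⟩ := htree.isConnected.preconnected v w
      have hlen : 0 < W.length := by
        rcases Nat.eq_zero_or_pos W.length with h | h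
        · exact absurd (Walk.eq_of_length_eq_zero h).symm hw
        · exact h
      have := W.adj_getVert_succ hlen
      rw [Walk.getVert_zero] at this
      exact ⟨W.getVert 1, this⟩
    have h1 : 0 < (G.neighborSet v).ncard := (Set.ncard_pos (hlocfin v)).2 hne
    have h2 := hnoleaf v
    omega
  constructor
  · rintro ⟨n, hn, hinfin⟩
    by_contra hni
    exact hinfin (TreeContour.forward htree hlocfin hdeg x hni n)
  · exact TreeContour.backward htree hlocfin hdeg x
end
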